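/- arXiv:1007.3108 — 7 statements merged into one kernel-verified Lean document; each statement's English description precedes it below -/
import Mathlib

section
/- Let M_n be the group of monomial maps acting on F_q^n × F_q^n diagonally, i.e., ξ·(u,v) = (ξ(u), ξ(v)). Then the orbit of a pair (u,v) ∈ F_q^n × F_q^n under this action is exactly the set of all pairs (u',v') ∈ F_q^n × F_q^n whose second-order weight equals that of (u,v): sw(u',v') = sw(u,v). -/
open scoped Classical
open Finset MvPolynomial

noncomputable section

variable {F : Type} [Field F] [Fintype F]

/-- The set of orbits of the action of `Fˣ` on `F × F` by scalar multiplication. -/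
abbrev Orb (F : Type) [Field F] [Fintype F] : Type :=
  Quotient (MulAction.orbitRel Fˣ (F × F))

/-- The orbit of the pair `(a, b)`. -/
def orbOf (a b : F) : Orb F := Quotient.mk (MulAction.orbitRel Fˣ (F × F)) (a, b)

/-- The second-order weight of a pair of vectors. -/
def sw {ι : Type} [Fintype ι] (u v : ι → F) (S : Orb F) : ℕ :=
  (Finset.univ.filter (fun i => orbOf (u i) (v i) = S)).card

/-- The second-order weight distribution. -/
def A2 {ι : Type} [Fintype ι] (U V : Finset (ι → F)) (w : Orb F → ℕ) : ℕ :=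
  ((U ×ˢ V).filter (fun p => sw p.1 p.2 = w)).card

/-- The second-order weight enumerator. -/
def W2 {ι : Type} [Fintype ι] (U V : Finset (ι → F)) : MvPolynomial (Orb F) ℚ :=
  ∑ u ∈ U, ∑ v ∈ V, ∏ S : Orb F, (X S) ^ sw u v S

/-- The monomial map `ξ_{c,σ}`. -/
def monoMap {ι : Type} (c : ι → Fˣ) (σ : Equiv.Perm ι) (v : ι → F) : ι → F :=
  fun i => (c i : F) * v (σ.symm i)

lemma orbOf_smul (m : Fˣ) (a b : F) : orbOf ((m : F) * a) ((m : F) * b) = orbOf a b := by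
  apply Quotient.sound
  exact ⟨m, by ext <;> simp [Units.smul_def]⟩

lemma card_filter_perm {n : ℕ} (σ : Equiv.Perm (Fin n)) (P : Fin n → Prop) :
    (univ.filter (fun i => P (σ i))).card = (univ.filter P).card := by
  apply Finset.card_bij' (fun i _ => σ i) (fun i _ => σ.symm i) <;> simp

lemma exists_perm_of_card_fibers_eq {α β : Type*} [Fintype α] (f g : α → β)
    (h : ∀ b, (univ.filter (fun a => g a = b)).card = (univ.filter (fun a => f a = b)).card) :
    ∃ σ : Equiv.Perm α, ∀ a, f (σ a) = g a := by
  have e : ∀ b, {a // g a = b} ≃ {a // f a = b} := fun b =>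
    Fintype.equivOfCardEq (by simpa [Fintype.card_subtype] using h b)
  refine ⟨(Equiv.sigmaFiberEquiv g).symm.trans
    ((Equiv.sigmaCongrRight e).trans (Equiv.sigmaFiberEquiv f)), ?_⟩
  intro a
  exact ((e (g a)) ⟨a, rfl⟩).2

/-- The orbit of a pair `(u, v)` under the diagonal action of the monomial group equals
the set of pairs with the same second-order weight. -/
theorem stmt_0 {F : Type} [Field F] [Fintype F] {n : ℕ} (u v u' v' : Fin n → F) :
    (∃ (c : Fin n → Fˣ) (σ : Equiv.Perm (Fin n)),
        monoMap c σ u = u' ∧ monoMap c σ v = v') ↔ sw u' v' = sw u v := by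
  constructor
  · rintro ⟨c, σ, rfl, rfl⟩
    funext S
    unfold sw monoMap
    have h1 : ∀ i, orbOf ((c i : F) * u (σ.symm i)) ((c i : F) * v (σ.symm i))
        = orbOf (u (σ.symm i)) (v (σ.symm i)) := fun i => orbOf_smul _ _ _
    simp only [h1]
    convert card_filter_perm σ.symm (fun i => orbOf (u i) (v i) = S) using 2 <;>
      congr
  · intro h
    obtain ⟨σ, hσ⟩ := exists_perm_of_card_fibers_eq (fun i => orbOf (u i) (v i))
      (fun i => orbOf (u' i) (v' i)) (fun S => by
        have := congrFun h S
        unfold sw at this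
        convert this using 2 <;> congr)
    have key : ∀ i, ∃ m : Fˣ, (m : F) * u (σ i) = u' i ∧ (m : F) * v (σ i) = v' i := by
      intro i
      have := hσ i
      rw [orbOf, orbOf, Quotient.eq] at this
      obtain ⟨m, hm⟩ := this
      have h1 : (m : F) * u' i = u (σ i) := by
        have := congrArg Prod.fst hm; simpa [Units.smul_def] using this
      have h2 : (m : F) * v' i = v (σ i) := by
        have := congrArg Prod.snd hm; simpa [Units.smul_def] using this
      exact ⟨m⁻¹, by rw [← h1, ← mul_assoc]; simp, by rw [← h2, ← mul_assoc]; simp⟩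
    choose m hm1 hm2 using key
    exact ⟨m, σ.symm, funext fun i => by simpa [monoMap] using hm1 i,
      funext fun i => by simpa [monoMap] using hm2 i⟩
end
end

section
/- Let U, V ⊆ F_q^n and let u, v ∈ F_q^n. If Ξ is a uniformly distributed random monomial map on F_q^n (i.e., uniform over the set M_n of all monomial maps), then P{u ∈ Ξ(U) and v ∈ Ξ(V)} = A_{sw(u,v)}(U, V) / A_{sw(u,v)}(F_q^n, F_q^n). Equivalently, the number of monomial maps ξ ∈ M_n with u ∈ ξ(U) and v ∈ ξ(V), divided by |M_n| = n!·(q-1)^n, equals A_{sw(u,v)}(U,V) / A_{sw(u,v)}(F_q^n, F_q^n). -/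
open scoped Classical
open Finset MvPolynomial

noncomputable section

variable {F : Type} [Field F] [Fintype F]

/-! ### Auxiliary development -/

section Aux

set_option linter.unusedSectionVars false

variable {ι : Type} [Fintype ι] [DecidableEq ι]

/-- Abbreviation for the data of a monomial map. -/
abbrev MM (F ι : Type) [Field F] : Type := (ι → Fˣ) × Equiv.Perm ι

/-- Application of a monomial map datum. -/
def mApply (m : MM F ι) (x : ι → F) : ι → F := monoMap m.1 m.2 x

/-- Inverse of a monomial map datum. -/
def minv (m : MM F ι) : MM F ι := (fun j => (m.1 (m.2 j))⁻¹, m.2⁻¹)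

/-- Composition of monomial map data. -/
def mcomp (m m' : MM F ι) : MM F ι := (fun i => m.1 i * m'.1 (m.2⁻¹ i), m.2 * m'.2)

lemma mApply_mcomp (m m' : MM F ι) (x : ι → F) :
    mApply (mcomp m m') x = mApply m (mApply m' x) := by
  funext i
  simp [mApply, mcomp, monoMap, Equiv.Perm.mul_def, Equiv.Perm.inv_def,
    Equiv.symm_trans_apply, mul_assoc]

lemma mApply_minv_mApply (m : MM F ι) (x : ι → F) :
    mApply (minv m) (mApply m x) = x := by
  funext j
  simp [mApply, minv, monoMap, Equiv.Perm.inv_def, mul_assoc]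

lemma mApply_mApply_minv (m : MM F ι) (x : ι → F) :
    mApply m (mApply (minv m) x) = x := by
  funext i
  simp [mApply, minv, monoMap, Equiv.Perm.inv_def, mul_assoc]

lemma mcomp_mcomp_minv (m m₀ : MM F ι) : mcomp (mcomp m m₀) (minv m₀) = m := by
  refine Prod.ext ?_ (by simp [mcomp, minv])
  funext i
  simp [mcomp, minv, Equiv.Perm.mul_def, Equiv.Perm.inv_def, Equiv.symm_trans_apply,
    mul_assoc]

lemma mcomp_minv_mcomp (m m₀ : MM F ι) : mcomp (mcomp m (minv m₀)) m₀ = m := by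
  refine Prod.ext ?_ (by simp [mcomp, minv])
  funext i
  simp [mcomp, minv, Equiv.Perm.mul_def, Equiv.Perm.inv_def, Equiv.symm_trans_apply,
    mul_assoc]

lemma orbOf_unit_mul (d : Fˣ) (a b : F) : orbOf ((d : F) * a) ((d : F) * b) = orbOf a b := by
  refine Quotient.sound ?_
  exact ⟨d, by simp [Units.smul_def]⟩

lemma sw_mApply (m : MM F ι) (u v : ι → F) :
    sw (mApply m u) (mApply m v) = sw u v := by
  funext S
  simp only [sw, mApply, monoMap, orbOf_unit_mul]
  exact Finset.card_equiv m.2.symm (by simp)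

/-- If two pairs of vectors have the same second-order weight, some monomial map
sends one to the other. -/
lemma exists_mApply_eq (p q : (ι → F) × (ι → F)) (h : sw p.1 p.2 = sw q.1 q.2) :
    ∃ m : MM F ι, mApply m p.1 = q.1 ∧ mApply m p.2 = q.2 := by
  classical
  set g : ι → Orb F := fun i => orbOf (p.1 i) (p.2 i) with hg
  set k : ι → Orb F := fun i => orbOf (q.1 i) (q.2 i) with hk
  have hcard : ∀ S : Orb F, Fintype.card {i // g i = S} = Fintype.card {i // k i = S} := by
    intro S
    have := congrFun h S
    simpa [sw, Fintype.card_subtype, g, k] using this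
  let e : ∀ S : Orb F, {i // g i = S} ≃ {i // k i = S} := fun S =>
    Fintype.equivOfCardEq (hcard S)
  let σ : ι ≃ ι :=
    (Equiv.sigmaFiberEquiv g).symm.trans ((Equiv.sigmaCongrRight e).trans
      (Equiv.sigmaFiberEquiv k))
  have hσ : ∀ i, k (σ i) = g i := by
    intro i
    have : σ i = ((e (g i)) ⟨i, rfl⟩ : {j // k j = g i}) := rfl
    rw [this]
    exact ((e (g i)) ⟨i, rfl⟩).2
  have hd : ∀ i, ∃ d : Fˣ, d • (p.1 i, p.2 i) = (q.1 (σ i), q.2 (σ i)) := by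
    intro i
    have h2 : (q.1 (σ i), q.2 (σ i)) ∈ MulAction.orbit Fˣ (p.1 i, p.2 i) :=
      Quotient.exact (hσ i)
    exact MulAction.mem_orbit_iff.mp h2
  choose d hdp using hd
  refine ⟨(fun j => d (σ.symm j), σ), ?_, ?_⟩ <;> funext j
  · have := congrArg Prod.fst (hdp (σ.symm j))
    simp only [Prod.smul_def, Units.smul_def, smul_eq_mul, Equiv.apply_symm_apply] at this
    simpa [mApply, monoMap] using this
  · have := congrArg Prod.snd (hdp (σ.symm j))
    simp only [Prod.smul_def, Units.smul_def, smul_eq_mul, Equiv.apply_symm_apply] at this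
    simpa [mApply, monoMap] using this

lemma mem_image_monoMap (m : MM F ι) (U : Finset (ι → F)) (u : ι → F) :
    u ∈ U.image (monoMap m.1 m.2) ↔ mApply (minv m) u ∈ U := by
  simp only [Finset.mem_image]
  constructor
  · rintro ⟨x, hx, rfl⟩
    have hx' : mApply (minv m) (mApply m x) = x := mApply_minv_mApply m x
    rwa [show monoMap m.1 m.2 x = mApply m x from rfl, hx']
  · intro h
    exact ⟨_, h, mApply_mApply_minv m u⟩

lemma fiber_card_eq (u v : ι → F) (p : (ι → F) × (ι → F)) (hp : sw p.1 p.2 = sw u v) :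
    (univ.filter (fun m : MM F ι =>
        (mApply (minv m) u, mApply (minv m) v) = p)).card
      = (univ.filter (fun m : MM F ι =>
        (mApply (minv m) u, mApply (minv m) v) = (u, v))).card := by
  obtain ⟨m₀, h₀1', h₀2'⟩ := exists_mApply_eq p (u, v) hp
  have h₀1 : mApply m₀ p.1 = u := h₀1'
  have h₀2 : mApply m₀ p.2 = v := h₀2'
  have key : ∀ (r : (ι → F) × (ι → F)) (m : MM F ι),
      ((mApply (minv m) u, mApply (minv m) v) = r) ↔
        (mApply m r.1 = u ∧ mApply m r.2 = v) := by
    intro r m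
    constructor
    · rintro rfl
      exact ⟨mApply_mApply_minv m u, mApply_mApply_minv m v⟩
    · rintro ⟨h1, h2⟩
      rw [← h1, ← h2, mApply_minv_mApply, mApply_minv_mApply]
  simp only [key]
  have hinv1 : mApply (minv m₀) u = p.1 := by
    rw [← h₀1, mApply_minv_mApply]
  have hinv2 : mApply (minv m₀) v = p.2 := by
    rw [← h₀2, mApply_minv_mApply]
  refine Finset.card_bij' (fun m _ => mcomp m (minv m₀)) (fun m _ => mcomp m m₀)
    ?_ ?_ ?_ ?_
  · intro m hm
    simp only [mem_filter, mem_univ, true_and] at hm ⊢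
    rw [mApply_mcomp, mApply_mcomp, hinv1, hinv2]
    exact hm
  · intro m hm
    simp only [mem_filter, mem_univ, true_and] at hm ⊢
    rw [mApply_mcomp, mApply_mcomp, h₀1, h₀2]
    exact hm
  · intro m _
    exact mcomp_minv_mcomp m m₀
  · intro m _
    exact mcomp_mcomp_minv m m₀

lemma count_formula (u v : ι → F) (T : Finset ((ι → F) × (ι → F))) :
    (univ.filter (fun m : MM F ι =>
        (mApply (minv m) u, mApply (minv m) v) ∈ T)).card
      = (T.filter (fun p => sw p.1 p.2 = sw u v)).card
          * (univ.filter (fun m : MM F ι =>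
              (mApply (minv m) u, mApply (minv m) v) = (u, v))).card := by
  classical
  set f : MM F ι → (ι → F) × (ι → F) :=
    fun m => (mApply (minv m) u, mApply (minv m) v) with hf
  set N := (univ.filter (fun m : MM F ι => f m = (u, v))).card with hNdef
  set s := univ.filter (fun m : MM F ι => f m ∈ T) with hsdef
  have hs : ∀ m ∈ s, f m ∈ T := fun m hm => (mem_filter.mp hm).2
  rw [show s.card = ∑ p ∈ T, (s.filter (fun m => f m = p)).card from
    Finset.card_eq_sum_card_fiberwise hs]
  have hsw : ∀ m : MM F ι, sw (f m).1 (f m).2 = sw u v := fun m => sw_mApply (minv m) u v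
  have step : ∀ p ∈ T, (s.filter (fun m => f m = p)).card
      = if sw p.1 p.2 = sw u v then N else 0 := by
    intro p hp
    have hrw : s.filter (fun m => f m = p) = univ.filter (fun m => f m = p) := by
      ext m
      simp only [hsdef, Finset.filter_filter, mem_filter, mem_univ, true_and]
      constructor
      · rintro ⟨_, h⟩; exact h
      · intro h; exact ⟨h ▸ hp, h⟩
    rw [hrw]
    by_cases hcase : sw p.1 p.2 = sw u v
    · rw [if_pos hcase, hNdef]
      exact fiber_card_eq u v p hcase
    · rw [if_neg hcase, Finset.card_eq_zero, Finset.filter_eq_empty_iff]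
      intro m _ hmp
      exact hcase (hmp ▸ hsw m)
  calc ∑ p ∈ T, (s.filter (fun m => f m = p)).card
      = ∑ p ∈ T, if sw p.1 p.2 = sw u v then N else 0 := Finset.sum_congr rfl step
    _ = ∑ p ∈ T.filter (fun p => sw p.1 p.2 = sw u v), N := (Finset.sum_filter _ _).symm
    _ = (T.filter (fun p => sw p.1 p.2 = sw u v)).card * N := by
        rw [Finset.sum_const, smul_eq_mul]

end Aux

set_option maxHeartbeats 1000000 in
/-- For a uniformly distributed random monomial map `Ξ`, the probability that
`u ∈ Ξ(U)` and `v ∈ Ξ(V)` equals `A_{sw(u,v)}(U,V) / A_{sw(u,v)}(F_q^n, F_q^n)`. -/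
theorem stmt_5 {F : Type} [Field F] [Fintype F] {n : ℕ}
    (U V : Finset (Fin n → F)) (u v : Fin n → F) :
    ((Finset.univ.filter
        (fun p : (Fin n → Fˣ) × Equiv.Perm (Fin n) =>
          u ∈ U.image (monoMap p.1 p.2) ∧ v ∈ V.image (monoMap p.1 p.2))).card : ℚ)
        / ((n.factorial * (Fintype.card F - 1) ^ n : ℕ) : ℚ)
      = (A2 U V (sw u v) : ℚ)
        / (A2 (Finset.univ : Finset (Fin n → F)) Finset.univ (sw u v) : ℚ) := by
  classical
  have hfilter : (Finset.univ.filter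
      (fun p : (Fin n → Fˣ) × Equiv.Perm (Fin n) =>
        u ∈ U.image (monoMap p.1 p.2) ∧ v ∈ V.image (monoMap p.1 p.2)))
      = (Finset.univ.filter (fun m : MM F (Fin n) =>
          (mApply (minv m) u, mApply (minv m) v) ∈ U ×ˢ V)) := by
    apply Finset.filter_congr
    intro m _
    rw [Finset.mem_product]
    exact and_congr (mem_image_monoMap m U u) (mem_image_monoMap m V v)
  set N := (univ.filter (fun m : MM F (Fin n) =>
      (mApply (minv m) u, mApply (minv m) v) = (u, v))).card with hN
  have h1 : (Finset.univ.filter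
      (fun p : (Fin n → Fˣ) × Equiv.Perm (Fin n) =>
        u ∈ U.image (monoMap p.1 p.2) ∧ v ∈ V.image (monoMap p.1 p.2))).card
      = A2 U V (sw u v) * N :=
    (congrArg Finset.card hfilter).trans (count_formula u v (U ×ˢ V))
  have h2 : n.factorial * (Fintype.card F - 1) ^ n
      = A2 (Finset.univ : Finset (Fin n → F)) Finset.univ (sw u v) * N := by
    have e1 : (univ.filter (fun m : MM F (Fin n) =>
        (mApply (minv m) u, mApply (minv m) v) ∈ (univ : Finset (Fin n → F)) ×ˢ univ))
        = univ :=
      Finset.filter_true_of_mem (fun m _ => by simp [Finset.mem_product])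
    have hcard : (univ : Finset (MM F (Fin n))).card
        = n.factorial * (Fintype.card F - 1) ^ n := by
      rw [Finset.card_univ, Fintype.card_prod, Fintype.card_perm, Fintype.card_fin,
        Fintype.card_fun, Fintype.card_units, Fintype.card_fin]
      ring
    calc n.factorial * (Fintype.card F - 1) ^ n
        = (univ : Finset (MM F (Fin n))).card := hcard.symm
      _ = (univ.filter (fun m : MM F (Fin n) =>
            (mApply (minv m) u, mApply (minv m) v)
              ∈ (univ : Finset (Fin n → F)) ×ˢ univ)).card := by rw [e1]
      _ = A2 (Finset.univ : Finset (Fin n → F)) Finset.univ (sw u v) * N :=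
            count_formula u v _
  have hpos : 0 < n.factorial * (Fintype.card F - 1) ^ n := by
    apply Nat.mul_pos (Nat.factorial_pos n)
    apply pow_pos
    have hcF : 1 < Fintype.card F := Fintype.one_lt_card
    omega
  have hBN : 0 < A2 (Finset.univ : Finset (Fin n → F)) Finset.univ (sw u v) * N :=
    h2 ▸ hpos
  have hB0 : A2 (Finset.univ : Finset (Fin n → F)) Finset.univ (sw u v) ≠ 0 := by
    intro h
    rw [h, zero_mul] at hBN
    exact absurd hBN (lt_irrefl 0)
  have hN0 : N ≠ 0 := by
    intro h
    rw [h, mul_zero] at hBN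
    exact absurd hBN (lt_irrefl 0)
  rw [h1, h2]
  push_cast
  rw [mul_div_mul_right _ _ (show (N : ℚ) ≠ 0 from Nat.cast_ne_zero.mpr hN0)]
end
end

section
/- (MacWilliams identities for second-order weight distributions.) Let U and V be linear subspaces of F_q^n, and let U^⊥, V^⊥ be their orthogonal complements with respect to the standard bilinear form u·v = Σ_i u_i v_i. Define the (q+2)×(q+2) matrix K = (K_{S,T})_{S,T∈S} by K_{S,T} = |S| if T ⊆ S^⊥ (where S^⊥ = {w ∈ F_q^2 : s·w = 0 for all s ∈ S}) and K_{S,T} = −1 otherwise. Then W_{U^⊥, V^⊥}(x) = (1/(|U|·|V|)) · W_{U,V}(xK), where xK denotes the vector of linear forms ((xK)_T)_{T∈S} with (xK)_T = Σ_{S∈S} x_S K_{S,T}. -/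
open scoped Classical
open Finset MvPolynomial

noncomputable section

variable {F : Type} [Field F] [Fintype F]

/-- The orbit of `S`, as a set of pairs. -/
def orbSet (S : Orb F) : Set (F × F) := {w | orbOf w.1 w.2 = S}

/-- The MacWilliams-type matrix `K`. -/
def Kmat (S T : Orb F) : ℚ :=
  if ∀ w ∈ orbSet T, ∀ s ∈ orbSet S, s.1 * w.1 + s.2 * w.2 = 0
  then ((orbSet S).ncard : ℚ) else -1

/-- The orthogonal set of a code. -/
def orthW {n : ℕ} (U : Finset (Fin n → F)) : Finset (Fin n → F) :=
  Finset.univ.filter (fun v' => ∀ v ∈ U, (∑ i, v i * v' i) = 0)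

-- ψ and basic facts
def psi (F : Type) [Field F] [Fintype F] : AddChar F ℂ := AddChar.FiniteField.primitiveChar_to_Complex F

lemma psi_ne_one : psi F ≠ 1 := by
  have h := AddChar.FiniteField.primitiveChar_to_Complex_isPrimitive F
  have := h (one_ne_zero (α := F))
  rwa [AddChar.mulShift_one] at this

lemma psi_sum_zero : ∑ x : F, psi F x = 0 := AddChar.sum_eq_zero_of_ne_one psi_ne_one

lemma orbOf_eq_orbOf_iff {a b c d : F} :
    orbOf a b = orbOf c d ↔ ∃ g : Fˣ, g • ((c, d) : F × F) = (a, b) := by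
  rw [orbOf, orbOf, Quotient.eq, MulAction.orbitRel_apply, MulAction.mem_orbit_iff]

lemma psi_map_sum {ι : Type} (s : Finset ι) (f : ι → F) :
    psi F (∑ i ∈ s, f i) = ∏ i ∈ s, psi F (f i) := by
  classical
  induction s using Finset.cons_induction with
  | empty => simp
  | cons a s ha ih =>
    rw [Finset.sum_cons, Finset.prod_cons, AddChar.map_add_eq_mul, ih]

lemma sum_units (f : F → ℂ) :
    ∑ u : Fˣ, f u = ∑ x ∈ Finset.univ.filter (fun x : F => x ≠ 0), f x := by
  have himg : Finset.univ.filter (fun x : F => x ≠ 0)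
      = Finset.univ.image (fun u : Fˣ => (u : F)) := by
    ext x
    simp only [Finset.mem_image, Finset.mem_univ, true_and, Finset.mem_filter]
    constructor
    · rintro hx; exact ⟨Units.mk0 x hx, rfl⟩
    · rintro ⟨u, rfl⟩; exact u.ne_zero
  rw [himg, Finset.sum_image (by intro a _ b _ h; exact Units.ext h)]

lemma sum_psi_units : ∑ u : Fˣ, psi F (u : F) = -1 := by
  rw [sum_units]
  have h0 := psi_sum_zero (F := F)
  have h2 : (∑ x ∈ Finset.univ.filter (fun x : F => ¬ x ≠ 0), psi F x)
      + ∑ x ∈ Finset.univ.filter (fun x : F => x ≠ 0), psi F x = 0 := by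
    rw [Finset.sum_filter_not_add_sum_filter]; exact h0
  have h1 : Finset.univ.filter (fun x : F => ¬ x ≠ 0) = {0} := by
    ext x; simp
  rw [h1, Finset.sum_singleton, AddChar.map_zero_eq_one] at h2
  linear_combination h2

lemma orbit_char_sum (s t : F) (S : Orb F) :
    ∑ p ∈ Finset.univ.filter (fun p : F × F => orbOf p.1 p.2 = S), psi F (s * p.1 + t * p.2)
      = algebraMap ℚ ℂ (Kmat S (orbOf s t)) := by
  rw [Kmat]
  by_cases hP : ∀ w ∈ orbSet (orbOf s t), ∀ p ∈ orbSet S, p.1 * w.1 + p.2 * w.2 = 0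
  · rw [if_pos hP]
    have hall : ∀ p ∈ Finset.univ.filter (fun p : F × F => orbOf p.1 p.2 = S),
        psi F (s * p.1 + t * p.2) = 1 := by
      intro p hp
      have hpS : p ∈ orbSet S := (Finset.mem_filter.mp hp).2
      have hst : ((s, t) : F × F) ∈ orbSet (orbOf s t) := rfl
      have h := hP _ hst _ hpS
      have h2 : s * p.1 + t * p.2 = 0 := by dsimp at h; linear_combination h
      rw [h2, AddChar.map_zero_eq_one]
    rw [Finset.sum_congr rfl hall, Finset.sum_const, nsmul_eq_mul, mul_one]
    have hset : orbSet S = ↑(Finset.univ.filter (fun p : F × F => orbOf p.1 p.2 = S)) := by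
      ext p; simp [orbSet]
    rw [hset, Set.ncard_coe_finset]
    simp
  · rw [if_neg hP]
    push_neg at hP
    obtain ⟨w, hw, p0, hp0, hne⟩ := hP
    obtain ⟨lam, hlam⟩ := orbOf_eq_orbOf_iff.mp hw
    have hw1 : w.1 = (lam : F) * s := (congrArg Prod.fst hlam).symm
    have hw2 : w.2 = (lam : F) * t := (congrArg Prod.snd hlam).symm
    have hc : s * p0.1 + t * p0.2 ≠ 0 := by
      intro h0
      apply hne
      rw [hw1, hw2]
      linear_combination (lam : F) * h0
    set c := s * p0.1 + t * p0.2 with hcdef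
    have hp0ne : p0 ≠ (0 : F × F) := by
      intro h; apply hc; rw [hcdef, h]; simp
    have hSeq : S = orbOf p0.1 p0.2 := hp0.symm
    have himg : Finset.univ.filter (fun p : F × F => orbOf p.1 p.2 = S)
        = Finset.univ.image (fun lam : Fˣ => lam • p0) := by
      ext q
      simp only [Finset.mem_filter, Finset.mem_univ, true_and, Finset.mem_image, hSeq]
      rw [show orbOf q.1 q.2 = orbOf p0.1 p0.2 ↔ ∃ g : Fˣ, g • ((p0.1, p0.2) : F × F) = (q.1, q.2)
        from orbOf_eq_orbOf_iff]
    have hinj : ∀ a ∈ Finset.univ, ∀ b ∈ Finset.univ,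
        (fun lam : Fˣ => lam • p0) a = (fun lam : Fˣ => lam • p0) b → a = b := by
      intro a _ b _ hab
      have h1 : (a : F) * p0.1 = (b : F) * p0.1 := congrArg Prod.fst hab
      have h2 : (a : F) * p0.2 = (b : F) * p0.2 := congrArg Prod.snd hab
      by_cases h01 : p0.1 = 0
      · have h02 : p0.2 ≠ 0 := fun h => hp0ne (Prod.ext h01 h)
        exact Units.ext (mul_right_cancel₀ h02 h2)
      · exact Units.ext (mul_right_cancel₀ h01 h1)
    rw [himg, Finset.sum_image hinj]
    have hterm : ∀ lam : Fˣ, psi F (s * (lam • p0).1 + t * (lam • p0).2)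
        = psi F ((lam * Units.mk0 c hc : Fˣ) : F) := by
      intro lam
      congr 1
      show s * ((lam : F) * p0.1) + t * ((lam : F) * p0.2) = (lam : F) * c
      rw [hcdef]; ring
    rw [Finset.sum_congr rfl (fun lam _ => hterm lam)]
    rw [show (∑ lam : Fˣ, psi F ((lam * Units.mk0 c hc : Fˣ) : F)) = ∑ u : Fˣ, psi F (u : F)
      from Fintype.sum_equiv (Equiv.mulRight (Units.mk0 c hc)) _ _ (fun _ => rfl)]
    rw [sum_psi_units]
    simp

lemma subspace_sum_conv {n : ℕ} (U : Submodule F (Fin n → F)) (f : (Fin n → F) → ℂ) :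
    ∑ u ∈ (U : Set (Fin n → F)).toFinset, f u = ∑ u : U, f u.1 := by
  rw [← Finset.sum_set_coe]
  exact Fintype.sum_equiv (Equiv.refl _) _ _ (fun _ => rfl)

lemma subspace_char_sum {n : ℕ} (U : Submodule F (Fin n → F)) (w : Fin n → F) :
    ∑ u ∈ (U : Set (Fin n → F)).toFinset, psi F (∑ i, u i * w i)
      = if w ∈ orthW ((U : Set (Fin n → F)).toFinset) then (Nat.card U : ℂ) else 0 := by
  rw [subspace_sum_conv]
  by_cases hw : ∀ u ∈ (U : Set (Fin n → F)).toFinset, ∑ i, u i * w i = 0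
  · have hmem : w ∈ orthW ((U : Set (Fin n → F)).toFinset) := by
      rw [orthW, Finset.mem_filter]; exact ⟨Finset.mem_univ _, hw⟩
    rw [if_pos hmem]
    have : ∀ u : U, psi F (∑ i, u.1 i * w i) = 1 := by
      intro u
      rw [hw u.1 (Set.mem_toFinset.mpr u.2), AddChar.map_zero_eq_one]
    rw [Fintype.sum_congr _ _ this, Finset.sum_const, nsmul_eq_mul, mul_one,
      Finset.card_univ, Nat.card_eq_fintype_card]
  · rw [if_neg (by rw [orthW, Finset.mem_filter]; tauto)]
    push_neg at hw
    obtain ⟨u0, hu0mem, hu0⟩ := hw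
    have hu0U : u0 ∈ U := Set.mem_toFinset.mp hu0mem
    set g0 := ∑ i, u0 i * w i with hg0def
    obtain ⟨c, hcψ⟩ := AddChar.ne_one_iff.mp (psi_ne_one (F := F))
    let χ : AddChar U ℂ :=
      { toFun := fun u => psi F (∑ i, (u : Fin n → F) i * w i)
        map_zero_eq_one' := by
          simp
        map_add_eq_mul' := by
          intro a b
          show psi F (∑ i, ((a : Fin n → F) + (b : Fin n → F)) i * w i) = _
          rw [← AddChar.map_add_eq_mul]
          congr 1
          rw [← Finset.sum_add_distrib]
          exact Finset.sum_congr rfl (fun i _ => by simp [add_mul])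
      }
    have hχ : χ ≠ 1 := by
      rw [AddChar.ne_one_iff]
      refine ⟨⟨(c / g0) • u0, U.smul_mem _ hu0U⟩, ?_⟩
      show psi F (∑ i, ((c / g0) • u0) i * w i) ≠ 1
      have : ∑ i, ((c / g0) • u0) i * w i = c := by
        simp only [Pi.smul_apply, smul_eq_mul]
        rw [show (∑ i, c / g0 * u0 i * w i) = c / g0 * ∑ i, u0 i * w i by
          rw [Finset.mul_sum]; exact Finset.sum_congr rfl (fun i _ => by ring)]
        rw [← hg0def, div_mul_cancel₀ c hu0]
      rw [this]; exact hcψ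
    have := AddChar.sum_eq_zero_of_ne_one hχ
    exact this

lemma prod_sw {M : Type*} [CommMonoid M] {ι : Type} [Fintype ι] (u v : ι → F) (f : Orb F → M) :
    ∏ S : Orb F, f S ^ sw u v S = ∏ i, f (orbOf (u i) (v i)) := by
  rw [← Finset.prod_fiberwise Finset.univ (fun i => orbOf (u i) (v i))
    (fun i => f (orbOf (u i) (v i)))]
  apply Finset.prod_congr rfl
  intro S _
  rw [Finset.prod_congr rfl (fun i hi => by rw [(Finset.mem_filter.mp hi).2] :
    ∀ i ∈ Finset.univ.filter (fun i => orbOf (u i) (v i) = S),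
      f (orbOf (u i) (v i)) = f S), Finset.prod_const, sw]

lemma orbit_poly_sum (s t : F) :
    ∑ S : Orb F, (C (algebraMap ℚ ℂ (Kmat S (orbOf s t))) : MvPolynomial (Orb F) ℂ) * X S
      = ∑ p : F × F, C (psi F (s * p.1 + t * p.2)) * X (orbOf p.1 p.2) := by
  rw [← Finset.sum_fiberwise Finset.univ (fun p : F × F => orbOf p.1 p.2)
    (fun p => (C (psi F (s * p.1 + t * p.2)) : MvPolynomial (Orb F) ℂ) * X (orbOf p.1 p.2))]
  apply Finset.sum_congr rfl
  intro S _
  rw [Finset.sum_congr rfl (fun p hp => by rw [(Finset.mem_filter.mp hp).2] :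
    ∀ p ∈ Finset.univ.filter (fun p : F × F => orbOf p.1 p.2 = S),
      (C (psi F (s * p.1 + t * p.2)) : MvPolynomial (Orb F) ℂ) * X (orbOf p.1 p.2)
        = C (psi F (s * p.1 + t * p.2)) * X S)]
  rw [← Finset.sum_mul, ← map_sum, orbit_char_sum]

lemma W2_map {n : ℕ} (Uf Vf : Finset (Fin n → F)) :
    (MvPolynomial.map (algebraMap ℚ ℂ)) (W2 Uf Vf)
      = ∑ u ∈ Uf, ∑ v ∈ Vf, ∏ i, (X (orbOf (u i) (v i)) : MvPolynomial (Orb F) ℂ) := by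
  rw [W2]
  simp only [map_sum, map_prod, map_pow, MvPolynomial.map_X]
  exact Finset.sum_congr rfl fun u _ => Finset.sum_congr rfl fun v _ => prod_sw u v X

lemma aeval_W2_map {n : ℕ} (Uf Vf : Finset (Fin n → F)) :
    (MvPolynomial.map (algebraMap ℚ ℂ))
        ((MvPolynomial.aeval (fun T : Orb F => ∑ S : Orb F, C (Kmat S T) * X S)) (W2 Uf Vf))
      = ∑ u ∈ Uf, ∑ v ∈ Vf, ∏ i,
          ∑ p : F × F, (C (psi F (u i * p.1 + v i * p.2)) : MvPolynomial (Orb F) ℂ)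
            * X (orbOf p.1 p.2) := by
  rw [W2]
  simp only [map_sum, map_prod, map_pow, aeval_X, map_mul, MvPolynomial.map_C,
    MvPolynomial.map_X]
  apply Finset.sum_congr rfl; intro u _
  apply Finset.sum_congr rfl; intro v _
  rw [prod_sw u v (fun T => ∑ S : Orb F,
    (C (algebraMap ℚ ℂ (Kmat S T)) : MvPolynomial (Orb F) ℂ) * X S)]
  exact Finset.prod_congr rfl fun i _ => orbit_poly_sum (u i) (v i)

def pairEquiv (F : Type) [Field F] [Fintype F] (n : ℕ) :
    ((Fin n → F) × (Fin n → F)) ≃ (Fin n → F × F) where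
  toFun wz := fun i => (wz.1 i, wz.2 i)
  invFun g := (fun i => (g i).1, fun i => (g i).2)
  left_inv := fun wz => rfl
  right_inv := fun g => rfl

lemma inner_prod {n : ℕ} (u v : Fin n → F) (g : Fin n → F × F) :
    ∏ i, (C (psi F (u i * (g i).1 + v i * (g i).2)) : MvPolynomial (Orb F) ℂ)
        * X (orbOf (g i).1 (g i).2)
      = C (psi F (∑ i, u i * (g i).1)) * C (psi F (∑ i, v i * (g i).2))
        * ∏ i, (X (orbOf (g i).1 (g i).2) : MvPolynomial (Orb F) ℂ) := by
  rw [Finset.prod_mul_distrib]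
  congr 1
  rw [← map_mul, psi_map_sum, psi_map_sum, ← Finset.prod_mul_distrib, ← map_prod]
  congr 1
  exact Finset.prod_congr rfl fun i _ => AddChar.map_add_eq_mul _ _ _

lemma sum_sum_mul {α β : Type} (s : Finset α) (t : Finset β)
    (A : α → MvPolynomial (Orb F) ℂ) (B : β → MvPolynomial (Orb F) ℂ)
    (P : MvPolynomial (Orb F) ℂ) :
    ∑ u ∈ s, ∑ v ∈ t, A u * B v * P = (∑ u ∈ s, A u) * (∑ v ∈ t, B v) * P := by
  simp only [Finset.sum_mul, Finset.mul_sum, mul_assoc]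
  exact Finset.sum_comm

lemma sum_ite_const {α : Type} (p : Prop) [Decidable p] (s : Finset α)
    (A : α → MvPolynomial (Orb F) ℂ) :
    (∑ z ∈ s, if p then A z else 0) = if p then ∑ z ∈ s, A z else 0 := by
  split_ifs <;> simp

lemma expand_main {n : ℕ} (U V : Submodule F (Fin n → F)) :
    (∑ u ∈ (U : Set (Fin n → F)).toFinset, ∑ v ∈ (V : Set (Fin n → F)).toFinset, ∏ i,
        ∑ p : F × F, (C (psi F (u i * p.1 + v i * p.2)) : MvPolynomial (Orb F) ℂ)
          * X (orbOf p.1 p.2))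
      = C ((Nat.card U : ℂ) * (Nat.card V : ℂ))
        * ∑ w ∈ orthW ((U : Set (Fin n → F)).toFinset),
            ∑ z ∈ orthW ((V : Set (Fin n → F)).toFinset),
              ∏ i, (X (orbOf (w i) (z i)) : MvPolynomial (Orb F) ℂ) := by
  have step1 : ∀ (u v : Fin n → F),
      (∏ i, ∑ p : F × F, (C (psi F (u i * p.1 + v i * p.2)) : MvPolynomial (Orb F) ℂ)
          * X (orbOf p.1 p.2))
        = ∑ g : Fin n → F × F,
            C (psi F (∑ i, u i * (g i).1)) * C (psi F (∑ i, v i * (g i).2))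
              * ∏ i, (X (orbOf (g i).1 (g i).2) : MvPolynomial (Orb F) ℂ) := by
    intro u v
    rw [Finset.prod_univ_sum]
    rw [Fintype.piFinset_univ]
    exact Finset.sum_congr rfl fun g _ => inner_prod u v g
  rw [Finset.sum_congr rfl (fun u _ => Finset.sum_congr rfl (fun v _ => step1 u v))]
  rw [Finset.sum_congr rfl (fun u _ => Finset.sum_comm), Finset.sum_comm]
  rw [Finset.sum_congr rfl (fun g _ => sum_sum_mul _ _ _ _ _)]
  have step3 : ∀ g : Fin n → F × F,
      ((∑ u ∈ (U : Set (Fin n → F)).toFinset, (C (psi F (∑ i, u i * (g i).1))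
          : MvPolynomial (Orb F) ℂ))
        * (∑ v ∈ (V : Set (Fin n → F)).toFinset, C (psi F (∑ i, v i * (g i).2)))
        * ∏ i, (X (orbOf (g i).1 (g i).2) : MvPolynomial (Orb F) ℂ))
      = (if (fun i => (g i).1) ∈ orthW ((U : Set (Fin n → F)).toFinset)
            then (C ((Nat.card U : ℂ)) : MvPolynomial (Orb F) ℂ) else 0)
        * (if (fun i => (g i).2) ∈ orthW ((V : Set (Fin n → F)).toFinset)
            then (C ((Nat.card V : ℂ)) : MvPolynomial (Orb F) ℂ) else 0)
        * ∏ i, (X (orbOf (g i).1 (g i).2) : MvPolynomial (Orb F) ℂ) := by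
    intro g
    rw [← map_sum (MvPolynomial.C : ℂ →+* MvPolynomial (Orb F) ℂ)
        (fun u => psi F (∑ i, u i * (g i).1)) ((U : Set (Fin n → F)).toFinset),
      ← map_sum (MvPolynomial.C : ℂ →+* MvPolynomial (Orb F) ℂ)
        (fun v => psi F (∑ i, v i * (g i).2)) ((V : Set (Fin n → F)).toFinset),
      subspace_char_sum U (fun i => (g i).1),
      subspace_char_sum V (fun i => (g i).2), apply_ite C, apply_ite C, map_zero]
  rw [Finset.sum_congr rfl (fun g _ => step3 g)]
  rw [← Equiv.sum_comp (pairEquiv F n), Fintype.sum_prod_type]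
  dsimp +instances only [pairEquiv, Equiv.coe_fn_mk]
  simp only [ite_mul, zero_mul, mul_ite, mul_zero]
  rw [Finset.sum_congr rfl (fun w _ => by rw [Finset.sum_ite_mem, Finset.univ_inter])]
  rw [Finset.sum_congr rfl (fun w _ => sum_ite_const _ _ _)]
  rw [Finset.sum_ite_mem, Finset.univ_inter]
  rw [map_mul, Finset.mul_sum]
  apply Finset.sum_congr rfl; intro w _
  rw [Finset.mul_sum]

/-- MacWilliams identities for second-order weight enumerators. -/
theorem stmt_7 {F : Type} [Field F] [Fintype F] {n : ℕ}
    (U V : Submodule F (Fin n → F)) :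
    W2 (orthW ((U : Set (Fin n → F)).toFinset)) (orthW ((V : Set (Fin n → F)).toFinset))
      = C (1 / ((Nat.card U : ℚ) * (Nat.card V : ℚ)))
        * MvPolynomial.aeval (fun T : Orb F => ∑ S : Orb F, C (Kmat S T) * X S)
            (W2 ((U : Set (Fin n → F)).toFinset) ((V : Set (Fin n → F)).toFinset)) := by
  have ha : ((Nat.card U : ℚ)) ≠ 0 := by
    have : 0 < Nat.card U := Nat.card_pos
    exact_mod_cast this.ne'
  have hb : ((Nat.card V : ℚ)) ≠ 0 := by
    have : 0 < Nat.card V := Nat.card_pos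
    exact_mod_cast this.ne'
  have key : (MvPolynomial.aeval (fun T : Orb F => ∑ S : Orb F, C (Kmat S T) * X S))
        (W2 ((U : Set (Fin n → F)).toFinset) ((V : Set (Fin n → F)).toFinset))
      = C ((Nat.card U : ℚ) * (Nat.card V : ℚ))
        * W2 (orthW ((U : Set (Fin n → F)).toFinset)) (orthW ((V : Set (Fin n → F)).toFinset)) := by
    apply MvPolynomial.map_injective (algebraMap ℚ ℂ) (algebraMap ℚ ℂ).injective
    rw [aeval_W2_map, map_mul, MvPolynomial.map_C, W2_map, expand_main]
    congr 1
    rw [map_mul]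
    push_cast
    rw [map_mul]
  rw [key, ← mul_assoc, ← C_mul, one_div, inv_mul_cancel₀ (mul_ne_zero ha hb), C_1, one_mul]
end
end

section
/- Let C_d = {v ∈ F_q^d : Σ_{i=1}^d v_i = 0} be the single symbol check code of length d. Then its second-order weight enumerator is W_{C_d, C_d}(x) = (1/q^2)·[ (Σ_{S∈S} x_S K_{S,S00})^d + (q−1) Σ_{T ≠ S00} (Σ_{S∈S} x_S K_{S,T})^d ], where K_{S,T} = |S| if T ⊆ S^⊥ and K_{S,T} = −1 otherwise, and S00 is the zero orbit. -/
open scoped Classical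
open Finset MvPolynomial

noncomputable section

variable {F : Type} [Field F] [Fintype F]

/-- The single symbol check code of length `d`. -/
def chkCode (d : ℕ) : Finset (Fin d → F) :=
  Finset.univ.filter (fun v => (∑ i, v i) = 0)

namespace Aux9

/-- finset version of orbSet -/
def orbF (S : Orb F) : Finset (F × F) := univ.filter (fun p => orbOf p.1 p.2 = S)

lemma mem_orbF {S : Orb F} {p : F × F} : p ∈ orbF S ↔ orbOf p.1 p.2 = S := by
  simp [orbF]

lemma orbOf_eq_iff {p q : F × F} : orbOf p.1 p.2 = orbOf q.1 q.2 ↔ ∃ u : Fˣ, u • q = p := by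
  constructor
  · intro h
    exact MulAction.mem_orbit_iff.mp (Quotient.exact h)
  · intro ⟨u, hu⟩
    exact Quotient.sound (MulAction.mem_orbit_iff.mpr ⟨u, hu⟩)

lemma smul_pair (u : Fˣ) (p : F × F) : u • p = ((u : F) * p.1, (u : F) * p.2) := rfl

lemma orbSet_eq (S : Orb F) : orbSet S = ↑(orbF (F := F) S) := by
  ext p; simp [orbSet, mem_orbF]

lemma ncard_orbSet (S : Orb F) : (orbSet S).ncard = (orbF (F := F) S).card := by
  rw [orbSet_eq, Set.ncard_coe_finset]

lemma orbF_zero : orbF (orbOf (0 : F) 0) = {((0 : F), (0 : F))} := by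
  ext p
  simp only [mem_orbF, Finset.mem_singleton]
  constructor
  · intro h
    obtain ⟨u, hu⟩ := (orbOf_eq_iff (p := p) (q := ((0:F),(0:F)))).mp h
    rw [smul_pair] at hu
    simpa using hu.symm
  · rintro rfl; rfl

end Aux9

namespace Aux9

set_option linter.unusedSectionVars false

lemma orbF_eq_image {p : F × F} :
    orbF (orbOf p.1 p.2) = Finset.univ.image (fun u : Fˣ => u • p) := by
  ext q
  simp only [mem_orbF, Finset.mem_image, Finset.mem_univ, true_and]
  exact orbOf_eq_iff

lemma smul_inj {p : F × F} (hp : p ≠ 0) : Function.Injective (fun u : Fˣ => u • p) := by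
  intro u v h
  simp only [smul_pair, Prod.mk.injEq] at h
  have h1 := h.1; have h2 := h.2
  rcases (show p.1 ≠ 0 ∨ p.2 ≠ 0 by
    by_contra hc; push_neg at hc
    exact hp (Prod.ext hc.1 hc.2)) with h' | h'
  · exact Units.ext (mul_right_cancel₀ h' h1)
  · exact Units.ext (mul_right_cancel₀ h' h2)

lemma card_orbF {p : F × F} (hp : p ≠ 0) :
    (orbF (orbOf p.1 p.2)).card = Fintype.card F - 1 := by
  rw [orbF_eq_image, Finset.card_image_of_injective _ (smul_inj hp), Finset.card_univ]
  simp [Fintype.card_units]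

lemma card_orbF_zero : (orbF (orbOf (0 : F) 0)).card = 1 := by
  rw [orbF_zero]; rfl

/-- Character sum over an orbit equals the K-matrix entry. -/
lemma charSum (ψ : AddChar F ℂ) (hψ : ψ.IsPrimitive) (a b : F) (S : Orb F) :
    ∑ p ∈ orbF S, ψ (p.1 * a + p.2 * b) = ((Kmat S (orbOf a b) : ℚ) : ℂ) := by
  rw [Kmat]
  have hrep : ((a, b) : F × F) ∈ orbF (orbOf a b) := mem_orbF.mpr rfl
  by_cases hc : ∀ w ∈ orbSet (orbOf a b), ∀ s ∈ orbSet S, s.1 * w.1 + s.2 * w.2 = 0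
  · rw [if_pos hc]
    have : ∀ p ∈ orbF S, ψ (p.1 * a + p.2 * b) = 1 := by
      intro p hp
      have h0 : p.1 * a + p.2 * b = 0 := hc (a, b) (by rw [orbSet_eq]; exact_mod_cast hrep) p
        (by rw [orbSet_eq]; exact_mod_cast hp)
      rw [h0, AddChar.map_zero_eq_one]
    rw [Finset.sum_congr rfl this, Finset.sum_const, ncard_orbSet]
    push_cast; ring
  · rw [if_neg hc]
    -- there is s0 ∈ S with s0 ⬝ (a,b) ≠ 0
    push_neg at hc
    obtain ⟨w, hw, s0, hs0, hne⟩ := hc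
    rw [orbSet_eq] at hw hs0
    have hw' : orbOf w.1 w.2 = orbOf a b := mem_orbF.mp (by exact_mod_cast hw)
    obtain ⟨u, hu⟩ := (orbOf_eq_iff (p := w) (q := (a, b))).mp hw'
    have hs0' : s0 ∈ orbF S := by exact_mod_cast hs0
    -- replace w by (a,b): s0 ⬝ (a,b) ≠ 0
    have hab : s0.1 * a + s0.2 * b ≠ 0 := by
      intro h0
      apply hne
      rw [← hu, smul_pair]
      simp only []
      calc s0.1 * ((u:F) * a) + s0.2 * ((u:F) * b)
          = (u:F) * (s0.1 * a + s0.2 * b) := by ring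
        _ = 0 := by rw [h0, mul_zero]
    have hs0ne : s0 ≠ 0 := by
      intro h; apply hab; rw [h]; simp
    have hS : S = orbOf s0.1 s0.2 := (mem_orbF.mp hs0').symm
    subst hS
    rw [orbF_eq_image, Finset.sum_image (fun x _ y _ h => smul_inj hs0ne h)]
    have key : ∀ u : Fˣ, ψ ((u • s0).1 * a + (u • s0).2 * b)
        = ψ ((u : F) * (s0.1 * a + s0.2 * b)) := by
      intro u; rw [smul_pair]; ring_nf
    rw [Finset.sum_congr rfl (fun u _ => key u)]
    -- ∑ u : Fˣ, ψ (u * c) = -1 when c ≠ 0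
    have htot : ∑ x : F, ψ (x * (s0.1 * a + s0.2 * b)) = 0 := by
      rw [AddChar.sum_mulShift _ hψ]; simp [hab]
    have himg : ((Finset.univ : Finset F).erase 0)
        = Finset.univ.image (fun u : Fˣ => (u : F)) := by
      ext x
      simp only [Finset.mem_image, Finset.mem_univ, true_and, Finset.mem_erase, and_true]
      constructor
      · rintro hx; exact ⟨Units.mk0 x hx, rfl⟩
      · rintro ⟨v, rfl⟩; exact v.ne_zero
    rw [← Finset.sum_erase_add _ _ (Finset.mem_univ (0:F)), himg,
      Finset.sum_image (fun x _ y _ h => Units.ext h), zero_mul,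
      AddChar.map_zero_eq_one] at htot
    have : ∑ u : Fˣ, ψ ((u:F) * (s0.1 * a + s0.2 * b)) = -1 := by linear_combination htot
    rw [this]; norm_num

end Aux9

namespace Aux9

lemma addChar_map_sum (ψ : AddChar F ℂ) {ι : Type} (s : Finset ι) (f : ι → F) :
    ψ (∑ i ∈ s, f i) = ∏ i ∈ s, ψ (f i) := by
  classical
  induction s using Finset.cons_induction with
  | empty => simp
  | cons a s ha ih => rw [Finset.sum_cons, Finset.prod_cons, AddChar.map_add_eq_mul, ih]

lemma expandSum (ψ : AddChar F ℂ) (hψ : ψ.IsPrimitive) (a b : F) :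
    (∑ S : Orb F, C ((Kmat S (orbOf a b) : ℚ) : ℂ) * X S : MvPolynomial (Orb F) ℂ)
      = ∑ p : F × F, C (ψ (p.1 * a + p.2 * b)) * X (orbOf p.1 p.2) := by
  rw [← Finset.sum_fiberwise (Finset.univ : Finset (F × F)) (fun p => orbOf p.1 p.2)
    (fun p => C (ψ (p.1 * a + p.2 * b)) * X (orbOf p.1 p.2))]
  apply Finset.sum_congr rfl
  intro S _
  have h1 : ∀ p ∈ orbF S,
      C (ψ (p.1 * a + p.2 * b)) * X (orbOf p.1 p.2)
        = C (ψ (p.1 * a + p.2 * b)) * (X S : MvPolynomial (Orb F) ℂ) := by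
    intro p hp; rw [mem_orbF.mp hp]
  calc (C ((Kmat S (orbOf a b) : ℚ) : ℂ) * X S : MvPolynomial (Orb F) ℂ)
      = C (∑ p ∈ orbF S, ψ (p.1 * a + p.2 * b)) * X S := by rw [charSum ψ hψ a b S]
    _ = ∑ p ∈ orbF S, C (ψ (p.1 * a + p.2 * b)) * X S := by
        rw [map_sum, Finset.sum_mul]
    _ = ∑ p ∈ orbF S, C (ψ (p.1 * a + p.2 * b)) * X (orbOf p.1 p.2) :=
        (Finset.sum_congr rfl h1).symm

lemma powExpand (d : ℕ) (c : F × F → ℂ) :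
    ((∑ p : F × F, C (c p) * X (orbOf p.1 p.2) : MvPolynomial (Orb F) ℂ)) ^ d
      = ∑ w : Fin d → F × F,
          C (∏ i, c (w i)) * ∏ i, X (orbOf (w i).1 (w i).2) := by
  have : ((∑ p : F × F, C (c p) * X (orbOf p.1 p.2) : MvPolynomial (Orb F) ℂ)) ^ d
      = ∏ _i : Fin d, (∑ p : F × F, C (c p) * X (orbOf p.1 p.2)) := by
    rw [Finset.prod_const, Finset.card_univ, Fintype.card_fin]
  rw [this, Finset.prod_univ_sum (fun _ => (Finset.univ : Finset (F × F)))
    (fun _i p => C (c p) * X (orbOf p.1 p.2)), Fintype.piFinset_univ]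
  apply Finset.sum_congr rfl
  intro w _
  rw [Finset.prod_mul_distrib, ← map_prod]

end Aux9

namespace Aux9

lemma mainC (d : ℕ) (ψ : AddChar F ℂ) (hψ : ψ.IsPrimitive) :
    ∑ ab : F × F, (∑ S : Orb F, C ((Kmat S (orbOf ab.1 ab.2) : ℚ) : ℂ) * X S) ^ d
      = C ((Fintype.card F : ℂ)) ^ 2
          * ∑ u ∈ chkCode (F := F) d, ∑ v ∈ chkCode d,
              ∏ i, X (orbOf (u i) (v i)) := by
  have step1 : ∀ ab : F × F,
      ((∑ S : Orb F, C ((Kmat S (orbOf ab.1 ab.2) : ℚ) : ℂ) * X S) ^ d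
          : MvPolynomial (Orb F) ℂ)
        = ∑ w : Fin d → F × F,
            C (ψ ((∑ i, (w i).1) * ab.1 + (∑ i, (w i).2) * ab.2))
              * ∏ i, X (orbOf (w i).1 (w i).2) := by
    intro ab
    rw [expandSum ψ hψ ab.1 ab.2, powExpand]
    apply Finset.sum_congr rfl
    intro w _
    congr 2
    rw [← addChar_map_sum]
    congr 1
    rw [Finset.sum_mul, Finset.sum_mul, ← Finset.sum_add_distrib]
  rw [Finset.sum_congr rfl (fun ab _ => step1 ab), Finset.sum_comm]
  have step2 : ∀ w : Fin d → F × F,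
      (∑ ab : F × F, C (ψ ((∑ i, (w i).1) * ab.1 + (∑ i, (w i).2) * ab.2))
          * ∏ i, X (orbOf (w i).1 (w i).2) : MvPolynomial (Orb F) ℂ)
        = (if (∑ i, (w i).1) = 0 ∧ (∑ i, (w i).2) = 0
            then C ((Fintype.card F : ℂ)) ^ 2 else 0)
            * ∏ i, X (orbOf (w i).1 (w i).2) := by
    intro w
    rw [← Finset.sum_mul]
    congr 1
    rw [← map_sum]
    have hfac : ∑ ab : F × F, ψ ((∑ i, (w i).1) * ab.1 + (∑ i, (w i).2) * ab.2)
        = (∑ a : F, ψ (a * (∑ i, (w i).1))) * (∑ b : F, ψ (b * (∑ i, (w i).2))) := by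
      rw [Fintype.sum_prod_type, Finset.sum_mul_sum]
      apply Finset.sum_congr rfl; intro a _
      apply Finset.sum_congr rfl; intro b _
      rw [AddChar.map_add_eq_mul, mul_comm a, mul_comm b]
    rw [hfac, AddChar.sum_mulShift _ hψ, AddChar.sum_mulShift _ hψ]
    by_cases h1 : (∑ i, (w i).1) = 0 <;> by_cases h2 : (∑ i, (w i).2) = 0 <;>
      simp [h1, h2, pow_two, map_mul]
  rw [Finset.sum_congr rfl (fun w _ => step2 w)]
  calc ∑ w : Fin d → F × F,
        (if (∑ i, (w i).1) = 0 ∧ (∑ i, (w i).2) = 0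
          then (C ((Fintype.card F : ℂ)) ^ 2 : MvPolynomial (Orb F) ℂ) else 0)
          * ∏ i, X (orbOf (w i).1 (w i).2)
      = ∑ u : Fin d → F, ∑ v : Fin d → F,
          (if (∑ i, u i) = 0 ∧ (∑ i, v i) = 0
            then (C ((Fintype.card F : ℂ)) ^ 2 : MvPolynomial (Orb F) ℂ) else 0)
            * ∏ i, X (orbOf (u i) (v i)) := by
        rw [← Equiv.sum_comp (Equiv.arrowProdEquivProdArrow (Fin d) (fun _ => F) (fun _ => F)).symm,
          Fintype.sum_prod_type]
        rfl
    _ = C ((Fintype.card F : ℂ)) ^ 2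
          * ∑ u ∈ chkCode (F := F) d, ∑ v ∈ chkCode d,
              ∏ i, X (orbOf (u i) (v i)) := by
        unfold chkCode
        rw [Finset.mul_sum, Finset.sum_filter]
        apply Finset.sum_congr rfl; intro u _
        by_cases h1 : (∑ i, u i) = 0
        · simp only [h1, true_and, if_true, Finset.mul_sum, Finset.sum_filter]
          apply Finset.sum_congr rfl; intro v _
          by_cases h2 : (∑ i, v i) = 0 <;> simp [h2]
        · simp [h1]

end Aux9

namespace Aux9

lemma exists_rep (T : Orb F) : ∃ p : F × F, orbOf p.1 p.2 = T := by
  obtain ⟨p, hp⟩ := Quotient.exists_rep T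
  exact ⟨p, hp⟩

lemma card_orbF_ne (T : Orb F) (hT : T ≠ orbOf (0 : F) 0) :
    (orbF T).card = Fintype.card F - 1 := by
  obtain ⟨p, rfl⟩ := exists_rep T
  apply card_orbF
  intro h
  exact hT (by rw [h]; rfl)

lemma groupOrbits (g : Orb F → MvPolynomial (Orb F) ℂ) :
    ∑ ab : F × F, g (orbOf ab.1 ab.2)
      = g (orbOf (0 : F) 0)
        + C ((Fintype.card F : ℂ) - 1)
          * ∑ T ∈ Finset.univ.filter (fun T : Orb F => T ≠ orbOf (0 : F) 0), g T := by
  have hq1 : 1 ≤ Fintype.card F := Fintype.card_pos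
  rw [← Finset.sum_fiberwise' (Finset.univ : Finset (F × F)) (fun p => orbOf p.1 p.2) g]
  have hfib : ∀ T : Orb F,
      (∑ p ∈ Finset.univ.filter (fun p : F × F => orbOf p.1 p.2 = T), g T)
        = (orbF T).card • g T := by
    intro T; rw [Finset.sum_const]; rfl
  rw [Finset.sum_congr rfl (fun T _ => hfib T),
    ← Finset.sum_filter_add_sum_filter_not Finset.univ (fun T : Orb F => T = orbOf (0 : F) 0)]
  have hfilt : Finset.univ.filter (fun T : Orb F => T = orbOf (0 : F) 0) = {orbOf (0 : F) 0} := by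
    ext T; simp
  congr 1
  · rw [hfilt, Finset.sum_singleton, card_orbF_zero, one_smul]
  · rw [Finset.mul_sum]
    have : Finset.univ.filter (fun T : Orb F => ¬ T = orbOf (0 : F) 0)
        = Finset.univ.filter (fun T : Orb F => T ≠ orbOf (0 : F) 0) := rfl
    rw [this]
    apply Finset.sum_congr rfl
    intro T hT
    have hT' : T ≠ orbOf (0 : F) 0 := (Finset.mem_filter.mp hT).2
    rw [card_orbF_ne T hT', nsmul_eq_mul]
    congr 1
    rw [← MvPolynomial.C_eq_coe_nat]
    congr 1
    push_cast [Nat.cast_sub hq1]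
    ring

end Aux9

namespace Aux9

set_option linter.unusedSectionVars false

lemma W2_eq {d : ℕ} :
    W2 (chkCode (F := F) d) (chkCode d)
      = ∑ u ∈ chkCode (F := F) d, ∑ v ∈ chkCode d, ∏ i, X (orbOf (u i) (v i)) := by
  unfold W2
  apply Finset.sum_congr rfl; intro u _
  apply Finset.sum_congr rfl; intro v _
  unfold sw
  rw [← Finset.prod_fiberwise' Finset.univ (fun i => orbOf (u i) (v i))
    (fun S => (X S : MvPolynomial (Orb F) ℚ))]
  apply Finset.prod_congr rfl
  intro S _
  rw [Finset.prod_const]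

lemma map_W2 {d : ℕ} :
    MvPolynomial.map (algebraMap ℚ ℂ) (W2 (chkCode (F := F) d) (chkCode d))
      = ∑ u ∈ chkCode (F := F) d, ∑ v ∈ chkCode d, ∏ i, X (orbOf (u i) (v i)) := by
  rw [W2_eq]
  simp [map_sum, map_prod, MvPolynomial.map_X]

end Aux9

/-- Second-order weight enumerator of the single symbol check code. -/
theorem stmt_9 {F : Type} [Field F] [Fintype F] {d : ℕ} (hd : 0 < d) :
    W2 (chkCode (F := F) d) (chkCode d)
      = C (1 / (Fintype.card F : ℚ) ^ 2)
        * ((∑ S : Orb F, C (Kmat S (orbOf (0 : F) 0)) * X S) ^ d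
          + C ((Fintype.card F : ℚ) - 1)
            * ∑ T ∈ Finset.univ.filter (fun T : Orb F => T ≠ orbOf (0 : F) 0),
                (∑ S : Orb F, C (Kmat S T) * X S) ^ d) := by
  have hq0 : (Fintype.card F : ℚ) ≠ 0 := Nat.cast_ne_zero.mpr Fintype.card_ne_zero
  have key : C ((Fintype.card F : ℚ) ^ 2) * W2 (chkCode (F := F) d) (chkCode d)
      = (∑ S : Orb F, C (Kmat S (orbOf (0 : F) 0)) * X S) ^ d
        + C ((Fintype.card F : ℚ) - 1)
          * ∑ T ∈ Finset.univ.filter (fun T : Orb F => T ≠ orbOf (0 : F) 0),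
              (∑ S : Orb F, C (Kmat S T) * X S) ^ d := by
    apply MvPolynomial.map_injective (algebraMap ℚ ℂ) ((algebraMap ℚ ℂ).injective)
    have hψ := AddChar.FiniteField.primitiveChar_to_Complex_isPrimitive F
    set ψ := AddChar.FiniteField.primitiveChar_to_Complex F with hψdef
    have hmapped :
        MvPolynomial.map (algebraMap ℚ ℂ)
            (C ((Fintype.card F : ℚ) ^ 2) * W2 (chkCode (F := F) d) (chkCode d))
          = C ((Fintype.card F : ℂ)) ^ 2
              * ∑ u ∈ chkCode (F := F) d, ∑ v ∈ chkCode d,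
                  ∏ i, X (orbOf (u i) (v i)) := by
      rw [map_mul, Aux9.map_W2, MvPolynomial.map_C]
      congr 1
      rw [map_pow]
      congr 1
      simp
    rw [hmapped, ← Aux9.mainC d ψ hψ,
      Aux9.groupOrbits (fun T => (∑ S : Orb F, C ((Kmat S T : ℚ) : ℂ) * X S) ^ d)]
    simp only [map_add, map_mul, map_pow, map_sum, MvPolynomial.map_C, MvPolynomial.map_X,
      eq_ratCast]
    push_cast
    ring
  calc W2 (chkCode (F := F) d) (chkCode d)
      = (C (1 / (Fintype.card F : ℚ) ^ 2) * C ((Fintype.card F : ℚ) ^ 2))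
          * W2 (chkCode (F := F) d) (chkCode d) := by
        rw [← map_mul, one_div, inv_mul_cancel₀ (pow_ne_zero _ hq0), map_one, one_mul]
    _ = C (1 / (Fintype.card F : ℚ) ^ 2)
          * (C ((Fintype.card F : ℚ) ^ 2) * W2 (chkCode (F := F) d) (chkCode d)) := by
        ring
    _ = _ := by rw [key]
end
end

section
/- Let à be a 2-good random m×n matrix over F_q with 2 ≤ m < n, and let C = {uà : u ∈ F_q^m} be the random linear code it generates. Then E[ W_{C,C}(x) / |C|^2 ] = q^{−2m} x_{S00}^n + ((q^m−1)/q^{2m}) Σ_{S ≠ S00} ( (1/q) x_{S00} + ((q−1)/q) x_S )^n + ((q^m−1)(q^m−q)/q^{2m}) ( (1/q^2) x_{S00} + ((q−1)/q^2) Σ_{S ≠ S00} x_S )^n. -/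
open scoped Classical
open Finset MvPolynomial

noncomputable section

variable {F : Type} [Field F] [Fintype F]

/-- The linear code generated by generator matrix `M` (row space). -/
def genCode {m n : ℕ} (M : Matrix (Fin m) (Fin n) F) : Finset (Fin n → F) :=
  (Finset.univ : Finset (Fin m → F)).image (fun u => Matrix.vecMul u M)


namespace Stmt12Aux

lemma orbOf_eq_iff (a b c d : F) :
    orbOf a b = orbOf c d ↔ ∃ t : Fˣ, ((t : F) * c, (t : F) * d) = (a, b) := by
  constructor
  · intro h
    obtain ⟨t, ht⟩ := Quotient.exact h
    exact ⟨t, by simpa [Units.smul_def, Prod.ext_iff] using ht⟩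
  · rintro ⟨t, ht⟩
    exact Quotient.sound ⟨t, by simpa [Units.smul_def, Prod.ext_iff] using ht⟩

lemma orbOf_eq_zero_iff (a b : F) : orbOf a b = orbOf (0 : F) 0 ↔ a = 0 ∧ b = 0 := by
  rw [orbOf_eq_iff]
  constructor
  · rintro ⟨t, ht⟩
    simpa [Prod.ext_iff, eq_comm] using ht
  · rintro ⟨rfl, rfl⟩
    exact ⟨1, by simp⟩

lemma orbOf_mul {t : F} (ht : t ≠ 0) (a b : F) : orbOf (t * a) (t * b) = orbOf a b := by
  rw [orbOf_eq_iff]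
  exact ⟨Units.mk0 t ht, by simp⟩

lemma card_fiber_orbOf {a b : F} (hab : ¬(a = 0 ∧ b = 0)) :
    (Finset.univ.filter fun p : F × F => orbOf p.1 p.2 = orbOf a b).card
      = Fintype.card F - 1 := by
  have h1 : (Finset.univ.filter fun p : F × F => orbOf p.1 p.2 = orbOf a b)
      = Finset.univ.image (fun t : Fˣ => (((t : F) * a, (t : F) * b) : F × F)) := by
    ext p
    simp only [Finset.mem_filter, Finset.mem_univ, true_and, Finset.mem_image]
    rw [orbOf_eq_iff]
  rw [h1, Finset.card_image_of_injective _ ?_, Finset.card_univ, Fintype.card_units]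
  intro s t hst
  rcases not_and_or.mp hab with ha | hb
  · have : (s : F) * a = (t : F) * a := congrArg Prod.fst hst
    exact Units.ext (mul_right_cancel₀ ha this)
  · have : (s : F) * b = (t : F) * b := congrArg Prod.snd hst
    exact Units.ext (mul_right_cancel₀ hb this)

lemma orbOf_surj (S : Orb F) : ∃ p : F × F, orbOf p.1 p.2 = S := by
  induction S using Quotient.ind with
  | _ p => exact ⟨p, rfl⟩

/-- the monomial -/
def wmon {ι : Type} [Fintype ι] (c d : ι → F) : MvPolynomial (Orb F) ℚ :=
  ∏ S : Orb F, (X S) ^ sw c d S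

lemma wmon_eq {ι : Type} [Fintype ι] (c d : ι → F) :
    wmon c d = ∏ i, (X (orbOf (c i) (d i)) : MvPolynomial (Orb F) ℚ) := by
  rw [← Finset.prod_fiberwise' Finset.univ (fun i => orbOf (c i) (d i))
      (fun S => (X S : MvPolynomial (Orb F) ℚ))]
  unfold wmon sw
  exact Finset.prod_congr rfl fun S _ => (Finset.prod_const _).symm

lemma wmon_zero {ι : Type} [Fintype ι] :
    wmon (0 : ι → F) 0 = (X (orbOf (0:F) 0) : MvPolynomial (Orb F) ℚ) ^ Fintype.card ι := by
  rw [wmon_eq]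
  simp [Finset.prod_const]

lemma qcast_pos : (0:ℚ) < (Fintype.card F : ℚ) := by
  exact_mod_cast Fintype.card_pos

lemma cast_card_sub_one : ((Fintype.card F - 1 : ℕ) : ℚ) = (Fintype.card F : ℚ) - 1 := by
  have := Fintype.card_pos (α := F)
  push_cast [Nat.cast_sub this]
  ring

/-- sum over F × F of X of the orbit -/
lemma sum_X_orbOf :
    (∑ p : F × F, (X (orbOf p.1 p.2) : MvPolynomial (Orb F) ℚ))
      = X (orbOf (0:F) 0) + C ((Fintype.card F : ℚ) - 1) *
          ∑ S ∈ Finset.univ.filter (fun S : Orb F => S ≠ orbOf (0:F) 0), X S := by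
  rw [Finset.sum_comp (fun S => (X S : MvPolynomial (Orb F) ℚ))
      (fun p : F × F => orbOf p.1 p.2)]
  have himg : (Finset.univ : Finset (F × F)).image (fun p => orbOf p.1 p.2)
      = Finset.univ := by
    apply Finset.eq_univ_iff_forall.mpr
    intro S
    obtain ⟨p, hp⟩ := orbOf_surj S
    exact Finset.mem_image.mpr ⟨p, Finset.mem_univ _, hp⟩
  rw [himg, ← Finset.sum_filter_add_sum_filter_not Finset.univ
      (fun S : Orb F => S = orbOf (0:F) 0)]
  congr 1
  · have h0 : (Finset.univ.filter fun S : Orb F => S = orbOf (0:F) 0) = {orbOf (0:F) 0} := by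
      ext S
      simp
    have : (Finset.univ.filter fun p : F × F => orbOf p.1 p.2 = orbOf (0:F) 0) = {((0:F),(0:F))} := by
      ext p
      simp only [Finset.mem_filter, Finset.mem_univ, true_and, Finset.mem_singleton,
        orbOf_eq_zero_iff, Prod.ext_iff]
    rw [h0, Finset.sum_singleton, this]
    simp
  · rw [Finset.mul_sum]
    apply Finset.sum_congr rfl
    intro S hS
    have hS' := (Finset.mem_filter.mp hS).2
    obtain ⟨⟨a, b⟩, rfl⟩ := orbOf_surj S
    have hab : ¬(a = 0 ∧ b = 0) := fun h => hS' ((orbOf_eq_zero_iff a b).mpr h)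
    rw [card_fiber_orbOf hab, nsmul_eq_mul]
    rw [show ((Fintype.card F - 1 : ℕ) : MvPolynomial (Orb F) ℚ)
        = C ((Fintype.card F : ℚ) - 1) by push_cast [← cast_card_sub_one]; simp]

lemma sum_X_orbOf_line (a b : F) :
    (∑ t : F, (X (orbOf (t * a) (t * b)) : MvPolynomial (Orb F) ℚ))
      = X (orbOf (0:F) 0) + C ((Fintype.card F : ℚ) - 1) * X (orbOf a b) := by
  rw [← Finset.sum_filter_add_sum_filter_not Finset.univ (fun t : F => t = 0)]
  have h0 : (Finset.univ.filter fun t : F => t = 0) = {(0:F)} := by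
    ext t; simp
  rw [h0, Finset.sum_singleton]
  congr 1
  · simp
  · have : ∀ t ∈ Finset.univ.filter (fun t : F => ¬ t = 0),
        (X (orbOf (t * a) (t * b)) : MvPolynomial (Orb F) ℚ) = X (orbOf a b) := by
      intro t ht
      rw [orbOf_mul (Finset.mem_filter.mp ht).2]
    rw [Finset.sum_congr rfl this, Finset.sum_const]
    have hcard : (Finset.univ.filter (fun t : F => ¬ t = 0)).card = Fintype.card F - 1 := by
      have : (Finset.univ.filter (fun t : F => ¬ t = 0)) = Finset.univ.erase 0 := by
        ext t; simp
      rw [this, Finset.card_erase_of_mem (Finset.mem_univ _), Finset.card_univ]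
    rw [hcard, nsmul_eq_mul]
    rw [show ((Fintype.card F - 1 : ℕ) : MvPolynomial (Orb F) ℚ)
        = C ((Fintype.card F : ℚ) - 1) by push_cast [← cast_card_sub_one]; simp]

lemma sum_pow_fun {α R : Type} [Fintype α] [CommSemiring R] (f : α → R) (n : ℕ) :
    (∑ x : α, f x) ^ n = ∑ g : Fin n → α, ∏ i, f (g i) := by
  rw [Finset.sum_pow', Fintype.piFinset_univ]

/-- pairs of rows to 2×n matrices -/
def rowsEquiv {n : ℕ} : ((Fin n → F) × (Fin n → F)) ≃ Matrix (Fin 2) (Fin n) F where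
  toFun p := Matrix.of ![p.1, p.2]
  invFun B := (B 0, B 1)
  left_inv p := rfl
  right_inv B := by
    ext i j
    fin_cases i <;> simp

lemma rowsEquiv_zero {n : ℕ} (p : (Fin n → F) × (Fin n → F)) :
    (rowsEquiv p : Matrix (Fin 2) (Fin n) F) 0 = p.1 := rfl

lemma rowsEquiv_one {n : ℕ} (p : (Fin n → F) × (Fin n → F)) :
    (rowsEquiv p : Matrix (Fin 2) (Fin n) F) 1 = p.2 := rfl

section genCode

variable {m n : ℕ} (M : Matrix (Fin m) (Fin n) F)

lemma genCode_fiber_card {c : Fin n → F} (hc : c ∈ genCode M) :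
    (Finset.univ.filter fun u : Fin m → F => Matrix.vecMul u M = c).card
      = (Finset.univ.filter fun u : Fin m → F => Matrix.vecMul u M = 0).card := by
  obtain ⟨u₀, -, rfl⟩ := Finset.mem_image.mp hc
  apply Finset.card_bij' (fun u _ => u - u₀) (fun v _ => v + u₀)
  · intro u hu
    simp only [Finset.mem_filter, Finset.mem_univ, true_and] at hu ⊢
    rw [Matrix.sub_vecMul, hu, sub_self]
  · intro v hv
    simp only [Finset.mem_filter, Finset.mem_univ, true_and] at hv ⊢
    rw [Matrix.add_vecMul, hv, zero_add]
  · intro u _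
    abel
  · intro v _
    abel

lemma sum_genCode {β : Type} [AddCommMonoid β] (g : (Fin n → F) → β) :
    (∑ u : Fin m → F, g (Matrix.vecMul u M))
      = (Finset.univ.filter fun u : Fin m → F => Matrix.vecMul u M = 0).card •
          ∑ c ∈ genCode M, g c := by
  rw [Finset.sum_comp g (fun u : Fin m → F => Matrix.vecMul u M), Finset.smul_sum]
  apply Finset.sum_congr rfl
  intro c hc
  rw [genCode_fiber_card M hc]

lemma genCode_card_mul :
    (genCode M).card *
        (Finset.univ.filter fun u : Fin m → F => Matrix.vecMul u M = 0).card
      = Fintype.card F ^ m := by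
  have h := Finset.card_eq_sum_card_fiberwise
    (f := fun u : Fin m → F => Matrix.vecMul u M) (s := Finset.univ) (t := genCode M)
    (fun u _ => Finset.mem_image_of_mem _ (Finset.mem_univ u))
  rw [Finset.card_univ, Fintype.card_fun, Fintype.card_fin] at h
  rw [h, Finset.sum_congr rfl (fun c hc => genCode_fiber_card M hc), Finset.sum_const,
    smul_eq_mul]

lemma genCode_ker_card_ne : (Finset.univ.filter
    fun u : Fin m → F => Matrix.vecMul u M = 0).card ≠ 0 := by
  exact Finset.card_ne_zero_of_mem
    (Finset.mem_filter.mpr ⟨Finset.mem_univ _, Matrix.zero_vecMul M⟩)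

lemma genCode_card_ne : (genCode M).card ≠ 0 := by
  exact Finset.card_ne_zero_of_mem (Finset.mem_image_of_mem _ (Finset.mem_univ 0))

end genCode

section rank

variable {m : ℕ}

lemma rank_of_pair {u v : Fin m → F} (h : LinearIndependent F ![u, v]) :
    (Matrix.of ![u, v] : Matrix (Fin 2) (Fin m) F).rank = 2 := by
  rw [Matrix.rank_eq_finrank_span_row]
  have := finrank_span_eq_card h
  exact this.trans (Fintype.card_fin 2)

lemma ne_zero_of_indep {u v : Fin m → F} (h : LinearIndependent F ![u, v]) :
    ¬(u = 0 ∧ v = 0) := by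
  rintro ⟨rfl, -⟩
  have := h.ne_zero 0
  simp at this

lemma not_indep_smul (a b : F) (w : Fin m → F) :
    ¬ LinearIndependent F ![a • w, b • w] := by
  rw [linearIndependent_fin2]
  rintro ⟨h1, h2⟩
  simp only [Matrix.cons_val_one, Matrix.head_cons, Matrix.cons_val_zero] at h1 h2
  have hb : b ≠ 0 := by rintro rfl; simp at h1
  exact h2 (a * b⁻¹) (by rw [smul_smul, mul_assoc, inv_mul_cancel₀ hb, mul_one])

lemma dep_classify {u v : Fin m → F} (hne : ¬(u = 0 ∧ v = 0))
    (hdep : ¬ LinearIndependent F ![u, v]) :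
    ∃ a b : F, ¬(a = 0 ∧ b = 0) ∧ ∃ w : Fin m → F, w ≠ 0 ∧ u = a • w ∧ v = b • w := by
  by_cases hv : v = 0
  · have hu : u ≠ 0 := fun h => hne ⟨h, hv⟩
    exact ⟨1, 0, by simp, u, hu, by simp, by simp [hv]⟩
  · rw [linearIndependent_fin2] at hdep
    push_neg at hdep
    simp only [Matrix.cons_val_one, Matrix.head_cons, Matrix.cons_val_zero] at hdep
    obtain ⟨a, ha⟩ := hdep hv
    exact ⟨a, 1, by simp, v, hv, ha.symm, by simp⟩

lemma exists_indep_partner (hm : 2 ≤ m) {w : Fin m → F} (hw : w ≠ 0) :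
    ∃ u : Fin m → F, LinearIndependent F ![u, w] := by
  have hspan : Submodule.span F {w} ≠ ⊤ := by
    intro h
    have h1 : Module.finrank F (Submodule.span F {w} : Submodule F (Fin m → F)) = 1 :=
      finrank_span_singleton hw
    rw [h] at h1
    rw [finrank_top, Module.finrank_fin_fun] at h1
    omega
  obtain ⟨u, hu⟩ : ∃ u : Fin m → F, u ∉ Submodule.span F {w} := by
    by_contra h
    push_neg at h
    exact hspan (Submodule.eq_top_iff'.mpr h)
  refine ⟨u, linearIndependent_fin2.mpr ⟨?_, ?_⟩⟩
  · simpa using hw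
  · intro t ht
    simp only [Matrix.cons_val_one, Matrix.head_cons, Matrix.cons_val_zero] at ht
    exact hu (ht ▸ Submodule.smul_mem _ t (Submodule.mem_span_singleton_self w))

end rank
/-- the parametrizing set for rank-one pairs -/
def Xset (F : Type) [Field F] [Fintype F] (m : ℕ) :
    Finset ((F × F) × (Fin m → F)) :=
  (Finset.univ.filter fun p : F × F => p ≠ 0) ×ˢ
    (Finset.univ.filter fun w : Fin m → F => w ≠ 0)

def psi (x : (F × F) × (Fin m → F)) : (Fin m → F) × (Fin m → F) :=
  (x.1.1 • x.2, x.1.2 • x.2)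

lemma mem_Xset {x : (F × F) × (Fin m → F)} :
    x ∈ Xset F m ↔ x.1 ≠ 0 ∧ x.2 ≠ 0 := by
  simp [Xset, Finset.mem_product]

lemma image_psi :
    (Xset F m).image psi
      = Finset.univ.filter (fun p : (Fin m → F) × (Fin m → F) =>
          ¬ p = 0 ∧ ¬ LinearIndependent F ![p.1, p.2]) := by
  ext p
  simp only [Finset.mem_image, Finset.mem_filter, Finset.mem_univ, true_and]
  constructor
  · rintro ⟨x, hx, rfl⟩
    obtain ⟨hx1, hx2⟩ := mem_Xset.mp hx
    constructor
    · intro h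
      rw [psi, Prod.ext_iff] at h
      obtain ⟨h1, h2⟩ := h
      simp only [Prod.fst_zero, Prod.snd_zero, smul_eq_zero] at h1 h2
      apply hx1
      rw [Prod.ext_iff]
      exact ⟨h1.resolve_right hx2, h2.resolve_right hx2⟩
    · exact not_indep_smul _ _ _
  · rintro ⟨hne, hdep⟩
    have hne' : ¬(p.1 = 0 ∧ p.2 = 0) := fun h => hne (Prod.ext_iff.mpr h)
    obtain ⟨a, b, hab, w, hw, h1, h2⟩ := dep_classify hne' hdep
    refine ⟨((a, b), w), mem_Xset.mpr ⟨?_, hw⟩, ?_⟩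
    · intro h
      rw [Prod.ext_iff] at h
      exact hab h
    · rw [psi, ← h1, ← h2]

lemma fiber_aux {a b α β : F} {w w' : Fin m → F} (hw : w ≠ 0) (ha : a ≠ 0)
    (h1 : α • w' = a • w) (h2 : β • w' = b • w) :
    ∃ t : Fˣ, (t : F) * a = α ∧ (t : F) * b = β ∧ (((t⁻¹ : Fˣ) : F)) • w = w' := by
  have hα : α ≠ 0 := by
    rintro rfl
    rw [zero_smul] at h1
    exact ha (by simpa [smul_eq_zero, hw] using h1.symm)
  have hw'' : w' = (a * α⁻¹) • w := by
    rw [mul_comm, mul_smul, ← h1, smul_smul, inv_mul_cancel₀ hα, one_smul]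
  have hsub : (β * (a * α⁻¹) - b) • w = 0 := by
    rw [sub_smul, mul_smul, ← hw'', h2, sub_self]
  have hβ : β * (a * α⁻¹) = b := by
    rcases smul_eq_zero.mp hsub with h | h
    · exact sub_eq_zero.mp h
    · exact absurd h hw
  refine ⟨Units.mk0 (α * a⁻¹) (by simp [hα, ha]), ?_, ?_, ?_⟩
  · simp [mul_assoc, inv_mul_cancel₀ ha]
  · rw [Units.val_mk0, ← hβ, show α * a⁻¹ * (β * (a * α⁻¹)) = β * (α * α⁻¹) * (a * a⁻¹) by ring,
      mul_inv_cancel₀ hα, mul_inv_cancel₀ ha, mul_one, mul_one]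
  · rw [hw'']
    congr 1
    simp [mul_inv_rev, inv_inv]

lemma fiber_psi_card {a b : F} {w : Fin m → F} (hab : ¬(a = 0 ∧ b = 0)) (hw : w ≠ 0) :
    ((Xset F m).filter (fun x => psi x = (a • w, b • w))).card = Fintype.card F - 1 := by
  have himg : (Xset F m).filter (fun x => psi x = (a • w, b • w))
      = Finset.univ.image (fun t : Fˣ =>
          ((((t : F) * a, (t : F) * b), (((t⁻¹ : Fˣ) : F)) • w) : (F × F) × (Fin m → F))) := by
    ext x
    simp only [Finset.mem_filter, Finset.mem_image, Finset.mem_univ, true_and, mem_Xset]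
    constructor
    · rintro ⟨⟨hx1, hx2⟩, hps⟩
      obtain ⟨⟨α, β⟩, w'⟩ := x
      simp only [psi, Prod.ext_iff] at hps
      obtain ⟨hpa, hpb⟩ := hps
      rcases not_and_or.mp hab with ha | hb
      · obtain ⟨t, ht1, ht2, ht3⟩ := fiber_aux hw ha hpa hpb
        exact ⟨t, by simp only [Prod.ext_iff]; exact ⟨⟨ht1, ht2⟩, ht3⟩⟩
      · obtain ⟨t, ht1, ht2, ht3⟩ := fiber_aux hw hb hpb hpa
        exact ⟨t, by simp only [Prod.ext_iff]; exact ⟨⟨ht2, ht1⟩, ht3⟩⟩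
    · rintro ⟨t, rfl⟩
      refine ⟨⟨?_, ?_⟩, ?_⟩
      · intro h
        rw [Prod.ext_iff] at h
        obtain ⟨h1, h2⟩ := h
        simp only [Prod.fst_zero, Prod.snd_zero, mul_eq_zero] at h1 h2
        exact hab ⟨h1.resolve_left t.ne_zero, h2.resolve_left t.ne_zero⟩
      · simp [smul_eq_zero, hw, Units.ne_zero]
      · simp only [psi, Prod.ext_iff]
        constructor <;>
        · rw [smul_smul]
          rw [mul_comm ((t:F) * _), ← mul_assoc]
          rw [show (((t⁻¹:Fˣ):F)) * ((t:F)) = 1 by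
            rw [← Units.val_mul, inv_mul_cancel, Units.val_one]]
          rw [one_mul]
    
  rw [himg, Finset.card_image_of_injective _ ?_, Finset.card_univ, Fintype.card_units]
  intro s t hst
  have h3 : (((s⁻¹:Fˣ):F)) • w = (((t⁻¹:Fˣ):F)) • w := congrArg Prod.snd hst
  have h5 : ((((s⁻¹:Fˣ):F)) - (((t⁻¹:Fˣ):F))) • w = 0 := by
    rw [sub_smul, h3, sub_self]
  have h6 : (((s⁻¹:Fˣ):F)) - (((t⁻¹:Fˣ):F)) = 0 := by
    rcases smul_eq_zero.mp h5 with h | h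
    · exact h
    · exact absurd h hw
  exact inv_injective (Units.ext (sub_eq_zero.mp h6))

section expect

variable {m n : ℕ} {Ω : Type} [Fintype Ω] (P : Ω → ℚ)
  (A : Ω → Matrix (Fin m) (Fin n) F)

/-- grouping by the value of U * A ω -/
lemma expect_push
    (h2good : ∀ U : Matrix (Fin 2) (Fin m) F, U.rank = 2 →
      ∀ B : Matrix (Fin 2) (Fin n) F,
        (∑ ω ∈ Finset.univ.filter (fun ω => U * A ω = B), P ω)
          = 1 / (Fintype.card F : ℚ) ^ (2 * n))
    {U : Matrix (Fin 2) (Fin m) F} (hU : U.rank = 2)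
    (g : Matrix (Fin 2) (Fin n) F → MvPolynomial (Orb F) ℚ) :
    (∑ ω, P ω • g (U * A ω))
      = ((Fintype.card F : ℚ) ^ (2 * n))⁻¹ • ∑ B, g B := by
  rw [← Finset.sum_fiberwise Finset.univ (fun ω => U * A ω) (fun ω => P ω • g (U * A ω))]
  rw [Finset.smul_sum]
  apply Finset.sum_congr rfl
  intro B _
  have : ∀ ω ∈ Finset.univ.filter (fun ω => U * A ω = B),
      P ω • g (U * A ω) = P ω • g B := by
    intro ω hω
    rw [(Finset.mem_filter.mp hω).2]
  rw [Finset.sum_congr rfl this, ← Finset.sum_smul, h2good U hU B, one_div]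

lemma expect_rank2
    (h2good : ∀ U : Matrix (Fin 2) (Fin m) F, U.rank = 2 →
      ∀ B : Matrix (Fin 2) (Fin n) F,
        (∑ ω ∈ Finset.univ.filter (fun ω => U * A ω = B), P ω)
          = 1 / (Fintype.card F : ℚ) ^ (2 * n))
    {u v : Fin m → F} (h : LinearIndependent F ![u, v]) :
    (∑ ω, P ω • wmon (Matrix.vecMul u (A ω)) (Matrix.vecMul v (A ω)))
      = ((Fintype.card F : ℚ) ^ (2 * n))⁻¹ •
          (X (orbOf (0:F) 0) + C ((Fintype.card F : ℚ) - 1) *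
            ∑ S ∈ Finset.univ.filter (fun S : Orb F => S ≠ orbOf (0:F) 0), X S) ^ n := by
  have hrow : ∀ M : Matrix (Fin m) (Fin n) F,
      Matrix.vecMul u M = ((Matrix.of ![u, v] : Matrix (Fin 2) (Fin m) F) * M) 0
        ∧ Matrix.vecMul v M = ((Matrix.of ![u, v] : Matrix (Fin 2) (Fin m) F) * M) 1 := by
    intro M
    constructor <;> · funext j; simp [Matrix.mul_apply, Matrix.vecMul, dotProduct]
  have step1 : (∑ ω, P ω • wmon (Matrix.vecMul u (A ω)) (Matrix.vecMul v (A ω)))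
      = ∑ ω, P ω • (fun B : Matrix (Fin 2) (Fin n) F => wmon (B 0) (B 1))
          ((Matrix.of ![u, v] : Matrix (Fin 2) (Fin m) F) * A ω) := by
    apply Finset.sum_congr rfl
    intro ω _
    rw [(hrow (A ω)).1, (hrow (A ω)).2]
  rw [step1, expect_push P A h2good (rank_of_pair h)
    (fun B : Matrix (Fin 2) (Fin n) F => wmon (B 0) (B 1))]
  congr 1
  have e1 : (∑ B : Matrix (Fin 2) (Fin n) F, wmon (B 0) (B 1))
      = ∑ p : (Fin n → F) × (Fin n → F), wmon p.1 p.2 :=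
    (Fintype.sum_equiv rowsEquiv _ _ (fun p => rfl)).symm
  rw [e1]
  have e2 : (∑ p : (Fin n → F) × (Fin n → F), wmon p.1 p.2)
      = ∑ g : Fin n → F × F, ∏ i, (X (orbOf (g i).1 (g i).2) : MvPolynomial (Orb F) ℚ) := by
    rw [Fintype.sum_equiv (Equiv.arrowProdEquivProdArrow (Fin n) (fun _ => F) (fun _ => F))
      _ (fun p => wmon p.1 p.2) (fun g => by
        show (∏ i, (X (orbOf (g i).1 (g i).2) : MvPolynomial (Orb F) ℚ))
          = wmon (fun i => (g i).1) (fun i => (g i).2)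
        rw [wmon_eq])]
  rw [e2, ← sum_pow_fun (fun p : F × F => (X (orbOf p.1 p.2) : MvPolynomial (Orb F) ℚ)) n,
    sum_X_orbOf]

lemma expect_marginal
    (h2good : ∀ U : Matrix (Fin 2) (Fin m) F, U.rank = 2 →
      ∀ B : Matrix (Fin 2) (Fin n) F,
        (∑ ω ∈ Finset.univ.filter (fun ω => U * A ω = B), P ω)
          = 1 / (Fintype.card F : ℚ) ^ (2 * n))
    (hm : 2 ≤ m) {w : Fin m → F} (hw : w ≠ 0)
    (G : (Fin n → F) → MvPolynomial (Orb F) ℚ) :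
    (∑ ω, P ω • G (Matrix.vecMul w (A ω)))
      = ((Fintype.card F : ℚ) ^ n)⁻¹ • ∑ c : Fin n → F, G c := by
  obtain ⟨u, hu⟩ := exists_indep_partner hm hw
  have hrow : ∀ M : Matrix (Fin m) (Fin n) F,
      Matrix.vecMul w M = ((Matrix.of ![u, w] : Matrix (Fin 2) (Fin m) F) * M) 1 := by
    intro M
    funext j; simp [Matrix.mul_apply, Matrix.vecMul, dotProduct]
  have step1 : (∑ ω, P ω • G (Matrix.vecMul w (A ω)))
      = ∑ ω, P ω • (fun B : Matrix (Fin 2) (Fin n) F => G (B 1))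
          ((Matrix.of ![u, w] : Matrix (Fin 2) (Fin m) F) * A ω) := by
    apply Finset.sum_congr rfl
    intro ω _
    rw [hrow (A ω)]
  rw [step1, expect_push P A h2good (rank_of_pair hu)
    (fun B : Matrix (Fin 2) (Fin n) F => G (B 1))]
  have e1 : (∑ B : Matrix (Fin 2) (Fin n) F, G (B 1))
      = ∑ p : (Fin n → F) × (Fin n → F), G p.2 :=
    (Fintype.sum_equiv rowsEquiv _ _ (fun p => rfl)).symm
  have e2 : (∑ p : (Fin n → F) × (Fin n → F), G p.2)
      = (Fintype.card F ^ n) • ∑ c : Fin n → F, G c := by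
    simp [Fintype.sum_prod_type, Finset.sum_const, Fintype.card_fun]
  rw [e1, e2, ← Nat.cast_smul_eq_nsmul ℚ, smul_smul]
  congr 1
  have hq : (0:ℚ) < (Fintype.card F : ℚ) := by exact_mod_cast Fintype.card_pos
  push_cast
  rw [two_mul, pow_add]
  field_simp

end expect
section expect2

variable {m n : ℕ} {Ω : Type} [Fintype Ω] (P : Ω → ℚ)
  (A : Ω → Matrix (Fin m) (Fin n) F)

lemma expect_line
    (h2good : ∀ U : Matrix (Fin 2) (Fin m) F, U.rank = 2 →
      ∀ B : Matrix (Fin 2) (Fin n) F,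
        (∑ ω ∈ Finset.univ.filter (fun ω => U * A ω = B), P ω)
          = 1 / (Fintype.card F : ℚ) ^ (2 * n))
    (hm : 2 ≤ m) {w : Fin m → F} (hw : w ≠ 0) (a b : F) :
    (∑ ω, P ω • wmon (Matrix.vecMul (a • w) (A ω)) (Matrix.vecMul (b • w) (A ω)))
      = ((Fintype.card F : ℚ) ^ n)⁻¹ •
          (X (orbOf (0:F) 0) + C ((Fintype.card F : ℚ) - 1) * X (orbOf a b)) ^ n := by
  have step1 : (∑ ω, P ω • wmon (Matrix.vecMul (a • w) (A ω)) (Matrix.vecMul (b • w) (A ω)))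
      = ∑ ω, P ω • (fun c : Fin n → F => wmon (a • c) (b • c)) (Matrix.vecMul w (A ω)) := by
    apply Finset.sum_congr rfl
    intro ω _
    rw [Matrix.smul_vecMul, Matrix.smul_vecMul]
  rw [step1, expect_marginal P A h2good hm hw (fun c : Fin n → F => wmon (a • c) (b • c))]
  congr 1
  have e1 : ∀ c : Fin n → F, wmon (a • c) (b • c)
      = ∏ i, (X (orbOf (c i * a) (c i * b)) : MvPolynomial (Orb F) ℚ) := by
    intro c
    rw [wmon_eq]
    apply Finset.prod_congr rfl
    intro i _
    rw [Pi.smul_apply, Pi.smul_apply, smul_eq_mul, smul_eq_mul, mul_comm a, mul_comm b]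
  rw [Finset.sum_congr rfl (fun c _ => e1 c),
    ← sum_pow_fun (fun t : F => (X (orbOf (t * a) (t * b)) : MvPolynomial (Orb F) ℚ)) n,
    sum_X_orbOf_line]

end expect2

section counting

variable {m n : ℕ}

lemma norm_W2 (M : Matrix (Fin m) (Fin n) F) :
    (1 / ((genCode M).card : ℚ) ^ 2) • W2 (genCode M) (genCode M)
      = ((Fintype.card F : ℚ) ^ (2 * m))⁻¹ •
          ∑ p : (Fin m → F) × (Fin m → F),
            wmon (Matrix.vecMul p.1 M) (Matrix.vecMul p.2 M) := by
  set k := (Finset.univ.filter fun u : Fin m → F => Matrix.vecMul u M = 0).card with hk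
  have hsum : (∑ p : (Fin m → F) × (Fin m → F),
      wmon (Matrix.vecMul p.1 M) (Matrix.vecMul p.2 M))
      = (k * k) • W2 (genCode M) (genCode M) := by
    rw [Fintype.sum_prod_type]
    have inner : ∀ u : Fin m → F,
        (∑ v : Fin m → F, wmon (Matrix.vecMul u M) (Matrix.vecMul v M))
          = k • ∑ d ∈ genCode M, wmon (Matrix.vecMul u M) d :=
      fun u => sum_genCode M (wmon (Matrix.vecMul u M))
    rw [Finset.sum_congr rfl (fun u _ => inner u), ← Finset.smul_sum]
    rw [sum_genCode M (fun c => ∑ d ∈ genCode M, wmon c d)]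
    rw [smul_smul, mul_comm]
    rfl
  rw [hsum, ← Nat.cast_smul_eq_nsmul ℚ, smul_smul]
  congr 1
  have hck : ((genCode M).card : ℚ) * (k : ℚ) = (Fintype.card F : ℚ) ^ m := by
    exact_mod_cast congrArg (Nat.cast : ℕ → ℚ) (genCode_card_mul M)
  have hc0 : ((genCode M).card : ℚ) ≠ 0 := Nat.cast_ne_zero.mpr (genCode_card_ne M)
  have hk0 : ((k : ℚ)) ≠ 0 := Nat.cast_ne_zero.mpr (genCode_ker_card_ne M)
  have hq : ((Fintype.card F : ℚ)) ^ (2 * m) = (((genCode M).card : ℚ) * k) ^ 2 := by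
    rw [hck, ← pow_mul, mul_comm m 2]
  rw [hq]
  push_cast
  field_simp

lemma sum_split_pairs {γ : Type} [AddCommMonoid γ]
    (f : ((Fin m → F) × (Fin m → F)) → γ) :
    (∑ p : (Fin m → F) × (Fin m → F), f p)
      = f 0
        + (∑ p ∈ Finset.univ.filter (fun p : (Fin m → F) × (Fin m → F) =>
            ¬ p = 0 ∧ ¬ LinearIndependent F ![p.1, p.2]), f p)
        + ∑ p ∈ Finset.univ.filter (fun p : (Fin m → F) × (Fin m → F) =>
            LinearIndependent F ![p.1, p.2]), f p := by
  rw [← Finset.sum_filter_add_sum_filter_not Finset.univ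
    (fun p : (Fin m → F) × (Fin m → F) => p = 0) f]
  have h0 : (Finset.univ.filter (fun p : (Fin m → F) × (Fin m → F) => p = 0)) = {0} := by
    ext p; simp
  rw [h0, Finset.sum_singleton]
  rw [← Finset.sum_filter_add_sum_filter_not
    (Finset.univ.filter (fun p : (Fin m → F) × (Fin m → F) => ¬ p = 0))
    (fun p => LinearIndependent F ![p.1, p.2]) f]
  rw [Finset.filter_filter, Finset.filter_filter]
  have h1 : (Finset.univ.filter (fun p : (Fin m → F) × (Fin m → F) =>
      ¬ p = 0 ∧ LinearIndependent F ![p.1, p.2]))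
      = Finset.univ.filter (fun p : (Fin m → F) × (Fin m → F) =>
          LinearIndependent F ![p.1, p.2]) := by
    ext p
    simp only [Finset.mem_filter, Finset.mem_univ, true_and, and_iff_right_iff_imp]
    intro h hp
    exact ne_zero_of_indep h ⟨congrArg Prod.fst hp, congrArg Prod.snd hp⟩
  rw [h1, add_assoc, add_comm (∑ p ∈ Finset.univ.filter (fun p : (Fin m → F) × (Fin m → F) =>
          LinearIndependent F ![p.1, p.2]), f p), ← add_assoc]

lemma card_filter_ne_zero {α : Type} [Fintype α] [DecidableEq α] [Zero α] :
    (Finset.univ.filter (fun x : α => x ≠ 0)).card = Fintype.card α - 1 := by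
  rw [Finset.filter_ne', Finset.card_erase_of_mem (Finset.mem_univ _), Finset.card_univ]

lemma card_Xset :
    (Xset F m).card = (Fintype.card F ^ 2 - 1) * (Fintype.card F ^ m - 1) := by
  rw [Xset, Finset.card_product]
  rw [show (Finset.univ.filter fun p : F × F => p ≠ 0).card = Fintype.card (F × F) - 1
    from card_filter_ne_zero]
  rw [show (Finset.univ.filter fun w : Fin m → F => w ≠ 0).card
    = Fintype.card (Fin m → F) - 1 from card_filter_ne_zero]
  rw [Fintype.card_prod, Fintype.card_fun, Fintype.card_fin, sq]

lemma card_T_mul :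
    (Finset.univ.filter (fun p : (Fin m → F) × (Fin m → F) =>
        ¬ p = 0 ∧ ¬ LinearIndependent F ![p.1, p.2])).card * (Fintype.card F - 1)
      = (Fintype.card F ^ 2 - 1) * (Fintype.card F ^ m - 1) := by
  rw [← card_Xset]
  rw [Finset.card_eq_sum_card_fiberwise (s := Xset F m) (f := psi)
    (t := Finset.univ.filter (fun p : (Fin m → F) × (Fin m → F) =>
        ¬ p = 0 ∧ ¬ LinearIndependent F ![p.1, p.2]))
    (fun x hx => by rw [← image_psi]; exact Finset.mem_image_of_mem psi hx)]
  rw [eq_comm]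
  have : ∀ p ∈ Finset.univ.filter (fun p : (Fin m → F) × (Fin m → F) =>
      ¬ p = 0 ∧ ¬ LinearIndependent F ![p.1, p.2]),
      ((Xset F m).filter (fun x => psi x = p)).card = Fintype.card F - 1 := by
    intro p hp
    rw [← image_psi] at hp
    obtain ⟨x, hx, rfl⟩ := Finset.mem_image.mp hp
    obtain ⟨hx1, hx2⟩ := mem_Xset.mp hx
    have hab : ¬(x.1.1 = 0 ∧ x.1.2 = 0) := by
      intro h
      exact hx1 (Prod.ext_iff.mpr h)
    exact fiber_psi_card hab hx2
  rw [Finset.sum_congr rfl this, Finset.sum_const, smul_eq_mul]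

end counting

lemma sum_orb_nonzero {β : Type} [AddCommMonoid β] (G : Orb F → β) :
    (∑ p ∈ Finset.univ.filter (fun p : F × F => p ≠ 0), G (orbOf p.1 p.2))
      = ∑ S ∈ Finset.univ.filter (fun S : Orb F => S ≠ orbOf (0:F) 0),
          (Fintype.card F - 1) • G S := by
  rw [Finset.sum_comp G (fun p : F × F => orbOf p.1 p.2)]
  have himg : (Finset.univ.filter (fun p : F × F => p ≠ 0)).image
      (fun p : F × F => orbOf p.1 p.2)
      = Finset.univ.filter (fun S : Orb F => S ≠ orbOf (0:F) 0) := by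
    ext S
    simp only [Finset.mem_image, Finset.mem_filter, Finset.mem_univ, true_and]
    constructor
    · rintro ⟨p, hp, rfl⟩
      intro h
      obtain ⟨h1, h2⟩ := (orbOf_eq_zero_iff p.1 p.2).mp h
      exact hp (Prod.ext_iff.mpr ⟨h1, h2⟩)
    · intro hS
      obtain ⟨p, rfl⟩ := orbOf_surj S
      refine ⟨p, ?_, rfl⟩
      intro h
      exact hS ((orbOf_eq_zero_iff p.1 p.2).mpr ⟨congrArg Prod.fst h, congrArg Prod.snd h⟩)
  rw [himg]
  apply Finset.sum_congr rfl
  intro S hS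
  have hS' := (Finset.mem_filter.mp hS).2
  obtain ⟨⟨a, b⟩, rfl⟩ := orbOf_surj S
  have hab : ¬(a = 0 ∧ b = 0) := fun h => hS' ((orbOf_eq_zero_iff a b).mpr h)
  congr 1
  have : (Finset.univ.filter (fun p : F × F => p ≠ 0)).filter
      (fun p : F × F => orbOf p.1 p.2 = orbOf a b)
      = Finset.univ.filter (fun p : F × F => orbOf p.1 p.2 = orbOf a b) := by
    rw [Finset.filter_filter]
    apply Finset.filter_congr
    intro p _
    simp only [ne_eq, and_iff_right_iff_imp]
    intro h hp0
    apply hab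
    apply (orbOf_eq_zero_iff a b).mp
    rw [← h, hp0]
    rfl
  rw [this, card_fiber_orbOf hab]


end Stmt12Aux

/-- Average normalized second-order weight enumerator of the random linear code
generated by a 2-good random generator matrix. -/
theorem stmt_12 {F : Type} [Field F] [Fintype F] {m n : ℕ}
    (hm : 2 ≤ m) (hmn : m < n)
    {Ω : Type} [Fintype Ω] (P : Ω → ℚ) (hP0 : ∀ ω, 0 ≤ P ω) (hP1 : (∑ ω, P ω) = 1)
    (A : Ω → Matrix (Fin m) (Fin n) F)
    (h2good : ∀ U : Matrix (Fin 2) (Fin m) F, U.rank = 2 →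
      ∀ B : Matrix (Fin 2) (Fin n) F,
        (∑ ω ∈ Finset.univ.filter (fun ω => U * A ω = B), P ω)
          = 1 / (Fintype.card F : ℚ) ^ (2 * n)) :
    (∑ ω, (P ω / ((genCode (A ω)).card : ℚ) ^ 2) • W2 (genCode (A ω)) (genCode (A ω)))
      = C (1 / (Fintype.card F : ℚ) ^ (2 * m)) * X (orbOf (0 : F) 0) ^ n
        + C (((Fintype.card F : ℚ) ^ m - 1) / (Fintype.card F : ℚ) ^ (2 * m))
          * ∑ S ∈ Finset.univ.filter (fun S : Orb F => S ≠ orbOf (0 : F) 0),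
              (C (1 / (Fintype.card F : ℚ)) * X (orbOf (0 : F) 0)
                + C (((Fintype.card F : ℚ) - 1) / (Fintype.card F : ℚ)) * X S) ^ n
        + C (((Fintype.card F : ℚ) ^ m - 1) * ((Fintype.card F : ℚ) ^ m - (Fintype.card F : ℚ))
              / (Fintype.card F : ℚ) ^ (2 * m))
          * (C (1 / (Fintype.card F : ℚ) ^ 2) * X (orbOf (0 : F) 0)
              + C (((Fintype.card F : ℚ) - 1) / (Fintype.card F : ℚ) ^ 2)
                * ∑ S ∈ Finset.univ.filter (fun S : Orb F => S ≠ orbOf (0 : F) 0), X S) ^ n := by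
  classical
  have hq0 : (Fintype.card F : ℚ) ≠ 0 := by
    have : 0 < Fintype.card F := Fintype.card_pos
    positivity
  have hq1 : (Fintype.card F : ℚ) - 1 ≠ 0 := by
    have h2 : (1:ℚ) < (Fintype.card F : ℚ) := by exact_mod_cast Fintype.one_lt_card
    intro h
    linarith
  have hcastm : ((Fintype.card F ^ m - 1 : ℕ) : ℚ) = (Fintype.card F : ℚ) ^ m - 1 := by
    rw [Nat.cast_sub (Nat.one_le_pow _ _ Fintype.card_pos)]
    push_cast
    ring
  -- Step 1 : normalize and swap the sums
  have step1 : (∑ ω, (P ω / ((genCode (A ω)).card : ℚ) ^ 2) • W2 (genCode (A ω)) (genCode (A ω)))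
      = ((Fintype.card F : ℚ) ^ (2 * m))⁻¹ •
          ∑ p : (Fin m → F) × (Fin m → F),
            ∑ ω, P ω • Stmt12Aux.wmon (Matrix.vecMul p.1 (A ω)) (Matrix.vecMul p.2 (A ω)) := by
    have e1 : ∀ ω : Ω, (P ω / ((genCode (A ω)).card : ℚ) ^ 2) • W2 (genCode (A ω)) (genCode (A ω))
        = ((Fintype.card F : ℚ) ^ (2 * m))⁻¹ • ∑ p : (Fin m → F) × (Fin m → F),
            P ω • Stmt12Aux.wmon (Matrix.vecMul p.1 (A ω)) (Matrix.vecMul p.2 (A ω)) := by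
      intro ω
      rw [div_eq_mul_one_div, mul_smul, Stmt12Aux.norm_W2, smul_comm, Finset.smul_sum]
    rw [Finset.sum_congr rfl (fun ω _ => e1 ω), ← Finset.smul_sum, Finset.sum_comm]
  rw [step1]
  -- split the sum over pairs
  have split := Stmt12Aux.sum_split_pairs (F := F) (m := m)
    (fun p : (Fin m → F) × (Fin m → F) =>
      ∑ ω, P ω • Stmt12Aux.wmon (Matrix.vecMul p.1 (A ω)) (Matrix.vecMul p.2 (A ω)))
  rw [split]
  -- the zero term
  have hzero : (∑ ω, P ω • Stmt12Aux.wmon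
        (Matrix.vecMul (0 : (Fin m → F) × (Fin m → F)).1 (A ω))
        (Matrix.vecMul (0 : (Fin m → F) × (Fin m → F)).2 (A ω)))
      = (X (orbOf (0:F) 0) : MvPolynomial (Orb F) ℚ) ^ n := by
    have e : ∀ ω : Ω, Stmt12Aux.wmon
        (Matrix.vecMul (0 : (Fin m → F) × (Fin m → F)).1 (A ω))
        (Matrix.vecMul (0 : (Fin m → F) × (Fin m → F)).2 (A ω))
        = (X (orbOf (0:F) 0) : MvPolynomial (Orb F) ℚ) ^ n := by
      intro ω
      rw [show ((0 : (Fin m → F) × (Fin m → F)).1) = 0 from rfl,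
        show ((0 : (Fin m → F) × (Fin m → F)).2) = 0 from rfl,
        Matrix.zero_vecMul, Stmt12Aux.wmon_zero, Fintype.card_fin]
    have e2 : ∀ ω ∈ (Finset.univ : Finset Ω),
        P ω • Stmt12Aux.wmon (Matrix.vecMul (0 : (Fin m → F) × (Fin m → F)).1 (A ω))
          (Matrix.vecMul (0 : (Fin m → F) × (Fin m → F)).2 (A ω))
        = P ω • (X (orbOf (0:F) 0) : MvPolynomial (Orb F) ℚ) ^ n := by
      intro ω _
      rw [e ω]
    rw [Finset.sum_congr rfl e2, ← Finset.sum_smul, hP1, one_smul]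
  -- counting
  have hcount1 : (Fintype.card F : ℚ) ^ m * (Fintype.card F : ℚ) ^ m
      = 1 + ((Finset.univ.filter (fun p : (Fin m → F) × (Fin m → F) =>
            ¬ p = 0 ∧ ¬ LinearIndependent F ![p.1, p.2])).card : ℚ)
        + ((Finset.univ.filter (fun p : (Fin m → F) × (Fin m → F) =>
            LinearIndependent F ![p.1, p.2])).card : ℚ) := by
    have h := Stmt12Aux.sum_split_pairs (F := F) (m := m) (fun _ => (1:ℚ))
    simp only [Finset.sum_const, nsmul_eq_mul, mul_one, Finset.card_univ] at h
    rw [Fintype.card_prod, Fintype.card_fun, Fintype.card_fin] at h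
    push_cast at h
    linarith [h]
  have hcount2 : ((Finset.univ.filter (fun p : (Fin m → F) × (Fin m → F) =>
        ¬ p = 0 ∧ ¬ LinearIndependent F ![p.1, p.2])).card : ℚ)
        * ((Fintype.card F : ℚ) - 1)
      = ((Fintype.card F : ℚ) ^ 2 - 1) * ((Fintype.card F : ℚ) ^ m - 1) := by
    have h := congrArg (Nat.cast : ℕ → ℚ) (Stmt12Aux.card_T_mul (F := F) (m := m))
    rw [Nat.cast_mul, Nat.cast_mul, Nat.cast_sub Fintype.card_pos,
      Nat.cast_sub (Nat.one_le_pow _ _ Fintype.card_pos),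
      Nat.cast_sub (Nat.one_le_pow _ _ Fintype.card_pos)] at h
    push_cast at h
    linarith [h]
  have hcardT : ((Finset.univ.filter (fun p : (Fin m → F) × (Fin m → F) =>
        ¬ p = 0 ∧ ¬ LinearIndependent F ![p.1, p.2])).card : ℚ)
      = ((Fintype.card F : ℚ) + 1) * ((Fintype.card F : ℚ) ^ m - 1) := by
    apply mul_right_cancel₀ hq1
    linear_combination hcount2
  have hcardR2 : ((Finset.univ.filter (fun p : (Fin m → F) × (Fin m → F) =>
        LinearIndependent F ![p.1, p.2])).card : ℚ)
      = ((Fintype.card F : ℚ) ^ m - 1) * ((Fintype.card F : ℚ) ^ m - (Fintype.card F : ℚ)) := by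
    linear_combination - hcount1 - hcardT
  -- the rank-2 term
  have hR2 : (∑ p ∈ Finset.univ.filter (fun p : (Fin m → F) × (Fin m → F) =>
        LinearIndependent F ![p.1, p.2]),
        ∑ ω, P ω • Stmt12Aux.wmon (Matrix.vecMul p.1 (A ω)) (Matrix.vecMul p.2 (A ω)))
      = ((((Fintype.card F : ℚ) ^ m - 1) * ((Fintype.card F : ℚ) ^ m - (Fintype.card F : ℚ)))
            * ((Fintype.card F : ℚ) ^ (2 * n))⁻¹) •
          (X (orbOf (0:F) 0) + C ((Fintype.card F : ℚ) - 1) *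
            ∑ S ∈ Finset.univ.filter (fun S : Orb F => S ≠ orbOf (0:F) 0), X S) ^ n := by
    rw [Finset.sum_congr rfl (fun p hp =>
      Stmt12Aux.expect_rank2 P A h2good (Finset.mem_filter.mp hp).2)]
    rw [Finset.sum_const, ← Nat.cast_smul_eq_nsmul ℚ, smul_smul, hcardR2]
  -- the rank-1 term
  have hXsum : (∑ x ∈ Stmt12Aux.Xset F m,
        (fun p : (Fin m → F) × (Fin m → F) =>
          ∑ ω, P ω • Stmt12Aux.wmon (Matrix.vecMul p.1 (A ω)) (Matrix.vecMul p.2 (A ω)))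
          (Stmt12Aux.psi x))
      = (Fintype.card F - 1 : ℕ) •
          ∑ p ∈ Finset.univ.filter (fun p : (Fin m → F) × (Fin m → F) =>
            ¬ p = 0 ∧ ¬ LinearIndependent F ![p.1, p.2]),
            ∑ ω, P ω • Stmt12Aux.wmon (Matrix.vecMul p.1 (A ω)) (Matrix.vecMul p.2 (A ω)) := by
    rw [Finset.sum_comp (fun p : (Fin m → F) × (Fin m → F) =>
        ∑ ω, P ω • Stmt12Aux.wmon (Matrix.vecMul p.1 (A ω)) (Matrix.vecMul p.2 (A ω)))
      Stmt12Aux.psi, Stmt12Aux.image_psi, Finset.smul_sum]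
    apply Finset.sum_congr rfl
    intro p hp
    rw [← Stmt12Aux.image_psi] at hp
    obtain ⟨x, hx, rfl⟩ := Finset.mem_image.mp hp
    obtain ⟨hx1, hx2⟩ := Stmt12Aux.mem_Xset.mp hx
    have hab : ¬(x.1.1 = 0 ∧ x.1.2 = 0) := fun h => hx1 (Prod.ext_iff.mpr h)
    rw [show (Stmt12Aux.psi x) = (x.1.1 • x.2, x.1.2 • x.2) from rfl,
      Stmt12Aux.fiber_psi_card hab hx2]
  have hXeval : (∑ x ∈ Stmt12Aux.Xset F m,
        (fun p : (Fin m → F) × (Fin m → F) =>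
          ∑ ω, P ω • Stmt12Aux.wmon (Matrix.vecMul p.1 (A ω)) (Matrix.vecMul p.2 (A ω)))
          (Stmt12Aux.psi x))
      = (Fintype.card F ^ m - 1 : ℕ) •
          ∑ ab ∈ Finset.univ.filter (fun p : F × F => p ≠ 0),
            (((Fintype.card F : ℚ) ^ n)⁻¹ •
              (X (orbOf (0:F) 0) + C ((Fintype.card F : ℚ) - 1) * X (orbOf ab.1 ab.2)) ^ n) := by
    rw [show Stmt12Aux.Xset F m
        = (Finset.univ.filter fun p : F × F => p ≠ 0) ×ˢ
            (Finset.univ.filter fun w : Fin m → F => w ≠ 0) from rfl,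
      Finset.sum_product]
    have inner : ∀ ab ∈ (Finset.univ.filter fun p : F × F => p ≠ 0),
        (∑ w ∈ Finset.univ.filter (fun w : Fin m → F => w ≠ 0),
          ∑ ω, P ω • Stmt12Aux.wmon (Matrix.vecMul (Stmt12Aux.psi (ab, w)).1 (A ω))
            (Matrix.vecMul (Stmt12Aux.psi (ab, w)).2 (A ω)))
        = (Fintype.card F ^ m - 1 : ℕ) •
            (((Fintype.card F : ℚ) ^ n)⁻¹ •
              (X (orbOf (0:F) 0) + C ((Fintype.card F : ℚ) - 1) * X (orbOf ab.1 ab.2)) ^ n) := by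
      intro ab _
      have e : ∀ w ∈ Finset.univ.filter (fun w : Fin m → F => w ≠ 0),
          (∑ ω, P ω • Stmt12Aux.wmon (Matrix.vecMul (Stmt12Aux.psi (ab, w)).1 (A ω))
            (Matrix.vecMul (Stmt12Aux.psi (ab, w)).2 (A ω)))
          = ((Fintype.card F : ℚ) ^ n)⁻¹ •
              (X (orbOf (0:F) 0) + C ((Fintype.card F : ℚ) - 1) * X (orbOf ab.1 ab.2)) ^ n := by
        intro w hw
        exact Stmt12Aux.expect_line P A h2good hm (Finset.mem_filter.mp hw).2 ab.1 ab.2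
      rw [Finset.sum_congr rfl e, Finset.sum_const]
      congr 1
      rw [Stmt12Aux.card_filter_ne_zero, Fintype.card_fun, Fintype.card_fin]
    rw [Finset.sum_congr rfl inner, ← Finset.smul_sum]
  have hXgroup : (∑ ab ∈ Finset.univ.filter (fun p : F × F => p ≠ 0),
        (((Fintype.card F : ℚ) ^ n)⁻¹ •
          (X (orbOf (0:F) 0) + C ((Fintype.card F : ℚ) - 1) * X (orbOf ab.1 ab.2)) ^ n))
      = ∑ S ∈ Finset.univ.filter (fun S : Orb F => S ≠ orbOf (0:F) 0),
          (Fintype.card F - 1) •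
            (((Fintype.card F : ℚ) ^ n)⁻¹ •
              (X (orbOf (0:F) 0) + C ((Fintype.card F : ℚ) - 1) * X S) ^ n) :=
    Stmt12Aux.sum_orb_nonzero (fun S => ((Fintype.card F : ℚ) ^ n)⁻¹ •
      (X (orbOf (0:F) 0) + C ((Fintype.card F : ℚ) - 1) * X S) ^ n)
  have hT : (∑ p ∈ Finset.univ.filter (fun p : (Fin m → F) × (Fin m → F) =>
        ¬ p = 0 ∧ ¬ LinearIndependent F ![p.1, p.2]),
        ∑ ω, P ω • Stmt12Aux.wmon (Matrix.vecMul p.1 (A ω)) (Matrix.vecMul p.2 (A ω)))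
      = ((((Fintype.card F : ℚ) ^ m - 1) * ((Fintype.card F : ℚ) ^ n)⁻¹)) •
          ∑ S ∈ Finset.univ.filter (fun S : Orb F => S ≠ orbOf (0:F) 0),
            (X (orbOf (0:F) 0) + C ((Fintype.card F : ℚ) - 1) * X S) ^ n := by
    have key := hXsum.symm.trans hXeval
    rw [← Nat.cast_smul_eq_nsmul ℚ, ← Nat.cast_smul_eq_nsmul ℚ,
      Stmt12Aux.cast_card_sub_one, hcastm] at key
    have key2 : ((Fintype.card F : ℚ) - 1) •
        (∑ p ∈ Finset.univ.filter (fun p : (Fin m → F) × (Fin m → F) =>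
          ¬ p = 0 ∧ ¬ LinearIndependent F ![p.1, p.2]),
          ∑ ω, P ω • Stmt12Aux.wmon (Matrix.vecMul p.1 (A ω)) (Matrix.vecMul p.2 (A ω)))
        = ((Fintype.card F : ℚ) - 1) •
            ((((Fintype.card F : ℚ) ^ m - 1) * ((Fintype.card F : ℚ) ^ n)⁻¹)) •
            ∑ S ∈ Finset.univ.filter (fun S : Orb F => S ≠ orbOf (0:F) 0),
              (X (orbOf (0:F) 0) + C ((Fintype.card F : ℚ) - 1) * X S) ^ n := by
      have conv1 : ∀ S ∈ Finset.univ.filter (fun S : Orb F => S ≠ orbOf (0:F) 0),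
          (Fintype.card F - 1 : ℕ) • (((Fintype.card F : ℚ) ^ n)⁻¹ •
            (X (orbOf (0:F) 0) + C ((Fintype.card F : ℚ) - 1) * X S) ^ n)
          = (((Fintype.card F : ℚ) - 1) * ((Fintype.card F : ℚ) ^ n)⁻¹) •
            (X (orbOf (0:F) 0) + C ((Fintype.card F : ℚ) - 1) * X S) ^ n := by
        intro S _
        rw [← Nat.cast_smul_eq_nsmul ℚ, Stmt12Aux.cast_card_sub_one, smul_smul]
      rw [key, hXgroup, Finset.sum_congr rfl conv1, ← Finset.smul_sum, smul_smul, smul_smul]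
      congr 1
      ring
    calc (∑ p ∈ Finset.univ.filter (fun p : (Fin m → F) × (Fin m → F) =>
          ¬ p = 0 ∧ ¬ LinearIndependent F ![p.1, p.2]),
          ∑ ω, P ω • Stmt12Aux.wmon (Matrix.vecMul p.1 (A ω)) (Matrix.vecMul p.2 (A ω)))
        = ((Fintype.card F : ℚ) - 1)⁻¹ • ((Fintype.card F : ℚ) - 1) •
            (∑ p ∈ Finset.univ.filter (fun p : (Fin m → F) × (Fin m → F) =>
              ¬ p = 0 ∧ ¬ LinearIndependent F ![p.1, p.2]),
              ∑ ω, P ω • Stmt12Aux.wmon (Matrix.vecMul p.1 (A ω)) (Matrix.vecMul p.2 (A ω))) := by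
          rw [inv_smul_smul₀ hq1]
      _ = _ := by
          rw [key2, inv_smul_smul₀ hq1]
  rw [hzero, hT, hR2]
  -- final algebraic identification
  rw [smul_add, smul_add, smul_smul, smul_smul]
  have E2poly : ∀ S : Orb F,
      (C (1 / (Fintype.card F : ℚ)) * X (orbOf (0:F) 0)
        + C (((Fintype.card F : ℚ) - 1) / (Fintype.card F : ℚ)) * X S
          : MvPolynomial (Orb F) ℚ)
      = ((Fintype.card F : ℚ))⁻¹ •
          (X (orbOf (0:F) 0) + C ((Fintype.card F : ℚ) - 1) * X S) := by
    intro S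
    rw [smul_add, MvPolynomial.smul_eq_C_mul, MvPolynomial.smul_eq_C_mul, one_div,
      ← mul_assoc, ← MvPolynomial.C_mul]
    congr 2
    field_simp
  have E3poly :
      (C (1 / (Fintype.card F : ℚ) ^ 2) * X (orbOf (0:F) 0)
        + C (((Fintype.card F : ℚ) - 1) / (Fintype.card F : ℚ) ^ 2) *
            ∑ S ∈ Finset.univ.filter (fun S : Orb F => S ≠ orbOf (0:F) 0), X S
          : MvPolynomial (Orb F) ℚ)
      = (((Fintype.card F : ℚ)) ^ 2)⁻¹ •
          (X (orbOf (0:F) 0) + C ((Fintype.card F : ℚ) - 1) *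
            ∑ S ∈ Finset.univ.filter (fun S : Orb F => S ≠ orbOf (0:F) 0), X S) := by
    rw [smul_add, MvPolynomial.smul_eq_C_mul, MvPolynomial.smul_eq_C_mul, one_div,
      ← mul_assoc, ← MvPolynomial.C_mul]
    congr 2
    field_simp
  congr 1
  congr 1
  · -- first term
    rw [MvPolynomial.smul_eq_C_mul, one_div]
  · -- second term
    have efun : ∀ S ∈ Finset.univ.filter (fun S : Orb F => S ≠ orbOf (0:F) 0),
        (C (1 / (Fintype.card F : ℚ)) * X (orbOf (0:F) 0)
          + C (((Fintype.card F : ℚ) - 1) / (Fintype.card F : ℚ)) * X S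
            : MvPolynomial (Orb F) ℚ) ^ n
        = ((Fintype.card F : ℚ))⁻¹ ^ n •
            (X (orbOf (0:F) 0) + C ((Fintype.card F : ℚ) - 1) * X S) ^ n := by
      intro S _
      rw [E2poly S, smul_pow]
    have e2sum : (∑ S ∈ Finset.univ.filter (fun S : Orb F => S ≠ orbOf (0:F) 0),
        (C (1 / (Fintype.card F : ℚ)) * X (orbOf (0:F) 0)
          + C (((Fintype.card F : ℚ) - 1) / (Fintype.card F : ℚ)) * X S
            : MvPolynomial (Orb F) ℚ) ^ n)
        = ((Fintype.card F : ℚ))⁻¹ ^ n •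
            ∑ S ∈ Finset.univ.filter (fun S : Orb F => S ≠ orbOf (0:F) 0),
              (X (orbOf (0:F) 0) + C ((Fintype.card F : ℚ) - 1) * X S) ^ n := by
      rw [Finset.sum_congr rfl efun, ← Finset.smul_sum]
    conv_rhs => rw [e2sum, ← MvPolynomial.smul_eq_C_mul, smul_smul]
    congr 1
    rw [inv_pow]
    rw [show 2 * m = m + m from two_mul m, pow_add]
    field_simp
  · -- third term
    conv_rhs => rw [E3poly, smul_pow, ← MvPolynomial.smul_eq_C_mul, smul_smul]
    congr 1
    rw [inv_pow, ← pow_mul]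
    rw [show 2 * m = m + m from two_mul m, pow_add]
    field_simp
end
end

section
/- Let χ: F_q → ℂ^* be the canonical additive character χ(v) = exp(2πi·Tr(v)/p), where q = p^r and Tr is the field trace to F_p. For any u, v ∈ F_q^n, Σ_{u', v' ∈ F_q^n} χ(u·u' + v·v') · Π_{S∈S} x_S^{sw(u',v')_S} = Π_{T∈S} ( Σ_{S∈S} x_S K_{S,T} )^{sw(u,v)_T}, where K_{S,T} = |S| if T ⊆ S^⊥ and K_{S,T} = −1 otherwise. -/
open scoped Classical
open Finset MvPolynomial

noncomputable section

variable {F : Type} [Field F] [Fintype F]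

/-- The MacWilliams-type matrix `K` (with complex entries). -/
def KmatC (S T : Orb F) : ℂ :=
  if ∀ w ∈ orbSet T, ∀ s ∈ orbSet S, s.1 * w.1 + s.2 * w.2 = 0
  then ((orbSet S).ncard : ℂ) else -1

theorem orbOf_eq_iff (x y a b : F) :
    orbOf x y = orbOf a b ↔ ∃ g : Fˣ, ((g : F) * a, (g : F) * b) = (x, y) := by
  constructor
  · intro h
    have h2 : (x, y) ∈ MulAction.orbit Fˣ (a, b) := Quotient.exact h
    rw [MulAction.mem_orbit_iff] at h2
    obtain ⟨g, hg⟩ := h2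
    exact ⟨g, by simpa [Units.smul_def, Prod.smul_def, smul_eq_mul] using hg⟩
  · rintro ⟨g, hg⟩
    apply Quotient.sound
    show (x, y) ∈ MulAction.orbit Fˣ (a, b)
    rw [MulAction.mem_orbit_iff]
    exact ⟨g, by simpa [Units.smul_def, Prod.smul_def, smul_eq_mul] using hg⟩

theorem orbSet_eq_coe (S : Orb F) :
    orbSet S = ↑(Finset.univ.filter (fun w : F × F => orbOf w.1 w.2 = S)) := by
  ext w; simp [orbSet]

theorem orbOf_out (S : Orb F) : orbOf (Quotient.out S).1 (Quotient.out S).2 = S := by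
  rw [orbOf]; simpa using Quotient.out_eq S

theorem orb_char_sum (χ : F → ℂ)
    (h0 : χ 0 = 1) (hs : ∀ d : F, d ≠ 0 → ∑ x : F, χ (x * d) = 0)
    (c₁ c₂ : F) (S : Orb F) :
    ∑ w ∈ Finset.univ.filter (fun w : F × F => orbOf w.1 w.2 = S), χ (c₁ * w.1 + c₂ * w.2)
      = KmatC S (orbOf c₁ c₂) := by
  set z := Quotient.out S with hzdef
  have hz : orbOf z.1 z.2 = S := orbOf_out S
  have hcard : ((orbSet S).ncard : ℂ)
      = ((Finset.univ.filter (fun w : F × F => orbOf w.1 w.2 = S)).card : ℂ) := by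
    rw [orbSet_eq_coe, Set.ncard_coe_finset]
  by_cases hz0 : z = ((0 : F), (0 : F))
  · have hset : Finset.univ.filter (fun w : F × F => orbOf w.1 w.2 = S)
        = {((0 : F), (0 : F))} := by
      ext w
      simp only [Finset.mem_filter, Finset.mem_univ, true_and, Finset.mem_singleton]
      rw [← hz, hz0]
      simp only [orbOf_eq_iff]
      constructor
      · rintro ⟨g, hg⟩
        have := hg.symm
        rw [Prod.ext_iff] at this
        simp only [mul_zero] at this
        exact Prod.ext this.1 this.2
      · rintro rfl; exact ⟨1, by simp⟩
    have hcond : ∀ w ∈ orbSet (orbOf c₁ c₂), ∀ s ∈ orbSet S, s.1 * w.1 + s.2 * w.2 = 0 := by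
      intro w _ s hsw
      have hsw' : orbOf s.1 s.2 = S := hsw
      rw [← hz, hz0] at hsw'
      obtain ⟨g, hg⟩ := (orbOf_eq_iff s.1 s.2 0 0).1 hsw'
      rw [Prod.ext_iff] at hg
      simp only [mul_zero] at hg
      rw [← hg.1, ← hg.2]
      ring
    rw [hset, KmatC, if_pos hcond, hcard, hset]
    simp [h0]
  · set φ : Fˣ → F × F := fun g => ((g : F) * z.1, (g : F) * z.2) with hφ
    have hinj : Function.Injective φ := by
      intro g g' h
      simp only [hφ, Prod.mk.injEq] at h
      have hz1 : z.1 ≠ 0 ∨ z.2 ≠ 0 := by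
        by_contra hcon; push_neg at hcon; exact hz0 (Prod.ext hcon.1 hcon.2)
      apply Units.ext
      rcases hz1 with h1 | h1
      · exact mul_right_cancel₀ h1 h.1
      · exact mul_right_cancel₀ h1 h.2
    have hknown : Finset.univ.filter (fun w : F × F => orbOf w.1 w.2 = S)
        = Finset.univ.image φ := by
      ext w
      simp only [Finset.mem_filter, Finset.mem_univ, true_and, Finset.mem_image]
      rw [← hz]
      simp only [orbOf_eq_iff]
      exact ⟨fun ⟨g, hg⟩ => ⟨g, hg⟩, fun ⟨g, hg⟩ => ⟨g, hg⟩⟩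
    rw [hknown, Finset.sum_image (fun a _ b _ h => hinj h)]
    set d : F := c₁ * z.1 + c₂ * z.2 with hd
    have hterm : ∀ g : Fˣ, χ (c₁ * (φ g).1 + c₂ * (φ g).2) = χ ((g : F) * d) := by
      intro g; congr 1; simp only [hφ, hd]; ring
    rw [Finset.sum_congr rfl (fun g _ => hterm g)]
    by_cases hdz : d = 0
    · have hone : ∀ g : Fˣ, χ ((g : F) * d) = 1 := by
        intro g; rw [hdz, mul_zero, h0]
      rw [Finset.sum_congr rfl (fun g _ => hone g), Finset.sum_const, Finset.card_univ]
      have hcond : ∀ w ∈ orbSet (orbOf c₁ c₂), ∀ s ∈ orbSet S, s.1 * w.1 + s.2 * w.2 = 0 := by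
        intro w hw s hsw
        have hw' : orbOf w.1 w.2 = orbOf c₁ c₂ := hw
        have hsw' : orbOf s.1 s.2 = S := hsw
        obtain ⟨μ, hμ⟩ := (orbOf_eq_iff w.1 w.2 c₁ c₂).1 hw'
        obtain ⟨g, hg⟩ := (orbOf_eq_iff s.1 s.2 z.1 z.2).1 (by rw [hz]; exact hsw')
        rw [Prod.ext_iff] at hμ hg
        have hzero : c₁ * z.1 + c₂ * z.2 = 0 := by rw [← hd]; exact hdz
        rw [← hμ.1, ← hμ.2, ← hg.1, ← hg.2]
        linear_combination ((g : F) * (μ : F)) * hzero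
      rw [KmatC, if_pos hcond, hcard, hknown,
        Finset.card_image_of_injective _ hinj, Finset.card_univ]
      simp
    · have himg : (Finset.univ.erase (0 : F))
          = Finset.univ.image (fun g : Fˣ => (g : F)) := by
        ext x
        simp only [Finset.mem_erase, Finset.mem_univ, and_true, Finset.mem_image, true_and]
        constructor
        · intro hx; exact ⟨Units.mk0 x hx, rfl⟩
        · rintro ⟨g, rfl⟩; exact g.ne_zero
      have hsum2 : ∑ g : Fˣ, χ ((g : F) * d)
          = ∑ x ∈ Finset.univ.erase (0 : F), χ (x * d) := by
        rw [himg, Finset.sum_image (by intro a _ b _ h; exact Units.ext h)]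
      have hsum3 : ∑ x ∈ Finset.univ.erase (0 : F), χ (x * d) + χ (0 * d)
          = ∑ x : F, χ (x * d) := Finset.sum_erase_add _ _ (Finset.mem_univ 0)
      rw [hs d hdz] at hsum3
      rw [zero_mul, h0] at hsum3
      have hval : ∑ x ∈ Finset.univ.erase (0 : F), χ (x * d) = -1 := by
        linear_combination hsum3
      rw [hsum2, hval]
      have hncond : ¬ (∀ w ∈ orbSet (orbOf c₁ c₂), ∀ s ∈ orbSet S,
          s.1 * w.1 + s.2 * w.2 = 0) := by
        intro hcon
        have hw : (c₁, c₂) ∈ orbSet (orbOf c₁ c₂) := rfl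
        have hsS : z ∈ orbSet S := hz
        have hzero := hcon (c₁, c₂) hw z hsS
        apply hdz
        rw [hd]; linear_combination hzero
      rw [KmatC, if_neg hncond]

open Complex in
theorem expZMod_add (p : ℕ) [NeZero p] (x y : ZMod p) :
    Complex.exp (2 * (Real.pi:ℂ) * I * (((x+y).val : ℕ) : ℂ) / p)
      = exp (2 * Real.pi * I * ((x.val:ℕ) : ℂ) / p) * exp (2 * Real.pi * I * ((y.val:ℕ):ℂ) / p) := by
  have hp : (p:ℂ) ≠ 0 := Nat.cast_ne_zero.2 (NeZero.ne p)
  rw [ZMod.val_add, ← Complex.exp_add]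
  set a := x.val; set b := y.val
  set k := (a+b)/p with hk
  set m := (a+b)%p with hm
  have h : a + b = p * k + m := (Nat.div_add_mod (a+b) p).symm
  have hc : (a:ℂ) + b = p * k + m := by exact_mod_cast congrArg (Nat.cast : ℕ → ℂ) h
  have key : 2 * (Real.pi:ℂ) * I * a / p + 2 * Real.pi * I * b / p
      = (k:ℤ) * (2 * Real.pi * I) + 2 * Real.pi * I * (m:ℂ) / p := by
    field_simp
    push_cast
    linear_combination hc
  rw [key, Complex.exp_add, Complex.exp_int_mul_two_pi_mul_I, one_mul]

open Complex in
theorem exp_nat_div_ne_one (p m : ℕ) (hp0 : 0 < p) (hm : m < p) (hm0 : m ≠ 0) :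
    Complex.exp (2 * (Real.pi:ℂ) * I * (m : ℂ) / p) ≠ 1 := by
  intro h
  rw [Complex.exp_eq_one_iff] at h
  obtain ⟨n, hn⟩ := h
  have hp : (p:ℂ) ≠ 0 := Nat.cast_ne_zero.2 hp0.ne'
  have hπ : (Real.pi:ℂ) ≠ 0 := by exact_mod_cast Real.pi_ne_zero
  have hne : (2 * (Real.pi:ℂ) * I) ≠ 0 := by simp [Complex.I_ne_zero, hπ]
  field_simp at hn
  have h1 : (2 * (Real.pi:ℂ) * I) * (m:ℂ) = (2 * (Real.pi:ℂ) * I) * ((n:ℂ) * p) := by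
    linear_combination (2 * (Real.pi:ℂ) * I) * hn
  have h1' : ((m:ℕ):ℂ) = (n:ℂ) * p := mul_left_cancel₀ hne h1
  have h2 : (m : ℤ) = n * p := by exact_mod_cast h1'
  have h4 : p ∣ m := by
    have : (p:ℤ) ∣ (m:ℤ) := ⟨n, by linarith [h2]⟩
    exact_mod_cast this
  exact hm0 (Nat.eq_zero_of_dvd_of_lt h4 hm)

open Polynomial in
theorem exists_trace_ne_zero {p r : ℕ} (hp : 2 ≤ p) {F : Type} [Field F] [Fintype F]
    (hq : Fintype.card F = p ^ r) :
    ∃ c : F, (∑ j ∈ Finset.range r, c ^ p ^ j) ≠ 0 := by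
  have hr : r ≠ 0 := by
    rintro rfl
    have := Fintype.one_lt_card (α := F)
    simp [hq] at this
  set f : F[X] := ∑ j ∈ Finset.range r, Polynomial.X ^ p ^ j with hf
  have hfne : f ≠ 0 := by
    intro h0
    have hc : f.coeff (p ^ (r-1)) = 1 := by
      rw [hf, Polynomial.finset_sum_coeff]
      rw [Finset.sum_eq_single (r-1)]
      · simp
      · intro j hj hne
        rw [Polynomial.coeff_X_pow]
        rw [if_neg]
        exact fun h => hne (Nat.pow_right_injective hp h).symm
      · intro h
        exact absurd (Finset.mem_range.2 (by omega)) h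
    rw [h0] at hc
    simp at hc
  have hdeg : f.natDegree < Fintype.card F := by
    have h1 : f.natDegree ≤ p ^ (r-1) := by
      apply natDegree_sum_le_of_forall_le
      intro j hj
      rw [Polynomial.natDegree_X_pow]
      exact Nat.pow_le_pow_right (by omega) (by have := Finset.mem_range.1 hj; omega)
    have h2 : p ^ (r-1) < p ^ r := Nat.pow_lt_pow_right hp (by omega)
    omega
  by_contra h
  push_neg at h
  have : f = 0 := by
    apply eq_zero_of_natDegree_lt_card_of_eval_eq_zero f Function.injective_id _ (by simpa)
    intro x
    simp [hf, Polynomial.eval_finset_sum, h x]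
  exact hfne this

/-- The character-sum identity behind the MacWilliams identities for second-order
weight enumerators: `Σ_{u',v'} χ(u·u' + v·v') x^{sw(u',v')} = (xK)^{sw(u,v)}`. -/
theorem stmt_16 {p r : ℕ} [Fact p.Prime] {F : Type} [Field F] [Fintype F] [CharP F p]
    (hq : Fintype.card F = p ^ r)
    (t : F → ZMod p)
    (ht : ∀ v : F, (ZMod.castHom (dvd_refl p) F) (t v) = ∑ j ∈ Finset.range r, v ^ p ^ j)
    (χ : F → ℂ)
    (hχ : ∀ v : F, χ v
      = Complex.exp (2 * (Real.pi : ℂ) * Complex.I * ((t v).val : ℂ) / (p : ℂ)))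
    {n : ℕ} (u v : Fin n → F) :
    (∑ u' : Fin n → F, ∑ v' : Fin n → F,
        MvPolynomial.C (χ ((∑ i, u i * u' i) + ∑ i, v i * v' i))
          * ∏ S : Orb F, (MvPolynomial.X S : MvPolynomial (Orb F) ℂ) ^ sw u' v' S)
      = ∏ T : Orb F,
          (∑ S : Orb F, MvPolynomial.C (KmatC S T)
            * (MvPolynomial.X S : MvPolynomial (Orb F) ℂ)) ^ sw u v T := by
  haveI : NeZero p := ⟨(Fact.out : p.Prime).ne_zero⟩
  have hp2 : 2 ≤ p := (Fact.out : p.Prime).two_le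
  have hcastinj : Function.Injective (ZMod.castHom (dvd_refl p) F) :=
    (ZMod.castHom (dvd_refl p) F).injective
  have ht_add : ∀ a b : F, t (a + b) = t a + t b := by
    intro a b
    apply hcastinj
    rw [map_add, ht, ht, ht, ← Finset.sum_add_distrib]
    exact Finset.sum_congr rfl fun j _ => add_pow_char_pow a b p j
  have ht_zero : t 0 = 0 := by
    apply hcastinj
    rw [ht, map_zero]
    apply Finset.sum_eq_zero
    intro j _
    exact zero_pow (pow_ne_zero j (by omega : p ≠ 0))
  have hχ0 : χ 0 = 1 := by rw [hχ, ht_zero]; simp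
  have hχadd : ∀ a b : F, χ (a + b) = χ a * χ b := by
    intro a b
    rw [hχ, hχ, hχ, ht_add]
    exact expZMod_add p (t a) (t b)
  have hnontriv : ∃ c : F, χ c ≠ 1 := by
    obtain ⟨c, hc⟩ := exists_trace_ne_zero hp2 hq
    refine ⟨c, ?_⟩
    have htc : t c ≠ 0 := by
      intro h
      apply hc
      rw [← ht, h, map_zero]
    rw [hχ]
    exact exp_nat_div_ne_one p (t c).val (by omega) ((t c).val_lt)
      (fun h => htc ((ZMod.val_eq_zero _).1 h))
  have hsum0 : ∑ x : F, χ x = 0 := by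
    obtain ⟨c, hc⟩ := hnontriv
    have h1 : ∑ x : F, χ (c + x) = ∑ x : F, χ x :=
      Fintype.sum_equiv (Equiv.addLeft c) _ _ (fun x => rfl)
    rw [Finset.sum_congr rfl (fun x _ => hχadd c x), ← Finset.mul_sum] at h1
    have h2 : (χ c - 1) * ∑ x : F, χ x = 0 := by linear_combination h1
    rcases mul_eq_zero.1 h2 with h | h
    · exact absurd (by linear_combination h) hc
    · exact h
  have hsmul : ∀ d : F, d ≠ 0 → ∑ x : F, χ (x * d) = 0 := by
    intro d hd
    have h1 : ∑ x : F, χ (x * d) = ∑ x : F, χ x :=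
      Fintype.sum_equiv (Equiv.mulRight₀ d hd) (fun x => χ (x * d)) χ (fun x => rfl)
    rw [h1, hsum0]
  have hχsum : ∀ (f : Fin n → F), χ (∑ i, f i) = ∏ i, χ (f i) := by
    intro f
    have : ∀ s : Finset (Fin n), χ (∑ i ∈ s, f i) = ∏ i ∈ s, χ (f i) := by
      intro s
      induction s using Finset.cons_induction with
      | empty => simpa using hχ0
      | cons a s ha ih => rw [Finset.sum_cons, Finset.prod_cons, hχadd, ih]
    exact this Finset.univ
  -- per-pair rewriting
  have key1 : ∀ (u' v' : Fin n → F),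
      (MvPolynomial.C (χ ((∑ i, u i * u' i) + ∑ i, v i * v' i))
        * ∏ S : Orb F, (MvPolynomial.X S : MvPolynomial (Orb F) ℂ) ^ sw u' v' S)
      = ∏ i : Fin n, (MvPolynomial.C (χ (u i * u' i + v i * v' i))
          * (MvPolynomial.X (orbOf (u' i) (v' i)) : MvPolynomial (Orb F) ℂ)) := by
    intro u' v'
    have e1 : χ ((∑ i, u i * u' i) + ∑ i, v i * v' i)
        = ∏ i, χ (u i * u' i + v i * v' i) := by
      rw [← Finset.sum_add_distrib, hχsum]
    have e2 : (∏ S : Orb F, (MvPolynomial.X S : MvPolynomial (Orb F) ℂ) ^ sw u' v' S)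
        = ∏ i : Fin n, (MvPolynomial.X (orbOf (u' i) (v' i)) : MvPolynomial (Orb F) ℂ) := by
      rw [← Finset.prod_fiberwise Finset.univ (fun i => orbOf (u' i) (v' i))
          (fun i => (MvPolynomial.X (orbOf (u' i) (v' i)) : MvPolynomial (Orb F) ℂ))]
      apply Finset.prod_congr rfl
      intro S _
      rw [sw]
      rw [Finset.prod_congr rfl (fun i hi => by rw [(Finset.mem_filter.1 hi).2] :
        ∀ i ∈ Finset.univ.filter (fun i => orbOf (u' i) (v' i) = S),
          (MvPolynomial.X (orbOf (u' i) (v' i)) : MvPolynomial (Orb F) ℂ)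
            = MvPolynomial.X S)]
      rw [Finset.prod_const]
    rw [e1, e2, map_prod, ← Finset.prod_mul_distrib]
  -- per-coordinate identity
  have coord : ∀ c₁ c₂ : F,
      (∑ z : F × F, MvPolynomial.C (χ (c₁ * z.1 + c₂ * z.2))
          * (MvPolynomial.X (orbOf z.1 z.2) : MvPolynomial (Orb F) ℂ))
      = ∑ S : Orb F, MvPolynomial.C (KmatC S (orbOf c₁ c₂))
          * (MvPolynomial.X S : MvPolynomial (Orb F) ℂ) := by
    intro c₁ c₂
    rw [← Finset.sum_fiberwise Finset.univ (fun z : F × F => orbOf z.1 z.2)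
        (fun z => MvPolynomial.C (χ (c₁ * z.1 + c₂ * z.2))
          * (MvPolynomial.X (orbOf z.1 z.2) : MvPolynomial (Orb F) ℂ))]
    apply Finset.sum_congr rfl
    intro S _
    rw [Finset.sum_congr rfl (fun z hz => by rw [(Finset.mem_filter.1 hz).2] :
      ∀ z ∈ Finset.univ.filter (fun z : F × F => orbOf z.1 z.2 = S),
        (MvPolynomial.C (χ (c₁ * z.1 + c₂ * z.2))
          * (MvPolynomial.X (orbOf z.1 z.2) : MvPolynomial (Orb F) ℂ))
        = MvPolynomial.C (χ (c₁ * z.1 + c₂ * z.2)) * MvPolynomial.X S)]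
    rw [← Finset.sum_mul, ← map_sum, orb_char_sum χ hχ0 hsmul c₁ c₂ S]
  -- assemble
  calc
    (∑ u' : Fin n → F, ∑ v' : Fin n → F,
        MvPolynomial.C (χ ((∑ i, u i * u' i) + ∑ i, v i * v' i))
          * ∏ S : Orb F, (MvPolynomial.X S : MvPolynomial (Orb F) ℂ) ^ sw u' v' S)
        = ∑ w : Fin n → F × F,
            MvPolynomial.C (χ ((∑ i, u i * (w i).1) + ∑ i, v i * (w i).2))
              * ∏ S : Orb F, (MvPolynomial.X S : MvPolynomial (Orb F) ℂ)
                ^ sw (fun i => (w i).1) (fun i => (w i).2) S := by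
          rw [← Fintype.sum_prod_type']
          exact (Fintype.sum_equiv (Equiv.arrowProdEquivProdArrow (Fin n) (fun _ => F) (fun _ => F)) _ _
            (fun w => rfl)).symm
    _ = ∑ w : Fin n → F × F, ∏ i : Fin n,
          (MvPolynomial.C (χ (u i * (w i).1 + v i * (w i).2))
            * (MvPolynomial.X (orbOf (w i).1 (w i).2) : MvPolynomial (Orb F) ℂ)) := by
          exact Finset.sum_congr rfl (fun w _ => key1 _ _)
    _ = ∏ i : Fin n, ∑ z : F × F,
          (MvPolynomial.C (χ (u i * z.1 + v i * z.2))
            * (MvPolynomial.X (orbOf z.1 z.2) : MvPolynomial (Orb F) ℂ)) := by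
          exact (Fintype.prod_sum (κ := fun _ : Fin n => F × F)
            (fun i z => MvPolynomial.C (χ (u i * z.1 + v i * z.2))
              * (MvPolynomial.X (orbOf z.1 z.2) : MvPolynomial (Orb F) ℂ))).symm
    _ = ∏ i : Fin n, ∑ S : Orb F, MvPolynomial.C (KmatC S (orbOf (u i) (v i)))
          * (MvPolynomial.X S : MvPolynomial (Orb F) ℂ) := by
          exact Finset.prod_congr rfl (fun i _ => coord _ _)
    _ = ∏ T : Orb F,
          (∑ S : Orb F, MvPolynomial.C (KmatC S T)
            * (MvPolynomial.X S : MvPolynomial (Orb F) ℂ)) ^ sw u v T := by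
          rw [← Finset.prod_fiberwise Finset.univ (fun i => orbOf (u i) (v i))
            (fun i => ∑ S : Orb F, MvPolynomial.C (KmatC S (orbOf (u i) (v i)))
              * (MvPolynomial.X S : MvPolynomial (Orb F) ℂ))]
          apply Finset.prod_congr rfl
          intro T _
          rw [sw]
          rw [Finset.prod_congr rfl (fun i hi => by rw [(Finset.mem_filter.1 hi).2] :
            ∀ i ∈ Finset.univ.filter (fun i => orbOf (u i) (v i) = T),
              (∑ S : Orb F, MvPolynomial.C (KmatC S (orbOf (u i) (v i)))
                * (MvPolynomial.X S : MvPolynomial (Orb F) ℂ))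
              = ∑ S : Orb F, MvPolynomial.C (KmatC S T)
                * (MvPolynomial.X S : MvPolynomial (Orb F) ℂ))]
          rw [Finset.prod_const]
end
end

section
/- Let 0 < m < n, let à be a 2-good random (n−m)×n matrix over F_q (with n−m ≥ 2), let D = {v ∈ F_q^n : Ã·v^T = 0}, and let Ξ_n be an independent uniformly distributed random monomial map on F_q^n. Then E[|Ξ_n(D)|] = q^m + 1 − q^{m−n}, and the variance satisfies E[(|Ξ_n(D)| − E[|Ξ_n(D)|])^2] = q^{m−n}(q−1)(q^n−1)(1−q^{m−n}) < q^{m+1}. -/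
open scoped Classical
open Finset MvPolynomial

noncomputable section

variable {F : Type} [Field F] [Fintype F]

/-- The linear code with parity-check matrix `M` (kernel). -/
def pchkCode {m n : ℕ} (M : Matrix (Fin m) (Fin n) F) : Finset (Fin n → F) :=
  Finset.univ.filter (fun v => M.mulVec v = 0)

/-- The cardinality of the image of the code with parity-check matrix `M` under the
monomial map with parameters `p`. -/
def imgCard {m n : ℕ} (M : Matrix (Fin m) (Fin n) F)
    (p : (Fin n → Fˣ) × Equiv.Perm (Fin n)) : ℕ :=
  ((pchkCode M).image (monoMap p.1 p.2)).card


section AuxLemmas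

open Matrix

set_option linter.unusedSectionVars false
set_option linter.unusedVariables false

lemma aux_rank {r : ℕ} {ι : Type} [Fintype ι] [DecidableEq ι]
    (M : Matrix (Fin r) ι F) (h : LinearIndependent F (fun i => M i)) :
    M.rank = r := by
  rw [← Matrix.rank_transpose]
  have hinj : Function.Injective Mᵀ.mulVecLin := by
    rw [← LinearMap.ker_eq_bot, LinearMap.ker_eq_bot']
    intro c hc
    have hz : ∑ i, c i • M i = 0 := by
      funext j
      have := congrFun hc j
      simpa [Matrix.mulVecLin_apply, Matrix.vecMul, Matrix.mulVec, dotProduct,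
        Finset.sum_apply, mul_comm] using this
    funext i
    exact Fintype.linearIndependent_iff.mp h c hz i
  have h1 := LinearMap.finrank_range_add_finrank_ker Mᵀ.mulVecLin
  rw [LinearMap.ker_eq_bot.mpr hinj, finrank_bot] at h1
  simp only [Module.finrank_fintype_fun_eq_card, Fintype.card_fin, add_zero] at h1
  exact h1

lemma aux_ker_card {r : ℕ} {ι : Type} [Fintype ι] [DecidableEq ι]
    (M : Matrix (Fin r) ι F) (h : LinearIndependent F (fun i => M i)) :
    (Finset.univ.filter (fun b : ι → F => M.mulVec b = 0)).card
      = Fintype.card F ^ (Fintype.card ι - r) := by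
  have hsurj : LinearMap.range M.mulVecLin = ⊤ := by
    apply Submodule.eq_top_of_finrank_eq
    have : Module.finrank F ↥(LinearMap.range M.mulVecLin) = M.rank := rfl
    rw [this, aux_rank M h, Module.finrank_fintype_fun_eq_card, Fintype.card_fin]
  have h1 := LinearMap.finrank_range_add_finrank_ker M.mulVecLin
  rw [hsurj, finrank_top] at h1
  simp only [Module.finrank_fintype_fun_eq_card, Fintype.card_fin] at h1
  have hker : Module.finrank F ↥(LinearMap.ker M.mulVecLin) = Fintype.card ι - r := by omega
  have hcard : (Finset.univ.filter (fun b : ι → F => M.mulVec b = 0)).card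
      = Fintype.card ↥(LinearMap.ker M.mulVecLin) := by
    rw [Fintype.card_subtype]
    congr 1
    ext b
    simp [LinearMap.mem_ker]
  rw [hcard, Module.card_eq_pow_finrank (K := F), hker]

set_option linter.unusedSectionVars false

lemma aux_li_one {ι : Type} [Fintype ι] {u : ι → F} (hu : u ≠ 0) :
    LinearIndependent F ![u] := by
  rw [Fintype.linearIndependent_iff]
  intro g hg i
  fin_cases i
  have : g 0 • u = 0 := by
    have := hg
    simpa [Fin.sum_univ_one] using this
  rcases smul_eq_zero.mp this with h | h
  · exact h
  · exact absurd h hu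

lemma aux_count_one {ι : Type} [Fintype ι] [DecidableEq ι] {u : ι → F} (hu : u ≠ 0) :
    (Finset.univ.filter (fun b : ι → F => b ⬝ᵥ u = 0)).card
      = Fintype.card F ^ (Fintype.card ι - 1) := by
  have := aux_ker_card (Matrix.of ![u]) (aux_li_one hu)
  rw [← this]
  congr 1
  ext b
  simp only [mem_filter, mem_univ, true_and]
  constructor
  · intro h
    funext i
    fin_cases i
    simpa [Matrix.mulVec, dotProduct, mul_comm] using h
  · intro h
    have := congrFun h 0
    simpa [Matrix.mulVec, dotProduct, mul_comm] using this

lemma aux_count_two {ι : Type} [Fintype ι] [DecidableEq ι] {u v : ι → F}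
    (huv : LinearIndependent F ![u, v]) :
    (Finset.univ.filter (fun b : ι → F => b ⬝ᵥ u = 0 ∧ b ⬝ᵥ v = 0)).card
      = Fintype.card F ^ (Fintype.card ι - 2) := by
  have := aux_ker_card (Matrix.of ![u, v]) huv
  rw [← this]
  congr 1
  ext b
  simp only [mem_filter, mem_univ, true_and]
  constructor
  · rintro ⟨h1, h2⟩
    funext i
    fin_cases i
    · simpa [Matrix.mulVec, dotProduct, mul_comm] using h1
    · simpa [Matrix.mulVec, dotProduct, mul_comm] using h2
  · intro h
    constructor
    · have := congrFun h 0
      simpa [Matrix.mulVec, dotProduct, mul_comm] using this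
    · have := congrFun h 1
      simpa [Matrix.mulVec, dotProduct, mul_comm] using this

/-- Rational-valued indicator of a proposition (with a fixed classical instance). -/
def ind (p : Prop) : ℚ := if p then 1 else 0

lemma ind_pos {p : Prop} (h : p) : ind p = 1 := if_pos h

lemma ind_neg {p : Prop} (h : ¬ p) : ind p = 0 := if_neg h

lemma ind_congr {p q : Prop} (h : p ↔ q) : ind p = ind q := by
  by_cases hp : p
  · rw [ind_pos hp, ind_pos (h.mp hp)]
  · rw [ind_neg hp, ind_neg (fun hq => hp (h.mpr hq))]

lemma ind_mul_ind (p q : Prop) : ind p * ind q = ind (p ∧ q) := by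
  by_cases hp : p <;> by_cases hq : q <;> simp [ind, hp, hq]

lemma sum_filter_ind {α : Type} [Fintype α] {p : α → Prop} {ip : DecidablePred p}
    (f : α → ℚ) :
    ∑ a ∈ @Finset.filter _ p ip univ, f a = ∑ a, f a * ind (p a) := by
  rw [Finset.sum_filter]
  refine Finset.sum_congr rfl fun a _ => ?_
  by_cases h : p a
  · rw [if_pos h, ind_pos h, mul_one]
  · rw [if_neg h, ind_neg h, mul_zero]

lemma card_filter_ind {α : Type} [Fintype α] {p : α → Prop} {ip : DecidablePred p} :
    (((@Finset.filter _ p ip univ).card : ℚ)) = ∑ a, ind (p a) := by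
  rw [Finset.card_filter, Nat.cast_sum]
  refine Finset.sum_congr rfl fun a _ => ?_
  by_cases h : p a
  · rw [if_pos h, ind_pos h, Nat.cast_one]
  · rw [if_neg h, ind_neg h, Nat.cast_zero]

lemma aux_ident {ι : Type} [Fintype ι] [DecidableEq ι] (w : ι → F) :
    ∑ x : ι → F, ((Fintype.card F : ℚ) * ind (x ⬝ᵥ w = 0) - 1)
      = (Fintype.card F : ℚ) ^ (Fintype.card ι) * ((Fintype.card F : ℚ) - 1)
          * ind (w = 0) := by
  have hq : 2 ≤ Fintype.card F := Fintype.one_lt_card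
  by_cases hw : w = 0
  · subst hw
    rw [ind_pos rfl, mul_one]
    have : ∀ x : ι → F, (Fintype.card F : ℚ) * ind (x ⬝ᵥ (0 : ι → F) = 0) - 1
        = (Fintype.card F : ℚ) - 1 := fun x => by
      rw [ind_pos (dotProduct_zero x), mul_one]
    rw [Finset.sum_congr rfl (fun x _ => this x), Finset.sum_const, card_univ,
      Fintype.card_fun, nsmul_eq_mul]
    push_cast
    ring
  · rw [ind_neg hw, mul_zero]
    have hne : Nonempty ι := by
      by_contra hcon
      apply hw
      funext i
      exact absurd ⟨i⟩ hcon
    have hc1 : 1 ≤ Fintype.card ι := Fintype.card_pos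
    have hsum : ∑ x : ι → F, ind (x ⬝ᵥ w = 0) = (Fintype.card F : ℚ) ^ (Fintype.card ι - 1) := by
      have h1 : ∑ x : ι → F, ind (x ⬝ᵥ w = 0)
          = ((univ.filter (fun x : ι → F => x ⬝ᵥ w = 0)).card : ℚ) := card_filter_ind.symm
      rw [h1, aux_count_one hw]
      push_cast
      ring
    rw [Finset.sum_sub_distrib, ← Finset.mul_sum, hsum, Finset.sum_const, card_univ,
      Fintype.card_fun, nsmul_eq_mul, mul_one]
    push_cast
    rw [← pow_succ']
    have h2 : Fintype.card ι - 1 + 1 = Fintype.card ι := by omega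
    rw [h2]
    ring

lemma fiber_sum {Ω β : Type} [Fintype Ω] [Fintype β] (P : Ω → ℚ) (g : Ω → β)
    (cond : β → Prop) (val : ℚ)
    (hval : ∀ b, cond b → (∑ ω ∈ univ.filter (fun ω => g ω = b), P ω) = val) :
    (∑ ω ∈ univ.filter (fun ω => cond (g ω)), P ω)
      = (univ.filter cond).card * val := by
  rw [← Finset.sum_fiberwise_of_maps_to (g := g) (t := (univ : Finset β))
    (fun ω _ => mem_univ _) P]
  have h1 : ∀ b : β, ((univ.filter (fun ω => cond (g ω))).filter (fun ω => g ω = b))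
      = if cond b then univ.filter (fun ω => g ω = b) else ∅ := by
    intro b
    split_ifs with hb
    · ext ω
      simp only [mem_filter, mem_univ, true_and]
      constructor
      · rintro ⟨-, h⟩; exact h
      · intro h; exact ⟨h ▸ hb, h⟩
    · ext ω
      simp only [mem_filter, mem_univ, true_and, Finset.notMem_empty, iff_false, not_and]
      intro hc hg
      exact hb (hg ▸ hc)
  calc ∑ b : β, ∑ ω ∈ (univ.filter fun ω => cond (g ω)).filter (fun ω => g ω = b), P ω
      = ∑ b : β, (if cond b then val else 0) := by
        refine Finset.sum_congr rfl fun b _ => ?_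
        rw [h1 b]
        split_ifs with hb
        · exact hval b hb
        · exact Finset.sum_empty
    _ = (univ.filter cond).card * val := by
        rw [← Finset.sum_filter, Finset.sum_const, nsmul_eq_mul]

lemma filter_sum_congr {α : Type} [Fintype α] {p q : α → Prop} {ip : DecidablePred p}
    {iq : DecidablePred q} (f : α → ℚ) (h : ∀ a, p a ↔ q a) :
    ∑ a ∈ @Finset.filter _ p ip univ, f a = ∑ a ∈ @Finset.filter _ q iq univ, f a :=
  Finset.sum_congr (by ext a; simp only [mem_filter, mem_univ, true_and, h a]) (fun _ _ => rfl)

lemma card_filter_inst {α : Type} [Fintype α] (p : α → Prop) (ip iq : DecidablePred p) :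
    (@Finset.filter _ p ip univ).card = (@Finset.filter _ p iq univ).card := by
  have h := Subsingleton.elim ip iq
  subst h
  rfl

section Prob

variable {m n : ℕ} {Ω : Type} [Fintype Ω] {P : Ω → ℚ}
  {A : Ω → Matrix (Fin (n - m)) (Fin n) F}

lemma lemB
    (h2good : ∀ U : Matrix (Fin 2) (Fin (n - m)) F, U.rank = 2 →
      ∀ B : Matrix (Fin 2) (Fin n) F,
        (∑ ω ∈ Finset.univ.filter (fun ω => U * A ω = B), P ω)
          = 1 / (Fintype.card F : ℚ) ^ (2 * n))
    {x y : Fin (n - m) → F} (hxy : LinearIndependent F ![x, y]) (b b' : Fin n → F) :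
    ∑ ω ∈ Finset.univ.filter (fun ω => x ᵥ* A ω = b ∧ y ᵥ* A ω = b'), P ω
      = 1 / (Fintype.card F : ℚ) ^ (2 * n) := by
  have hrank : (Matrix.of ![x, y]).rank = 2 := aux_rank (Matrix.of ![x, y]) hxy
  refine (filter_sum_congr P ?_).trans (h2good _ hrank (Matrix.of ![b, b']))
  intro ω
  rw [← Matrix.ext_iff]
  simp only [Fin.forall_fin_two, Matrix.mul_apply, Matrix.of_apply, Matrix.cons_val_zero,
    Matrix.cons_val_one, Matrix.head_cons, funext_iff, Matrix.vecMul, dotProduct]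

lemma lemA (h2 : 2 ≤ n - m) (hP1 : (∑ ω, P ω) = 1)
    (h2good : ∀ U : Matrix (Fin 2) (Fin (n - m)) F, U.rank = 2 →
      ∀ B : Matrix (Fin 2) (Fin n) F,
        (∑ ω ∈ Finset.univ.filter (fun ω => U * A ω = B), P ω)
          = 1 / (Fintype.card F : ℚ) ^ (2 * n))
    {x : Fin (n - m) → F} (hx : x ≠ 0) (b : Fin n → F) :
    ∑ ω ∈ Finset.univ.filter (fun ω => x ᵥ* A ω = b), P ω
      = 1 / (Fintype.card F : ℚ) ^ n := by
  have hq : 2 ≤ Fintype.card F := Fintype.one_lt_card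
  obtain ⟨y, hy⟩ : ∃ y : Fin (n - m) → F, ∀ a : F, a • x ≠ y := by
    by_contra hcon
    push_neg at hcon
    have hsurj : Function.Surjective (fun a : F => a • x) := fun y => hcon y
    have hle := Fintype.card_le_of_surjective _ hsurj
    rw [Fintype.card_fun, Fintype.card_fin] at hle
    have hlt : Fintype.card F ^ 1 < Fintype.card F ^ (n - m) :=
      Nat.pow_lt_pow_right (by omega) (by omega)
    rw [pow_one] at hlt
    omega
  have hxy : LinearIndependent F ![x, y] := (LinearIndependent.pair_iff' hx).mpr hy
  have hfib := fiber_sum P (fun ω => (x ᵥ* A ω, y ᵥ* A ω)) (fun p => p.1 = b)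
      (1 / (Fintype.card F : ℚ) ^ (2 * n)) ?_
  · refine (filter_sum_congr P (fun ω => Iff.rfl)).trans (hfib.trans ?_)
    have hcard : ∀ (ip : DecidablePred (fun p : (Fin n → F) × (Fin n → F) => p.1 = b)),
        (@Finset.filter _ _ ip univ).card = Fintype.card F ^ n := by
      intro ip
      have hset : (@Finset.filter _ _ ip univ)
          = {b} ×ˢ univ := by
        ext p
        simp only [mem_filter, mem_univ, true_and, Finset.mem_product,
          Finset.mem_singleton, and_true]
      rw [hset, Finset.card_product, Finset.card_singleton, one_mul, card_univ,
        Fintype.card_fun, Fintype.card_fin]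
    rw [hcard]
    have hq0 : (Fintype.card F : ℚ) ≠ 0 := by positivity
    rw [two_mul, pow_add]
    push_cast
    field_simp
  · rintro ⟨b1, b2⟩ hb
    have hb1 : b1 = b := hb
    subst hb1
    refine (filter_sum_congr P (fun ω => ?_)).trans (lemB h2good hxy b1 b2)
    constructor
    · intro h
      exact ⟨congrArg Prod.fst h, congrArg Prod.snd h⟩
    · rintro ⟨h1, h2⟩
      exact Prod.ext h1 h2

/-- `Hfun u x` is the probability that `(x ᵥ* A) ⬝ᵥ u = 0`. -/
def Hfun (P : Ω → ℚ) (A : Ω → Matrix (Fin (n - m)) (Fin n) F)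
    (u : Fin n → F) (x : Fin (n - m) → F) : ℚ :=
  ∑ ω ∈ Finset.univ.filter (fun ω => (x ᵥ* A ω) ⬝ᵥ u = 0), P ω

lemma lemH0 (hP1 : (∑ ω, P ω) = 1) (u : Fin n → F) : Hfun P A u 0 = 1 := by
  rw [Hfun, ← hP1]
  apply Finset.sum_congr _ (fun _ _ => rfl)
  ext ω
  simp [Matrix.zero_vecMul, zero_dotProduct]

lemma lemHx (h2 : 2 ≤ n - m) (hmn : m < n) (hP1 : (∑ ω, P ω) = 1)
    (h2good : ∀ U : Matrix (Fin 2) (Fin (n - m)) F, U.rank = 2 →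
      ∀ B : Matrix (Fin 2) (Fin n) F,
        (∑ ω ∈ Finset.univ.filter (fun ω => U * A ω = B), P ω)
          = 1 / (Fintype.card F : ℚ) ^ (2 * n))
    {u : Fin n → F} (hu : u ≠ 0) {x : Fin (n - m) → F} (hx : x ≠ 0) :
    Hfun P A u x = 1 / (Fintype.card F : ℚ) := by
  have hq : 2 ≤ Fintype.card F := Fintype.one_lt_card
  have hq0 : (Fintype.card F : ℚ) ≠ 0 := by positivity
  have hfib := fiber_sum P (fun ω => x ᵥ* A ω) (fun c => c ⬝ᵥ u = 0)
      (1 / (Fintype.card F : ℚ) ^ n) ?_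
  · rw [Hfun]
    refine (filter_sum_congr P (fun ω => Iff.rfl)).trans (hfib.trans ?_)
    have hcard : ∀ (ip : DecidablePred (fun c : Fin n → F => c ⬝ᵥ u = 0)),
        (@Finset.filter _ _ ip univ).card = Fintype.card F ^ (n - 1) := by
      intro ip
      refine ((card_filter_inst _ ip _).trans (aux_count_one hu)).trans ?_
      rw [Fintype.card_fin]
    rw [hcard]
    have hn : n - 1 + 1 = n := by omega
    push_cast
    rw [← hn, pow_succ]
    field_simp
    simp
  · intro c _
    exact (filter_sum_congr P (fun ω => Iff.rfl)).trans (lemA h2 hP1 h2good hx c)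

lemma lemHsum (h2 : 2 ≤ n - m) (hmn : m < n) (hP1 : (∑ ω, P ω) = 1)
    (h2good : ∀ U : Matrix (Fin 2) (Fin (n - m)) F, U.rank = 2 →
      ∀ B : Matrix (Fin 2) (Fin n) F,
        (∑ ω ∈ Finset.univ.filter (fun ω => U * A ω = B), P ω)
          = 1 / (Fintype.card F : ℚ) ^ (2 * n))
    {u : Fin n → F} (hu : u ≠ 0) :
    ∑ x : Fin (n - m) → F, ((Fintype.card F : ℚ) * Hfun P A u x - 1)
      = (Fintype.card F : ℚ) - 1 := by
  have hq : 2 ≤ Fintype.card F := Fintype.one_lt_card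
  have hq0 : (Fintype.card F : ℚ) ≠ 0 := by positivity
  rw [Finset.sum_eq_single 0]
  · rw [lemH0 hP1 u]; ring
  · intro x _ hx
    rw [lemHx h2 hmn hP1 h2good hu hx]
    field_simp
    norm_num
  · intro h
    exact absurd (mem_univ 0) h

lemma Hfun_eq (P : Ω → ℚ) (A : Ω → Matrix (Fin (n - m)) (Fin n) F)
    (u : Fin n → F) (x : Fin (n - m) → F) :
    Hfun P A u x = ∑ ω, P ω * ind ((x ᵥ* A ω) ⬝ᵥ u = 0) :=
  sum_filter_ind P

lemma hident (P : Ω → ℚ) (A : Ω → Matrix (Fin (n - m)) (Fin n) F)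
    (u : Fin n → F) (ω : Ω) :
    (Fintype.card F : ℚ) ^ (n - m) * ((Fintype.card F : ℚ) - 1) * ind (A ω *ᵥ u = 0)
      = ∑ x : Fin (n - m) → F,
          ((Fintype.card F : ℚ) * ind ((x ᵥ* A ω) ⬝ᵥ u = 0) - 1) := by
  have h := aux_ident (F := F) (A ω *ᵥ u)
  rw [Fintype.card_fin] at h
  simp only [Matrix.dotProduct_mulVec] at h
  exact h.symm

lemma lemC (h2 : 2 ≤ n - m) (hmn : m < n) (hP1 : (∑ ω, P ω) = 1)
    (h2good : ∀ U : Matrix (Fin 2) (Fin (n - m)) F, U.rank = 2 →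
      ∀ B : Matrix (Fin 2) (Fin n) F,
        (∑ ω ∈ Finset.univ.filter (fun ω => U * A ω = B), P ω)
          = 1 / (Fintype.card F : ℚ) ^ (2 * n))
    {u : Fin n → F} (hu : u ≠ 0) :
    ∑ ω, P ω * ind (A ω *ᵥ u = 0) = 1 / (Fintype.card F : ℚ) ^ (n - m) := by
  have hq : 2 ≤ Fintype.card F := Fintype.one_lt_card
  have hq0 : (Fintype.card F : ℚ) ≠ 0 := by positivity
  have hqQ : (2:ℚ) ≤ (Fintype.card F : ℚ) := by exact_mod_cast hq
  have hq1 : (Fintype.card F : ℚ) - 1 ≠ 0 := by linarith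
  have hKne : ((Fintype.card F : ℚ)) ^ (n - m) ≠ 0 := pow_ne_zero _ hq0
  have key : (Fintype.card F : ℚ) ^ (n - m) * ((Fintype.card F : ℚ) - 1)
      * (∑ ω, P ω * ind (A ω *ᵥ u = 0)) = (Fintype.card F : ℚ) - 1 := by
    calc (Fintype.card F : ℚ) ^ (n - m) * ((Fintype.card F : ℚ) - 1)
        * (∑ ω, P ω * ind (A ω *ᵥ u = 0))
        = ∑ ω, P ω * ((Fintype.card F : ℚ) ^ (n - m) * ((Fintype.card F : ℚ) - 1)
            * ind (A ω *ᵥ u = 0)) := by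
          rw [Finset.mul_sum]
          exact Finset.sum_congr rfl fun ω _ => by ring
      _ = ∑ ω, P ω * ∑ x : Fin (n - m) → F,
            ((Fintype.card F : ℚ) * ind ((x ᵥ* A ω) ⬝ᵥ u = 0) - 1) :=
          Finset.sum_congr rfl fun ω _ => by rw [hident P A u ω]
      _ = ∑ x : Fin (n - m) → F, ∑ ω, P ω
            * ((Fintype.card F : ℚ) * ind ((x ᵥ* A ω) ⬝ᵥ u = 0) - 1) := by
          rw [← Finset.sum_comm]
          exact Finset.sum_congr rfl fun ω _ => Finset.mul_sum _ _ _
      _ = ∑ x : Fin (n - m) → F, ((Fintype.card F : ℚ) * Hfun P A u x - 1) := by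
          refine Finset.sum_congr rfl fun x _ => ?_
          have h1 : ∀ ω, P ω * ((Fintype.card F : ℚ) * ind ((x ᵥ* A ω) ⬝ᵥ u = 0) - 1)
              = (Fintype.card F : ℚ) * (P ω * ind ((x ᵥ* A ω) ⬝ᵥ u = 0)) - P ω :=
            fun ω => by ring
          rw [Finset.sum_congr rfl (fun ω _ => h1 ω), Finset.sum_sub_distrib,
            ← Finset.mul_sum, hP1, ← Hfun_eq]
      _ = (Fintype.card F : ℚ) - 1 := lemHsum h2 hmn hP1 h2good hu
  have hne : (Fintype.card F : ℚ) ^ (n - m) * ((Fintype.card F : ℚ) - 1) ≠ 0 :=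
    mul_ne_zero hKne hq1
  apply mul_left_cancel₀ hne
  rw [key]
  field_simp

lemma lemT (h2 : 2 ≤ n - m) (hmn : m < n) (hP1 : (∑ ω, P ω) = 1)
    (h2good : ∀ U : Matrix (Fin 2) (Fin (n - m)) F, U.rank = 2 →
      ∀ B : Matrix (Fin 2) (Fin n) F,
        (∑ ω ∈ Finset.univ.filter (fun ω => U * A ω = B), P ω)
          = 1 / (Fintype.card F : ℚ) ^ (2 * n))
    {u v : Fin n → F} (huv : LinearIndependent F ![u, v])
    (x y : Fin (n - m) → F) :
    ∑ ω, P ω * (ind ((x ᵥ* A ω) ⬝ᵥ u = 0) * ind ((y ᵥ* A ω) ⬝ᵥ v = 0))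
      = Hfun P A u x * Hfun P A v y := by
  have hq : 2 ≤ Fintype.card F := Fintype.one_lt_card
  have hq0 : (Fintype.card F : ℚ) ≠ 0 := by positivity
  have hu : u ≠ 0 := by simpa using huv.ne_zero 0
  have hv : v ≠ 0 := by simpa using huv.ne_zero 1
  have hmn1 : 1 ≤ n := by omega
  by_cases hx : x = 0
  · subst hx
    rw [lemH0 hP1 u, one_mul, Hfun_eq]
    refine Finset.sum_congr rfl fun ω _ => ?_
    rw [ind_pos (show ((0 : Fin (n - m) → F) ᵥ* A ω) ⬝ᵥ u = 0 by
      simp [Matrix.zero_vecMul]), one_mul]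
  by_cases hy : y = 0
  · subst hy
    rw [lemH0 hP1 v, mul_one, Hfun_eq]
    refine Finset.sum_congr rfl fun ω _ => ?_
    rw [ind_pos (show ((0 : Fin (n - m) → F) ᵥ* A ω) ⬝ᵥ v = 0 by
      simp [Matrix.zero_vecMul]), mul_one]
  rw [lemHx h2 hmn hP1 h2good hu hx, lemHx h2 hmn hP1 h2good hv hy]
  by_cases hdep : ∃ a : F, y = a • x
  · obtain ⟨a, rfl⟩ := hdep
    have ha : a ≠ 0 := fun h => hy (by rw [h, zero_smul])
    have hc : ∀ ω, (((a • x) ᵥ* A ω) ⬝ᵥ v = 0) ↔ ((x ᵥ* A ω) ⬝ᵥ v = 0) := by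
      intro ω
      rw [Matrix.smul_vecMul, smul_dotProduct, smul_eq_mul, mul_eq_zero]
      exact or_iff_right ha
    have hstep : ∑ ω, P ω * (ind ((x ᵥ* A ω) ⬝ᵥ u = 0) * ind (((a • x) ᵥ* A ω) ⬝ᵥ v = 0))
        = ∑ ω, P ω * ind ((x ᵥ* A ω) ⬝ᵥ u = 0 ∧ (x ᵥ* A ω) ⬝ᵥ v = 0) := by
      refine Finset.sum_congr rfl fun ω _ => ?_
      rw [ind_congr (hc ω), ind_mul_ind]
    rw [hstep]
    have hfib := fiber_sum P (fun ω => x ᵥ* A ω) (fun c => c ⬝ᵥ u = 0 ∧ c ⬝ᵥ v = 0)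
        (1 / (Fintype.card F : ℚ) ^ n) ?_
    · have hL : ∑ ω, P ω * ind ((x ᵥ* A ω) ⬝ᵥ u = 0 ∧ (x ᵥ* A ω) ⬝ᵥ v = 0)
          = ∑ ω ∈ univ.filter
              (fun ω => (x ᵥ* A ω) ⬝ᵥ u = 0 ∧ (x ᵥ* A ω) ⬝ᵥ v = 0), P ω :=
        (sum_filter_ind P).symm
      rw [hL]
      refine ((filter_sum_congr P (fun ω => Iff.rfl)).trans (hfib.trans ?_))
      have hcard : ∀ (ip : DecidablePred (fun c : Fin n → F => c ⬝ᵥ u = 0 ∧ c ⬝ᵥ v = 0)),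
          (@Finset.filter _ _ ip univ).card = Fintype.card F ^ (n - 2) := by
        intro ip
        refine ((card_filter_inst _ ip _).trans (aux_count_two huv)).trans ?_
        rw [Fintype.card_fin]
      rw [hcard]
      have h2n : 2 ≤ n := by omega
      have hnn : n - 2 + 2 = n := by omega
      push_cast
      rw [← hnn, pow_add]
      field_simp
      ring
      simp
    · intro c _
      exact (filter_sum_congr P (fun ω => Iff.rfl)).trans (lemA h2 hP1 h2good hx c)
  · push_neg at hdep
    have hxy : LinearIndependent F ![x, y] :=
      (LinearIndependent.pair_iff' hx).mpr (fun a h => hdep a h.symm)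
    have hstep : ∑ ω, P ω * (ind ((x ᵥ* A ω) ⬝ᵥ u = 0) * ind ((y ᵥ* A ω) ⬝ᵥ v = 0))
        = ∑ ω ∈ univ.filter (fun ω =>
            ((x ᵥ* A ω) ⬝ᵥ u = 0 ∧ (y ᵥ* A ω) ⬝ᵥ v = 0)), P ω := by
      rw [sum_filter_ind P]
      refine Finset.sum_congr rfl fun ω _ => ?_
      rw [ind_mul_ind]
    rw [hstep]
    have hfib := fiber_sum P (fun ω => (x ᵥ* A ω, y ᵥ* A ω))
        (fun p => p.1 ⬝ᵥ u = 0 ∧ p.2 ⬝ᵥ v = 0)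
        (1 / (Fintype.card F : ℚ) ^ (2 * n)) ?_
    · refine ((filter_sum_congr P (fun ω => Iff.rfl)).trans (hfib.trans ?_))
      have hcard : ∀ (ip : DecidablePred (fun p : (Fin n → F) × (Fin n → F) =>
            p.1 ⬝ᵥ u = 0 ∧ p.2 ⬝ᵥ v = 0)),
          (@Finset.filter _ _ ip univ).card
            = Fintype.card F ^ (n - 1) * Fintype.card F ^ (n - 1) := by
        intro ip
        have hset : (@Finset.filter _ _ ip univ)
            = (univ.filter (fun c : Fin n → F => c ⬝ᵥ u = 0))
                ×ˢ (univ.filter (fun c : Fin n → F => c ⬝ᵥ v = 0)) := by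
          ext p
          simp only [mem_filter, mem_univ, true_and, Finset.mem_product]
        rw [hset, Finset.card_product, aux_count_one hu, aux_count_one hv, Fintype.card_fin]
      rw [hcard]
      have hnn : n - 1 + 1 = n := by omega
      push_cast
      rw [two_mul, pow_add]
      rw [show ((Fintype.card F : ℚ)) ^ n = (Fintype.card F : ℚ) ^ (n-1) * (Fintype.card F : ℚ) by
        rw [← pow_succ, hnn]]
      field_simp
    · rintro ⟨b1, b2⟩ _
      refine (filter_sum_congr P (fun ω => ?_)).trans (lemB h2good hxy b1 b2)
      constructor
      · intro h
        exact ⟨congrArg Prod.fst h, congrArg Prod.snd h⟩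
      · rintro ⟨ha, hb⟩
        exact Prod.ext ha hb

lemma lemD (h2 : 2 ≤ n - m) (hmn : m < n) (hP1 : (∑ ω, P ω) = 1)
    (h2good : ∀ U : Matrix (Fin 2) (Fin (n - m)) F, U.rank = 2 →
      ∀ B : Matrix (Fin 2) (Fin n) F,
        (∑ ω ∈ Finset.univ.filter (fun ω => U * A ω = B), P ω)
          = 1 / (Fintype.card F : ℚ) ^ (2 * n))
    {u v : Fin n → F} (huv : LinearIndependent F ![u, v]) :
    ∑ ω, P ω * ind (A ω *ᵥ u = 0 ∧ A ω *ᵥ v = 0)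
      = (1 / (Fintype.card F : ℚ) ^ (n - m)) ^ 2 := by
  have hq : 2 ≤ Fintype.card F := Fintype.one_lt_card
  have hq0 : (Fintype.card F : ℚ) ≠ 0 := by positivity
  have hqQ : (2:ℚ) ≤ (Fintype.card F : ℚ) := by exact_mod_cast hq
  have hq1 : (Fintype.card F : ℚ) - 1 ≠ 0 := by linarith
  have hKne : ((Fintype.card F : ℚ)) ^ (n - m) ≠ 0 := pow_ne_zero _ hq0
  have hu : u ≠ 0 := by simpa using huv.ne_zero 0
  have hv : v ≠ 0 := by simpa using huv.ne_zero 1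
  set Q : ℚ := (Fintype.card F : ℚ) with hQ
  set K : ℚ := Q ^ (n - m) with hK
  have key : (K * (Q - 1)) ^ 2 * (∑ ω, P ω * ind (A ω *ᵥ u = 0 ∧ A ω *ᵥ v = 0))
      = (Q - 1) ^ 2 := by
    calc (K * (Q - 1)) ^ 2 * (∑ ω, P ω * ind (A ω *ᵥ u = 0 ∧ A ω *ᵥ v = 0))
        = ∑ ω, P ω * ((K * (Q - 1) * ind (A ω *ᵥ u = 0))
            * (K * (Q - 1) * ind (A ω *ᵥ v = 0))) := by
          rw [Finset.mul_sum]
          refine Finset.sum_congr rfl fun ω _ => ?_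
          rw [show K * (Q - 1) * ind (A ω *ᵥ u = 0) * (K * (Q - 1) * ind (A ω *ᵥ v = 0))
              = (K * (Q - 1))^2 * (ind (A ω *ᵥ u = 0) * ind (A ω *ᵥ v = 0)) by ring,
            ind_mul_ind]
          ring
      _ = ∑ ω, P ω * ((∑ x : Fin (n - m) → F, (Q * ind ((x ᵥ* A ω) ⬝ᵥ u = 0) - 1))
            * (∑ y : Fin (n - m) → F, (Q * ind ((y ᵥ* A ω) ⬝ᵥ v = 0) - 1))) := by
          refine Finset.sum_congr rfl fun ω _ => ?_
          rw [← hident P A u ω, ← hident P A v ω]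
      _ = ∑ ω, ∑ x : Fin (n - m) → F, ∑ y : Fin (n - m) → F,
            P ω * ((Q * ind ((x ᵥ* A ω) ⬝ᵥ u = 0) - 1)
              * (Q * ind ((y ᵥ* A ω) ⬝ᵥ v = 0) - 1)) := by
          refine Finset.sum_congr rfl fun ω _ => ?_
          rw [Finset.sum_mul_sum, Finset.mul_sum]
          refine Finset.sum_congr rfl fun x _ => ?_
          rw [Finset.mul_sum]
      _ = ∑ x : Fin (n - m) → F, ∑ y : Fin (n - m) → F, ∑ ω,
            P ω * ((Q * ind ((x ᵥ* A ω) ⬝ᵥ u = 0) - 1)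
              * (Q * ind ((y ᵥ* A ω) ⬝ᵥ v = 0) - 1)) := by
          rw [Finset.sum_comm]
          exact Finset.sum_congr rfl fun x _ => Finset.sum_comm
      _ = ∑ x : Fin (n - m) → F, ∑ y : Fin (n - m) → F,
            ((Q * Hfun P A u x - 1) * (Q * Hfun P A v y - 1)) := by
          refine Finset.sum_congr rfl fun x _ => Finset.sum_congr rfl fun y _ => ?_
          have hexp : ∀ ω, P ω * ((Q * ind ((x ᵥ* A ω) ⬝ᵥ u = 0) - 1)
                * (Q * ind ((y ᵥ* A ω) ⬝ᵥ v = 0) - 1))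
              = Q^2 * (P ω * (ind ((x ᵥ* A ω) ⬝ᵥ u = 0) * ind ((y ᵥ* A ω) ⬝ᵥ v = 0)))
                - Q * (P ω * ind ((x ᵥ* A ω) ⬝ᵥ u = 0))
                - Q * (P ω * ind ((y ᵥ* A ω) ⬝ᵥ v = 0)) + P ω := fun ω => by ring
          rw [Finset.sum_congr rfl (fun ω _ => hexp ω), Finset.sum_add_distrib,
            Finset.sum_sub_distrib, Finset.sum_sub_distrib, ← Finset.mul_sum,
            ← Finset.mul_sum, ← Finset.mul_sum, hP1,
            lemT h2 hmn hP1 h2good huv x y, ← Hfun_eq, ← Hfun_eq]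
          ring
      _ = (∑ x : Fin (n - m) → F, (Q * Hfun P A u x - 1))
            * (∑ y : Fin (n - m) → F, (Q * Hfun P A v y - 1)) :=
          (Finset.sum_mul_sum _ _ _ _).symm
      _ = (Q - 1) ^ 2 := by
          rw [lemHsum h2 hmn hP1 h2good hu, lemHsum h2 hmn hP1 h2good hv, sq]
  have hne : (K * (Q - 1)) ^ 2 ≠ 0 := pow_ne_zero _ (mul_ne_zero hKne hq1)
  apply mul_left_cancel₀ hne
  rw [key]
  field_simp

end Prob

end AuxLemmas

/-- Mean and variance of the size `|Ξ_n(D)|` of the image of the random code `D`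
(parity-check matrix a 2-good random `(n-m) × n` matrix) under an independent uniform
random monomial map. -/
theorem stmt_19 {F : Type} [Field F] [Fintype F] {m n : ℕ}
    (hm : 0 < m) (hmn : m < n) (h2 : 2 ≤ n - m)
    {Ω : Type} [Fintype Ω] (P : Ω → ℚ) (hP0 : ∀ ω, 0 ≤ P ω) (hP1 : (∑ ω, P ω) = 1)
    (A : Ω → Matrix (Fin (n - m)) (Fin n) F)
    (h2good : ∀ U : Matrix (Fin 2) (Fin (n - m)) F, U.rank = 2 →
      ∀ B : Matrix (Fin 2) (Fin n) F,
        (∑ ω ∈ Finset.univ.filter (fun ω => U * A ω = B), P ω)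
          = 1 / (Fintype.card F : ℚ) ^ (2 * n)) :
    (∑ ω, ∑ p : (Fin n → Fˣ) × Equiv.Perm (Fin n),
        P ω / (Fintype.card ((Fin n → Fˣ) × Equiv.Perm (Fin n)) : ℚ)
          * (imgCard (A ω) p : ℚ))
      = (Fintype.card F : ℚ) ^ m + 1 - (Fintype.card F : ℚ) ^ ((m : ℤ) - (n : ℤ))
    ∧ (∑ ω, ∑ p : (Fin n → Fˣ) × Equiv.Perm (Fin n),
        P ω / (Fintype.card ((Fin n → Fˣ) × Equiv.Perm (Fin n)) : ℚ)
          * ((imgCard (A ω) p : ℚ)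
              - ((Fintype.card F : ℚ) ^ m + 1
                  - (Fintype.card F : ℚ) ^ ((m : ℤ) - (n : ℤ)))) ^ 2)
      = (Fintype.card F : ℚ) ^ ((m : ℤ) - (n : ℤ)) * ((Fintype.card F : ℚ) - 1)
          * ((Fintype.card F : ℚ) ^ n - 1)
          * (1 - (Fintype.card F : ℚ) ^ ((m : ℤ) - (n : ℤ)))
    ∧ (Fintype.card F : ℚ) ^ ((m : ℤ) - (n : ℤ)) * ((Fintype.card F : ℚ) - 1)
          * ((Fintype.card F : ℚ) ^ n - 1)
          * (1 - (Fintype.card F : ℚ) ^ ((m : ℤ) - (n : ℤ)))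
        < (Fintype.card F : ℚ) ^ (m + 1) := by
  have hq : 2 ≤ Fintype.card F := Fintype.one_lt_card
  have hq0 : (Fintype.card F : ℚ) ≠ 0 := by positivity
  have hqQ : (2:ℚ) ≤ (Fintype.card F : ℚ) := by exact_mod_cast hq
  have hKne : ((Fintype.card F : ℚ)) ^ (n - m) ≠ 0 := pow_ne_zero _ hq0
  have hb : (Fintype.card F : ℚ) ^ n
      = (Fintype.card F : ℚ) ^ m * (Fintype.card F : ℚ) ^ (n - m) := by
    rw [← pow_add]
    congr 1
    omega
  have hzpow : (Fintype.card F : ℚ) ^ ((m : ℤ) - (n : ℤ))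
      = 1 / (Fintype.card F : ℚ) ^ (n - m) := by
    have h1 : (m : ℤ) - (n : ℤ) = -((n - m : ℕ) : ℤ) := by omega
    rw [h1, _root_.zpow_neg, zpow_natCast, one_div]
  -- reduction over the monomial maps
  have himg : ∀ ω (p : (Fin n → Fˣ) × Equiv.Perm (Fin n)),
      (imgCard (A ω) p : ℚ) = ((pchkCode (A ω)).card : ℚ) := by
    intro ω p
    congr 1
    apply Finset.card_image_of_injective
    intro a b hab
    funext i
    have h2 := congrFun hab (p.2 i)
    simp only [monoMap, Equiv.symm_apply_apply] at h2
    exact mul_left_cancel₀ (Units.ne_zero (p.1 (p.2 i))) h2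
  have hN0 : (Fintype.card ((Fin n → Fˣ) × Equiv.Perm (Fin n)) : ℚ) ≠ 0 := by
    have : 0 < Fintype.card ((Fin n → Fˣ) × Equiv.Perm (Fin n)) := Fintype.card_pos
    positivity
  have hred1 : ∀ ω, (∑ p : (Fin n → Fˣ) × Equiv.Perm (Fin n),
      P ω / (Fintype.card ((Fin n → Fˣ) × Equiv.Perm (Fin n)) : ℚ) * (imgCard (A ω) p : ℚ))
      = P ω * ((pchkCode (A ω)).card : ℚ) := by
    intro ω
    rw [Finset.sum_congr rfl (fun p _ => by rw [himg ω p]), Finset.sum_const,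
      card_univ, nsmul_eq_mul]
    field_simp
  have hred2 : ∀ ω (c : ℚ), (∑ p : (Fin n → Fˣ) × Equiv.Perm (Fin n),
      P ω / (Fintype.card ((Fin n → Fˣ) × Equiv.Perm (Fin n)) : ℚ)
        * ((imgCard (A ω) p : ℚ) - c) ^ 2)
      = P ω * (((pchkCode (A ω)).card : ℚ) - c) ^ 2 := by
    intro ω c
    rw [Finset.sum_congr rfl (fun p _ => by rw [himg ω p]), Finset.sum_const,
      card_univ, nsmul_eq_mul]
    field_simp
  -- the code size as a sum of indicators
  have hXsum : ∀ ω, ((pchkCode (A ω)).card : ℚ)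
      = ∑ v : Fin n → F, ind ((A ω).mulVec v = 0) := by
    intro ω
    rw [pchkCode]
    exact card_filter_ind
  have hG1zero : ∑ ω, P ω * ind ((A ω).mulVec (0 : Fin n → F) = 0) = 1 := by
    rw [← hP1]
    exact Finset.sum_congr rfl fun ω _ => by rw [ind_pos (Matrix.mulVec_zero _), mul_one]
  have hG1 : ∀ v : Fin n → F, v ≠ 0 → ∑ ω, P ω * ind ((A ω).mulVec v = 0)
      = 1 / (Fintype.card F : ℚ) ^ (n - m) :=
    fun v hv => lemC h2 hmn hP1 h2good hv
  have hcardV : (Finset.univ : Finset (Fin n → F)).card = Fintype.card F ^ n := by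
    rw [card_univ, Fintype.card_fun, Fintype.card_fin]
  have hone_le : 1 ≤ Fintype.card F ^ n := Nat.one_le_pow _ _ (by omega)
  -- first moment
  have hsumG1 : ∑ v : Fin n → F, ∑ ω, P ω * ind ((A ω).mulVec v = 0)
      = 1 + ((Fintype.card F : ℚ) ^ n - 1) * (1 / (Fintype.card F : ℚ) ^ (n - m)) := by
    rw [← Finset.add_sum_erase _ _ (mem_univ (0 : Fin n → F)), hG1zero,
      Finset.sum_congr rfl (fun v hv => hG1 v (Finset.ne_of_mem_erase hv)),
      Finset.sum_const, nsmul_eq_mul, Finset.card_erase_of_mem (mem_univ _), hcardV,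
      Nat.cast_sub hone_le]
    push_cast
    ring
  have hE1 : ∑ ω, P ω * ((pchkCode (A ω)).card : ℚ)
      = 1 + ((Fintype.card F : ℚ) ^ n - 1) * (1 / (Fintype.card F : ℚ) ^ (n - m)) := by
    rw [Finset.sum_congr rfl (fun ω _ => by rw [hXsum ω, Finset.mul_sum]),
      Finset.sum_comm, hsumG1]
  -- second moment
  have hrow : ∀ v : Fin n → F, v ≠ 0 →
      ∑ w : Fin n → F, ∑ ω, P ω * ind ((A ω).mulVec v = 0 ∧ (A ω).mulVec w = 0)
        = (Fintype.card F : ℚ) ^ n * (1 / (Fintype.card F : ℚ) ^ (n - m)) ^ 2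
          + (Fintype.card F : ℚ) * (1 / (Fintype.card F : ℚ) ^ (n - m)
              - (1 / (Fintype.card F : ℚ) ^ (n - m)) ^ 2) := by
    intro v hv
    have hval : ∀ w : Fin n → F, ∑ ω, P ω * ind ((A ω).mulVec v = 0 ∧ (A ω).mulVec w = 0)
        = (1 / (Fintype.card F : ℚ) ^ (n - m)) ^ 2
          + ind (∃ a : F, w = a • v) * (1 / (Fintype.card F : ℚ) ^ (n - m)
              - (1 / (Fintype.card F : ℚ) ^ (n - m)) ^ 2) := by
      intro w
      by_cases hdep : ∃ a : F, w = a • v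
      · rw [ind_pos hdep]
        obtain ⟨a, rfl⟩ := hdep
        have hcong : ∀ ω, ((A ω).mulVec v = 0 ∧ (A ω).mulVec (a • v) = 0)
            ↔ (A ω).mulVec v = 0 := by
          intro ω
          constructor
          · exact fun h => h.1
          · intro h
            exact ⟨h, by rw [Matrix.mulVec_smul, h, smul_zero]⟩
        rw [Finset.sum_congr rfl (fun ω _ => by rw [ind_congr (hcong ω)]), hG1 v hv]
        ring
      · rw [ind_neg hdep, zero_mul, add_zero]
        push_neg at hdep
        have hindep : LinearIndependent F ![v, w] :=
          (LinearIndependent.pair_iff' hv).mpr (fun a h => hdep a h.symm)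
        exact lemD h2 hmn hP1 h2good hindep
    rw [Finset.sum_congr rfl (fun w _ => hval w), Finset.sum_add_distrib,
      Finset.sum_const, ← Finset.sum_mul, hcardV, nsmul_eq_mul]
    have hcnt : ∑ w : Fin n → F, ind (∃ a : F, w = a • v) = (Fintype.card F : ℚ) := by
      rw [← card_filter_ind]
      have himgv : Finset.univ.filter (fun w : Fin n → F => ∃ a : F, w = a • v)
          = Finset.image (fun a : F => a • v) Finset.univ := by
        ext w
        simp only [mem_filter, mem_univ, true_and, Finset.mem_image]
        constructor
        · rintro ⟨a, rfl⟩; exact ⟨a, rfl⟩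
        · rintro ⟨a, rfl⟩; exact ⟨a, rfl⟩
      rw [himgv, Finset.card_image_of_injective _ (smul_left_injective F hv), card_univ]
    rw [hcnt]
    push_cast
    ring
  have hE2 : ∑ ω, P ω * ((pchkCode (A ω)).card : ℚ) ^ 2
      = (1 + ((Fintype.card F : ℚ) ^ n - 1) * (1 / (Fintype.card F : ℚ) ^ (n - m)))
        + ((Fintype.card F : ℚ) ^ n - 1)
          * ((Fintype.card F : ℚ) ^ n * (1 / (Fintype.card F : ℚ) ^ (n - m)) ^ 2
            + (Fintype.card F : ℚ) * (1 / (Fintype.card F : ℚ) ^ (n - m)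
                - (1 / (Fintype.card F : ℚ) ^ (n - m)) ^ 2)) := by
    have hsq : ∀ ω, P ω * ((pchkCode (A ω)).card : ℚ) ^ 2
        = ∑ v : Fin n → F, ∑ w : Fin n → F,
            P ω * ind ((A ω).mulVec v = 0 ∧ (A ω).mulVec w = 0) := by
      intro ω
      rw [hXsum ω, sq, Finset.sum_mul_sum, Finset.mul_sum]
      refine Finset.sum_congr rfl fun v _ => ?_
      rw [Finset.mul_sum]
      exact Finset.sum_congr rfl fun w _ => by rw [ind_mul_ind]
    rw [Finset.sum_congr rfl (fun ω _ => hsq ω), Finset.sum_comm]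
    have hswap : ∀ v : Fin n → F, (∑ ω, ∑ w : Fin n → F,
        P ω * ind ((A ω).mulVec v = 0 ∧ (A ω).mulVec w = 0))
        = ∑ w : Fin n → F, ∑ ω, P ω * ind ((A ω).mulVec v = 0 ∧ (A ω).mulVec w = 0) :=
      fun v => Finset.sum_comm
    rw [Finset.sum_congr rfl (fun v _ => hswap v),
      ← Finset.add_sum_erase _ _ (mem_univ (0 : Fin n → F))]
    have hzero_row : ∑ w : Fin n → F, ∑ ω,
        P ω * ind ((A ω).mulVec (0 : Fin n → F) = 0 ∧ (A ω).mulVec w = 0)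
        = 1 + ((Fintype.card F : ℚ) ^ n - 1) * (1 / (Fintype.card F : ℚ) ^ (n - m)) := by
      rw [← hsumG1]
      refine Finset.sum_congr rfl fun w _ => Finset.sum_congr rfl fun ω _ => ?_
      rw [ind_congr (by simp [Matrix.mulVec_zero] :
        ((A ω).mulVec (0 : Fin n → F) = 0 ∧ (A ω).mulVec w = 0) ↔ (A ω).mulVec w = 0)]
    rw [hzero_row,
      Finset.sum_congr rfl (fun v hv => hrow v (Finset.ne_of_mem_erase hv)),
      Finset.sum_const, nsmul_eq_mul, Finset.card_erase_of_mem (mem_univ _), hcardV,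
      Nat.cast_sub hone_le]
    push_cast
    ring
  -- assemble
  refine ⟨?_, ?_, ?_⟩
  · rw [Finset.sum_congr rfl (fun ω _ => hred1 ω), hE1, hzpow, hb]
    field_simp
    ring
  · rw [Finset.sum_congr rfl (fun ω _ => hred2 ω _)]
    have hvar : ∀ (c : ℚ), ∑ ω, P ω * (((pchkCode (A ω)).card : ℚ) - c) ^ 2
        = (∑ ω, P ω * ((pchkCode (A ω)).card : ℚ) ^ 2)
          - 2 * c * (∑ ω, P ω * ((pchkCode (A ω)).card : ℚ)) + c ^ 2 := by
      intro c
      rw [Finset.sum_congr rfl (fun ω _ => show P ω * (((pchkCode (A ω)).card : ℚ) - c) ^ 2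
          = P ω * ((pchkCode (A ω)).card : ℚ) ^ 2
            - 2 * c * (P ω * ((pchkCode (A ω)).card : ℚ)) + c ^ 2 * P ω by ring),
        Finset.sum_add_distrib, Finset.sum_sub_distrib, ← Finset.mul_sum, ← Finset.mul_sum,
        hP1, mul_one]
    rw [hvar, hE1, hE2, hzpow, hb]
    field_simp
    ring
  · clear himg hN0 hred1 hred2 hXsum hG1zero hG1 hsumG1 hE1 hrow hE2 h2good hP0 hP1 P A
    rw [hzpow, hb, pow_succ]
    have hQ1 : (1:ℚ) < (Fintype.card F : ℚ) := by linarith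
    have hKpos : (0:ℚ) < (Fintype.card F : ℚ) ^ (n - m) := by positivity
    have hK1 : (1:ℚ) ≤ (Fintype.card F : ℚ) ^ (n - m) := one_le_pow₀ (by linarith)
    have ha1 : (1:ℚ) ≤ (Fintype.card F : ℚ) ^ m := one_le_pow₀ (by linarith)
    have hapos : (0:ℚ) < (Fintype.card F : ℚ) ^ m := by positivity
    set Q : ℚ := (Fintype.card F : ℚ)
    set K : ℚ := Q ^ (n - m)
    set a : ℚ := Q ^ m
    have htrans : (1/K) * (Q - 1) * (a * K - 1) * (1 - 1/K)
        = (Q - 1) * (a * K - 1) * (K - 1) / K ^ 2 := by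
      field_simp
    rw [htrans, div_lt_iff₀ (by positivity)]
    have haK : (1:ℚ) ≤ a * K := by nlinarith
    have dQ : (0:ℚ) ≤ Q - 1 := by linarith
    have step1 : (a*K-1)*(K-1) ≤ a*K*K := by nlinarith
    have step2 : (Q-1)*((a*K-1)*(K-1)) ≤ (Q-1)*(a*K*K) :=
      mul_le_mul_of_nonneg_left step1 dQ
    have hpos : (0:ℚ) < a*K*K := by positivity
    have step3 : (Q-1)*(a*K*K) < Q*(a*K*K) := by nlinarith
    calc (Q - 1) * (a * K - 1) * (K - 1)
        = (Q-1)*((a*K-1)*(K-1)) := by ring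
      _ ≤ (Q-1)*(a*K*K) := step2
      _ < Q*(a*K*K) := step3
      _ = a * Q * K^2 := by ring
end
end
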